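/- arXiv:1208.3058 — 12 statements merged into one kernel-verified Lean document; each statement's English description precedes it below -/
import Mathlib

section
/- Let x ∈ ℓ¹ be a sequence not eventually zero. Then E(x) is a nonempty perfect compact subset of ℝ. -/
open Set Filter Topology

/-- The achievement set (set of all subsums) of a series `∑ x n`. -/
noncomputable def achSet (x : ℕ → ℝ) : Set ℝ :=
  {a : ℝ | ∃ A : Set ℕ, HasSum (fun n : A => x n) a}

/-- The tail sum `∑_{i > n} |x i|`. -/
noncomputable def tailSum (x : ℕ → ℝ) (n : ℕ) : ℝ := ∑' i : ℕ, |x (n + 1 + i)|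

/-- `S` is a finite union of closed intervals. -/
def IsFinUnionClosedIntervals (S : Set ℝ) : Prop :=
  ∃ s : Finset (ℝ × ℝ), S = ⋃ p ∈ s, Set.Icc p.1 p.2

/-- `S` is homeomorphic to the Cantor set (the Cantor space `ℕ → Bool`). -/
def CantorLike (S : Set ℝ) : Prop := Nonempty (S ≃ₜ (ℕ → Bool))

lemma mem_achSet_iff {x : ℕ → ℝ} {a : ℝ} :
    a ∈ achSet x ↔ ∃ A : Set ℕ, HasSum (A.indicator x) a := by
  constructor
  · rintro ⟨A, hA⟩
    exact ⟨A, hasSum_subtype_iff_indicator.mp hA⟩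
  · rintro ⟨A, hA⟩
    exact ⟨A, hasSum_subtype_iff_indicator.mpr hA⟩

lemma single_indicator_hasSum (x : ℕ → ℝ) (n : ℕ) :
    HasSum (({n} : Set ℕ).indicator x) (x n) := by
  classical
  have h : ({n} : Set ℕ).indicator x = fun m => if m = n then x n else 0 := by
    funext m
    by_cases h : m = n <;> simp [Set.indicator_apply, h]
  rw [h]
  exact hasSum_ite_eq n (x n)

theorem achSet_perfect_compact (x : ℕ → ℝ) (hx : Summable fun n => |x n|)
    (hnz : ∀ N : ℕ, ∃ n ≥ N, x n ≠ 0) :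
    (achSet x).Nonempty ∧ Perfect (achSet x) ∧ IsCompact (achSet x) := by
  classical
  have hx' : Summable x := hx.of_abs
  -- the continuous parametrization by Cantor space
  set f : (ℕ → Bool) → ℝ := fun ε => ∑' n, if ε n then x n else 0 with hfdef
  have hind : ∀ ε : ℕ → Bool, (fun n => if ε n then x n else 0)
      = ({m | ε m = true} : Set ℕ).indicator x := by
    intro ε; funext n; by_cases h : ε n <;> simp [Set.indicator_apply, h]
  have hsumm : ∀ ε : ℕ → Bool, Summable (fun n => if ε n then x n else 0) := by
    intro ε; rw [hind ε]; exact hx'.indicator _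
  have hrange : achSet x = Set.range f := by
    ext a
    rw [mem_achSet_iff]
    constructor
    · rintro ⟨A, hA⟩
      refine ⟨fun n => decide (n ∈ A), ?_⟩
      have : ({m | (fun n => decide (n ∈ A)) m = true} : Set ℕ) = A := by
        ext m; simp
      rw [hfdef]
      simp only
      rw [hind, this, hA.tsum_eq]
    · rintro ⟨ε, rfl⟩
      refine ⟨{m | ε m = true}, ?_⟩
      show HasSum _ (∑' n, if ε n = true then x n else 0)
      rw [hind ε]
      exact (hx'.indicator _).hasSum
  have hcont : Continuous f := by
    apply continuous_tsum (u := fun n => |x n|) ?_ hx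
    · intro n ε
      have : ‖if ε n then x n else 0‖ ≤ |x n| := by
        by_cases h : ε n <;> simp [h, abs_nonneg]
      exact this
    · intro n
      exact (continuous_of_discreteTopology
        (f := fun b : Bool => if b then x n else 0)).comp (continuous_apply n)
  have hcomp : IsCompact (achSet x) := by
    rw [hrange]; exact isCompact_range hcont
  refine ⟨?_, ⟨hcomp.isClosed, ?_⟩, hcomp⟩
  · rw [hrange]; exact Set.range_nonempty f
  · -- accumulation points
    intro a ha
    rw [accPt_iff_nhds]
    intro U hU
    obtain ⟨δ, hδ, hball⟩ := Metric.mem_nhds_iff.mp hU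
    -- find n with x n ≠ 0 and |x n| < δ
    have htend : Tendsto x atTop (𝓝 0) := hx'.tendsto_atTop_zero
    have : ∀ᶠ n in atTop, |x n| < δ := by
      have := htend.eventually (Metric.ball_mem_nhds 0 hδ)
      simpa [Real.dist_eq] using this
    obtain ⟨N, hN⟩ := eventually_atTop.mp this
    obtain ⟨n, hnN, hn0⟩ := hnz N
    have hxs : |x n| < δ := hN n hnN
    obtain ⟨A, hA⟩ := mem_achSet_iff.mp ha
    have h1 := single_indicator_hasSum x n
    by_cases hmem : n ∈ A
    · -- remove n : sum is a - x n
      refine ⟨a - x n, ⟨?_, ?_⟩, ?_⟩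
      · apply hball
        simp only [Metric.mem_ball, Real.dist_eq]
        simpa using hxs
      · rw [mem_achSet_iff]
        refine ⟨A \ {n}, ?_⟩
        have heq : (A \ {n} : Set ℕ).indicator x
            = A.indicator x - ({n} : Set ℕ).indicator x := by
          funext m
          by_cases h : m = n
          · subst h; simp [Set.indicator_apply, hmem]
          · simp [Set.indicator_apply, h]
        rw [heq]
        exact hA.sub h1
      · intro h
        apply hn0
        have := sub_eq_self.mp h
        linarith [this]
    · -- add n : sum is a + x n
      refine ⟨a + x n, ⟨?_, ?_⟩, ?_⟩
      · apply hball
        simp only [Metric.mem_ball, Real.dist_eq]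
        simpa using hxs
      · rw [mem_achSet_iff]
        refine ⟨insert n A, ?_⟩
        have heq : (insert n A : Set ℕ).indicator x
            = A.indicator x + ({n} : Set ℕ).indicator x := by
          funext m
          by_cases h : m = n
          · subst h; simp [Set.indicator_apply, hmem]
          · simp [Set.indicator_apply, h, Set.mem_insert_iff]
        rw [heq]
        exact hA.add h1
      · intro h
        apply hn0
        linarith [h]
end

section
/- Let x ∈ ℓ¹ satisfy |x(n)| > ∑_{i>n} |x(i)| for all sufficiently large n, and suppose x is not eventually zero. Then E(x) is homeomorphic to the Cantor set. -/
open Set Filter Topology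

namespace CantorAch

/-- A bundled "good" subset of `ℝ`: nonempty, compact, without isolated points,
with empty interior. -/
structure GS where
  K : Set ℝ
  comp : IsCompact K
  ne : K.Nonempty
  perf : ∀ a ∈ K, ∀ δ : ℝ, 0 < δ → ∃ b ∈ K, b ≠ a ∧ |b - a| < δ
  intr : interior K = ∅

lemma GS.bddAbove (S : GS) : BddAbove S.K := S.comp.bddAbove
lemma GS.bddBelow (S : GS) : BddBelow S.K := S.comp.bddBelow

lemma GS.le_sSup (S : GS) {p : ℝ} (hp : p ∈ S.K) : p ≤ sSup S.K := le_csSup S.bddAbove hp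
lemma GS.sInf_le (S : GS) {p : ℝ} (hp : p ∈ S.K) : sInf S.K ≤ p := csInf_le S.bddBelow hp

lemma GS.diam_bound (S : GS) {p q : ℝ} (hp : p ∈ S.K) (hq : q ∈ S.K) :
    |p - q| ≤ sSup S.K - sInf S.K := by
  rw [abs_sub_le_iff]
  constructor <;> nlinarith [S.le_sSup hp, S.le_sSup hq, S.sInf_le hp, S.sInf_le hq]

lemma GS.sInf_lt_sSup (S : GS) : sInf S.K < sSup S.K := by
  obtain ⟨a, ha⟩ := S.ne
  obtain ⟨b, hb, hba, -⟩ := S.perf a ha 1 one_pos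
  rcases lt_or_gt_of_ne (show b ≠ a from hba) with h | h
  · exact lt_of_le_of_lt (S.sInf_le hb) (lt_of_lt_of_le h (S.le_sSup ha))
  · exact lt_of_le_of_lt (S.sInf_le ha) (lt_of_lt_of_le h (S.le_sSup hb))

/-- A piece `S.K ∩ I` with `I` a closed interval-like set is again good, provided it is
nonempty and "side-stable" for the perfectness argument. -/
lemma exists_split (S : GS) :
    ∃ P : GS × GS,
      P.1.K ⊆ S.K ∧ P.2.K ⊆ S.K ∧ Disjoint P.1.K P.2.K ∧ P.1.K ∪ P.2.K = S.K ∧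
      ∀ D : ℝ, (∀ p ∈ S.K, ∀ q ∈ S.K, |p - q| ≤ D) →
        ((∀ p ∈ P.1.K, ∀ q ∈ P.1.K, |p - q| ≤ 2/3 * D) ∧
         (∀ p ∈ P.2.K, ∀ q ∈ P.2.K, |p - q| ≤ 2/3 * D)) := by
  set α := sInf S.K with hα
  set β := sSup S.K with hβ
  have hαβ : α < β := S.sInf_lt_sSup
  have hαK : α ∈ S.K := S.comp.sInf_mem S.ne
  have hβK : β ∈ S.K := S.comp.sSup_mem S.ne
  -- pick a point of the middle third not in K
  have hmid : ¬ (Ioo (α + (β - α)/3) (β - (β - α)/3) ⊆ S.K) := by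
    intro hsub
    have : Ioo (α + (β - α)/3) (β - (β - α)/3) ⊆ interior S.K :=
      interior_maximal hsub isOpen_Ioo
    rw [S.intr, subset_empty_iff, Ioo_eq_empty_iff] at this
    apply this; linarith
  obtain ⟨z, hz1, hz2⟩ := not_subset.1 hmid
  obtain ⟨hz1a, hz1b⟩ := hz1
  -- the two pieces
  have h0ne : (S.K ∩ Iic z).Nonempty := ⟨α, hαK, mem_Iic.2 (le_of_lt (show α < z by linarith))⟩
  have h1ne : (S.K ∩ Ici z).Nonempty := ⟨β, hβK, mem_Ici.2 (le_of_lt (show z < β by linarith))⟩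
  have h0comp : IsCompact (S.K ∩ Iic z) := S.comp.inter_right isClosed_Iic
  have h1comp : IsCompact (S.K ∩ Ici z) := S.comp.inter_right isClosed_Ici
  have h0perf : ∀ a ∈ S.K ∩ Iic z, ∀ δ : ℝ, 0 < δ →
      ∃ b ∈ S.K ∩ Iic z, b ≠ a ∧ |b - a| < δ := by
    rintro a ⟨haK, haz⟩ δ hδ
    have haz' : a < z := lt_of_le_of_ne haz (fun h => hz2 (h ▸ haK))
    obtain ⟨b, hbK, hba, hbd⟩ := S.perf a haK (min δ (z - a)) (lt_min hδ (by linarith))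
    have h2 := abs_lt.1 (lt_of_lt_of_le hbd (min_le_right _ _))
    exact ⟨b, ⟨hbK, mem_Iic.2 (by linarith [h2.2])⟩, hba,
      lt_of_lt_of_le hbd (min_le_left _ _)⟩
  have h1perf : ∀ a ∈ S.K ∩ Ici z, ∀ δ : ℝ, 0 < δ →
      ∃ b ∈ S.K ∩ Ici z, b ≠ a ∧ |b - a| < δ := by
    rintro a ⟨haK, haz⟩ δ hδ
    have haz' : z < a := lt_of_le_of_ne haz (fun h => hz2 (h ▸ haK))
    obtain ⟨b, hbK, hba, hbd⟩ := S.perf a haK (min δ (a - z)) (lt_min hδ (by linarith))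
    have h2 := abs_lt.1 (lt_of_lt_of_le hbd (min_le_right _ _))
    exact ⟨b, ⟨hbK, mem_Ici.2 (by linarith [h2.1])⟩, hba,
      lt_of_lt_of_le hbd (min_le_left _ _)⟩
  have h0int : interior (S.K ∩ Iic z) = ∅ :=
    subset_empty_iff.1 (S.intr ▸ interior_mono inter_subset_left)
  have h1int : interior (S.K ∩ Ici z) = ∅ :=
    subset_empty_iff.1 (S.intr ▸ interior_mono inter_subset_left)
  refine ⟨⟨⟨_, h0comp, h0ne, h0perf, h0int⟩, ⟨_, h1comp, h1ne, h1perf, h1int⟩⟩,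
    inter_subset_left, inter_subset_left, ?_, ?_, ?_⟩
  · rw [Set.disjoint_iff]
    rintro p ⟨⟨hpK, hp1⟩, ⟨-, hp2⟩⟩
    exact hz2 ((le_antisymm hp1 (mem_Ici.1 hp2)) ▸ hpK)
  · ext p
    simp only [mem_union, mem_inter_iff, mem_Iic, mem_Ici]
    constructor
    · rintro (⟨h, -⟩ | ⟨h, -⟩) <;> exact h
    · intro hp
      rcases le_total p z with h | h
      · exact Or.inl ⟨hp, h⟩
      · exact Or.inr ⟨hp, h⟩
  · intro D hD
    have hβα : β - α ≤ D := by
      have := hD β hβK α hαK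
      rw [abs_sub_le_iff] at this
      linarith [this.1]
    constructor
    · rintro p ⟨hpK, hpz⟩ q ⟨hqK, hqz⟩
      rw [mem_Iic] at hpz hqz
      rw [abs_sub_le_iff]
      constructor <;>
        linarith [S.sInf_le hpK, S.sInf_le hqK]
    · rintro p ⟨hpK, hpz⟩ q ⟨hqK, hqz⟩
      rw [mem_Ici] at hpz hqz
      rw [abs_sub_le_iff]
      constructor <;>
        linarith [S.le_sSup hpK, S.le_sSup hqK]

/-- The chosen splitting. -/
noncomputable def split (S : GS) : GS × GS := (exists_split S).choose

lemma split_spec (S : GS) :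
    (split S).1.K ⊆ S.K ∧ (split S).2.K ⊆ S.K ∧ Disjoint (split S).1.K (split S).2.K ∧
      (split S).1.K ∪ (split S).2.K = S.K ∧
      ∀ D : ℝ, (∀ p ∈ S.K, ∀ q ∈ S.K, |p - q| ≤ D) →
        ((∀ p ∈ (split S).1.K, ∀ q ∈ (split S).1.K, |p - q| ≤ 2/3 * D) ∧
         (∀ p ∈ (split S).2.K, ∀ q ∈ (split S).2.K, |p - q| ≤ 2/3 * D)) :=
  (exists_split S).choose_spec

end CantorAch

namespace CantorAch

/-- The nested chain of good sets following a boolean code. -/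
noncomputable def chain (S : GS) (ε : ℕ → Bool) : ℕ → GS
  | 0 => S
  | n+1 => if ε n then (split (chain S ε n)).2 else (split (chain S ε n)).1

lemma chain_succ_subset (S : GS) (ε : ℕ → Bool) (n : ℕ) :
    (chain S ε (n+1)).K ⊆ (chain S ε n).K := by
  show (if ε n then (split (chain S ε n)).2 else (split (chain S ε n)).1).K ⊆ _
  rcases ε n with _ | _ <;> simp only [if_true, if_false, Bool.false_eq_true]
  · exact (split_spec (chain S ε n)).1
  · exact (split_spec (chain S ε n)).2.1

lemma chain_subset (S : GS) (ε : ℕ → Bool) {m n : ℕ} (h : m ≤ n) :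
    (chain S ε n).K ⊆ (chain S ε m).K := by
  induction n with
  | zero => simp_all
  | succ k ih =>
    rcases Nat.lt_or_ge m (k+1) with h' | h'
    · exact (chain_succ_subset S ε k).trans (ih (Nat.lt_succ_iff.1 h'))
    · have : m = k + 1 := le_antisymm h h'
      subst this; rfl

lemma chain_congr (S : GS) {ε ε' : ℕ → Bool} (n : ℕ) (h : ∀ i < n, ε i = ε' i) :
    chain S ε n = chain S ε' n := by
  induction n with
  | zero => rfl
  | succ k ih =>
    have hk : chain S ε k = chain S ε' k := ih fun i hi => h i (hi.trans (Nat.lt_succ_self k))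
    show (if ε k then _ else _) = (if ε' k then _ else _)
    rw [hk, h k (Nat.lt_succ_self k)]

lemma chain_diam (S : GS) (ε : ℕ → Bool) (n : ℕ) :
    ∀ p ∈ (chain S ε n).K, ∀ q ∈ (chain S ε n).K,
      |p - q| ≤ (2/3 : ℝ)^n * (sSup S.K - sInf S.K) := by
  induction n with
  | zero => intro p hp q hq; simpa using S.diam_bound hp hq
  | succ k ih =>
    have hstep := ((split_spec (chain S ε k)).2.2.2.2 _ ih)
    intro p hp q hq
    have : |p - q| ≤ 2/3 * ((2/3 : ℝ)^k * (sSup S.K - sInf S.K)) := by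
      revert hp hq
      show p ∈ (if ε k then _ else _ : GS).K → q ∈ (if ε k then _ else _ : GS).K → _
      rcases ε k with _ | _ <;> simp only [if_true, if_false, Bool.false_eq_true] <;>
        intro hp hq
      · exact hstep.1 p hp q hq
      · exact hstep.2 p hp q hq
    calc |p - q| ≤ 2/3 * ((2/3:ℝ)^k * (sSup S.K - sInf S.K)) := this
    _ = (2/3:ℝ)^(k+1) * (sSup S.K - sInf S.K) := by ring

lemma chain_inter_nonempty (S : GS) (ε : ℕ → Bool) :
    (⋂ n, (chain S ε n).K).Nonempty :=
  IsCompact.nonempty_iInter_of_sequence_nonempty_isCompact_isClosed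
    (fun n => (chain S ε n).K) (chain_succ_subset S ε) (fun n => (chain S ε n).ne)
    (chain S ε 0).comp (fun n => (chain S ε n).comp.isClosed)

/-- The point coded by `ε`. -/
noncomputable def pt (S : GS) (ε : ℕ → Bool) : ℝ := (chain_inter_nonempty S ε).choose

lemma pt_mem (S : GS) (ε : ℕ → Bool) (n : ℕ) : pt S ε ∈ (chain S ε n).K := by
  have := (chain_inter_nonempty S ε).choose_spec
  exact mem_iInter.1 this n

lemma pt_mem_base (S : GS) (ε : ℕ → Bool) : pt S ε ∈ S.K := pt_mem S ε 0

lemma diam_tendsto (S : GS) : Tendsto (fun n => (2/3 : ℝ)^n * (sSup S.K - sInf S.K))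
    atTop (𝓝 0) := by
  have := tendsto_pow_atTop_nhds_zero_of_lt_one (by norm_num : (0:ℝ) ≤ 2/3)
    (by norm_num : (2/3 : ℝ) < 1)
  simpa using this.mul_const (sSup S.K - sInf S.K)

lemma pt_unique (S : GS) (ε : ℕ → Bool) {y : ℝ} (hy : ∀ n, y ∈ (chain S ε n).K) :
    y = pt S ε := by
  have h : ∀ n, |y - pt S ε| ≤ (2/3 : ℝ)^n * (sSup S.K - sInf S.K) :=
    fun n => chain_diam S ε n y (hy n) (pt S ε) (pt_mem S ε n)
  have : |y - pt S ε| ≤ 0 := ge_of_tendsto (diam_tendsto S) (Eventually.of_forall h)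
  have := abs_nonneg (y - pt S ε)
  have : |y - pt S ε| = 0 := le_antisymm ‹_› ‹_›
  rw [abs_eq_zero, sub_eq_zero] at this
  exact this

lemma pt_injective (S : GS) : Function.Injective (pt S) := by
  intro ε ε' h
  by_contra hne
  have hex : ∃ n, ε n ≠ ε' n := by
    by_contra hc
    push_neg at hc
    exact hne (funext hc)
  classical
  let m := Nat.find hex
  have hm : ε m ≠ ε' m := Nat.find_spec hex
  have hlt : ∀ i < m, ε i = ε' i := fun i hi => by
    by_contra hc; exact Nat.find_min hex hi hc
  have hcc : chain S ε m = chain S ε' m := chain_congr S m hlt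
  have hdisj : Disjoint (split (chain S ε m)).1.K (split (chain S ε m)).2.K :=
    (split_spec (chain S ε m)).2.2.1
  have h1 : pt S ε ∈ (chain S ε (m+1)).K := pt_mem S ε (m+1)
  have h2 : pt S ε' ∈ (chain S ε' (m+1)).K := pt_mem S ε' (m+1)
  rw [show chain S ε' (m+1) = if ε' m then (split (chain S ε' m)).2
      else (split (chain S ε' m)).1 from rfl, ← hcc] at h2
  rw [show chain S ε (m+1) = if ε m then (split (chain S ε m)).2
      else (split (chain S ε m)).1 from rfl] at h1
  rw [← h] at h2
  cases hbe : ε m <;> cases hbe' : ε' m <;>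
    rw [hbe] at h1 <;> rw [hbe'] at h2 <;>
    simp only [if_true, if_false, Bool.false_eq_true] at h1 h2 <;>
    first
      | exact hm (hbe.trans hbe'.symm)
      | exact (Set.disjoint_iff.1 hdisj) ⟨h1, h2⟩
      | exact (Set.disjoint_iff.1 hdisj) ⟨h2, h1⟩

end CantorAch

namespace CantorAch

open Classical in
/-- The chain following a point `y`. -/
noncomputable def fchain (S : GS) (y : ℝ) : ℕ → GS
  | 0 => S
  | n+1 => if y ∈ (split (fchain S y n)).2.K then (split (fchain S y n)).2
           else (split (fchain S y n)).1

open Classical in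
/-- The code of a point `y`. -/
noncomputable def fcode (S : GS) (y : ℝ) (n : ℕ) : Bool :=
  if y ∈ (split (fchain S y n)).2.K then true else false

lemma fchain_mem (S : GS) {y : ℝ} (hy : y ∈ S.K) (n : ℕ) : y ∈ (fchain S y n).K := by
  induction n with
  | zero => exact hy
  | succ k ih =>
    classical
    show y ∈ (if y ∈ (split (fchain S y k)).2.K then (split (fchain S y k)).2
      else (split (fchain S y k)).1).K
    by_cases h : y ∈ (split (fchain S y k)).2.K
    · rw [if_pos h]; exact h
    · rw [if_neg h]
      have := (split_spec (fchain S y k)).2.2.2.1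
      rw [← this] at ih
      rcases ih with h1 | h2
      · exact h1
      · exact absurd h2 h
      
lemma chain_fcode (S : GS) (y : ℝ) (n : ℕ) : chain S (fcode S y) n = fchain S y n := by
  classical
  induction n with
  | zero => rfl
  | succ k ih =>
    show (if fcode S y k then _ else _) = _
    rw [ih]
    show (if fcode S y k then (split (fchain S y k)).2 else (split (fchain S y k)).1) = _
    by_cases h : y ∈ (split (fchain S y k)).2.K
    · have : fcode S y k = true := by unfold fcode; rw [if_pos h]
      rw [this, if_pos rfl]
      show _ = (if y ∈ (split (fchain S y k)).2.K then _ else _)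
      rw [if_pos h]
    · have : fcode S y k = false := by unfold fcode; rw [if_neg h]
      rw [this]
      show _ = (if y ∈ (split (fchain S y k)).2.K then _ else _)
      rw [if_neg h]
      simp

lemma pt_surjective (S : GS) {y : ℝ} (hy : y ∈ S.K) : ∃ ε, pt S ε = y := by
  refine ⟨fcode S y, (pt_unique S (fcode S y) ?_).symm⟩
  intro n
  rw [chain_fcode]
  exact fchain_mem S hy n

lemma pt_continuous (S : GS) : Continuous (pt S) := by
  rw [continuous_iff_continuousAt]
  intro ε
  rw [ContinuousAt, Metric.tendsto_nhds]
  intro δ hδ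
  obtain ⟨n, hn⟩ : ∃ n, (2/3 : ℝ)^n * (sSup S.K - sInf S.K) < δ := by
    have := (diam_tendsto S).eventually (eventually_lt_nhds hδ)
    exact this.exists
  have hmem : {ε' : ℕ → Bool | ∀ i : Fin n, ε' i = ε i} ∈ 𝓝 ε := by
    have hopen : IsOpen {ε' : ℕ → Bool | ∀ i : Fin n, ε' i = ε i} := by
      have : {ε' : ℕ → Bool | ∀ i : Fin n, ε' i = ε i} =
          ⋂ i : Fin n, (fun ε' : ℕ → Bool => ε' i) ⁻¹' {ε i} := by
        ext; simp [Set.mem_iInter]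
      rw [this]
      exact isOpen_iInter_of_finite fun i =>
        (continuous_apply (i : ℕ)).isOpen_preimage _ (isOpen_discrete _)
    exact hopen.mem_nhds (fun i => rfl)
  filter_upwards [hmem] with ε' hε'
  have hcc : chain S ε' n = chain S ε n :=
    chain_congr S n fun i hi => hε' ⟨i, hi⟩
  have h1 : pt S ε' ∈ (chain S ε n).K := hcc ▸ pt_mem S ε' n
  have h2 : pt S ε ∈ (chain S ε n).K := pt_mem S ε n
  calc dist (pt S ε') (pt S ε) = |pt S ε' - pt S ε| := rfl
  _ ≤ (2/3 : ℝ)^n * (sSup S.K - sInf S.K) := chain_diam S ε n _ h1 _ h2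
  _ < δ := hn

/-- Brouwer-type theorem for subsets of `ℝ`: every good set is Cantor-like. -/
lemma GS.cantorLike (S : GS) : CantorLike S.K := by
  have hrange : range (pt S) = S.K := by
    apply subset_antisymm
    · rintro _ ⟨ε, rfl⟩; exact pt_mem_base S ε
    · intro y hy; obtain ⟨ε, hε⟩ := pt_surjective S hy; exact ⟨ε, hε⟩
  let G : (ℕ → Bool) → S.K := fun ε => ⟨pt S ε, pt_mem_base S ε⟩
  have hGbij : Function.Bijective G := by
    constructor
    · intro a b hab
      exact pt_injective S (Subtype.mk_eq_mk.1 hab)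
    · rintro ⟨y, hy⟩
      obtain ⟨ε, hε⟩ := pt_surjective S hy
      exact ⟨ε, Subtype.ext hε⟩
  have hGcont : Continuous G := (pt_continuous S).subtype_mk _
  let e : (ℕ → Bool) ≃ S.K := Equiv.ofBijective G hGbij
  have : Continuous e := hGcont
  exact ⟨(this.homeoOfEquivCompactToT2).symm⟩

end CantorAch

namespace CantorAch

/-- Masked sum of a series. -/
noncomputable def mask (w : ℕ → ℝ) (ε : ℕ → Bool) : ℝ := ∑' n, if ε n then w n else 0

/-- Tail of the series of absolute values, from index `k` on. -/
noncomputable def tailAux (w : ℕ → ℝ) (k : ℕ) : ℝ := ∑' i, |w (i + k)|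

variable {w : ℕ → ℝ}

lemma mask_summand_abs_le (ε : ℕ → Bool) (i : ℕ) : ‖if ε i then w i else 0‖ ≤ |w i| := by
  cases h : ε i <;> simp [h, abs_nonneg, Real.norm_eq_abs, le_refl]

lemma mask_summable (hw : Summable fun n => |w n|) (ε : ℕ → Bool) :
    Summable (fun n => if ε n then w n else 0) :=
  Summable.of_norm_bounded hw (mask_summand_abs_le ε)

lemma mask_continuous (hw : Summable fun n => |w n|) : Continuous (mask w) := by
  apply continuous_tsum (u := fun n => |w n|) ?_ hw ?_
  · intro i
    exact Continuous.comp
      (continuous_of_discreteTopology (f := fun b : Bool => if b then w i else 0))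
      (continuous_apply i)
  · intro n ε
    exact mask_summand_abs_le ε n

lemma tailAux_nonneg (k : ℕ) : 0 ≤ tailAux w k := tsum_nonneg fun i => abs_nonneg _

lemma tailAux_summable (hw : Summable fun n => |w n|) (k : ℕ) :
    Summable fun i => |w (i + k)| := (summable_nat_add_iff k).2 hw

lemma tailAux_tendsto_zero (hw : Summable fun n => |w n|) :
    Tendsto (tailAux w) atTop (𝓝 0) := tendsto_sum_nat_add fun n => |w n|

/-- Difference of two masked sums as a single sum. -/
lemma mask_diff_summable (hw : Summable fun n => |w n|) (ε ε' : ℕ → Bool) :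
    Summable (fun n => (if ε n then w n else 0) - (if ε' n then w n else 0)) :=
  (mask_summable hw ε).sub (mask_summable hw ε')

lemma mask_diff_abs_summable (hw : Summable fun n => |w n|) (ε ε' : ℕ → Bool) :
    Summable (fun n => |(if ε n then w n else 0) - (if ε' n then w n else 0)|) := by
  apply Summable.of_norm_bounded (hw.add hw)
  intro i
  rw [Real.norm_eq_abs, abs_abs]
  refine (abs_sub _ _).trans ?_
  exact add_le_add (mask_summand_abs_le ε i) (mask_summand_abs_le ε' i)

lemma mask_sub_eq (hw : Summable fun n => |w n|) (ε ε' : ℕ → Bool) :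
    mask w ε - mask w ε' =
      ∑' n, ((if ε n then w n else 0) - (if ε' n then w n else 0)) :=
  (Summable.tsum_sub (mask_summable hw ε) (mask_summable hw ε')).symm

/-- Generic estimate: a series vanishing below `n` is bounded by its tail. -/
lemma abs_tsum_le_tail {d : ℕ → ℝ} (hd : Summable fun i => |d i|) {n : ℕ}
    (h0 : ∀ i < n, d i = 0) : |∑' i, d i| ≤ ∑' i, |d (i + n)| := by
  calc |∑' i, d i| ≤ ∑' i, |d i| := by
        have h := norm_tsum_le_tsum_norm (f := d)
          (by simpa [Real.norm_eq_abs] using hd)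
        simpa [Real.norm_eq_abs] using h
  _ = (∑ i ∈ Finset.range n, |d i|) + ∑' i, |d (i + n)| :=
        (Summable.sum_add_tsum_nat_add n hd).symm
  _ = ∑' i, |d (i + n)| := by
        rw [Finset.sum_eq_zero, zero_add]
        intro i hi
        rw [h0 i (Finset.mem_range.1 hi), abs_zero]

lemma tsum_abs_tail_le {d : ℕ → ℝ} (hd : Summable fun i => |d i|)
    (hw : Summable fun n => |w n|) (hle : ∀ i, |d i| ≤ |w i|) (n : ℕ) :
    ∑' i, |d (i + n)| ≤ tailAux w n :=
  Summable.tsum_le_tsum (fun i => hle (i + n)) ((summable_nat_add_iff n).2 hd)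
    (tailAux_summable hw n)

lemma tsum_eq_head_add {d : ℕ → ℝ} (hd : Summable d) (m : ℕ)
    (h0 : ∀ i < m, d i = 0) : ∑' i, d i = d m + ∑' i, d (i + (m + 1)) := by
  rw [← Summable.sum_add_tsum_nat_add (m + 1) hd]
  congr 1
  rw [Finset.sum_eq_single_of_mem m (Finset.self_mem_range_succ m)]
  intro i hi hne
  exact h0 i (lt_of_le_of_ne (Nat.lt_succ_iff.1 (Finset.mem_range.1 hi)) hne)

/-- If two codes agree below `n`, the masked sums are `tailAux w n`-close. -/
lemma mask_close (hw : Summable fun n => |w n|) {ε ε' : ℕ → Bool} {n : ℕ}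
    (h : ∀ i < n, ε i = ε' i) :
    |mask w ε - mask w ε'| ≤ tailAux w n := by
  have hd0 : ∀ i < n, (if ε i then w i else 0) - (if ε' i then w i else 0) = 0 := by
    intro i hi; rw [h i hi, sub_self]
  have hdabs : ∀ i, |(if ε i then w i else 0) - (if ε' i then w i else 0)| ≤ |w i| := by
    intro i
    rcases h1 : ε i with _|_ <;> rcases h2 : ε' i with _|_ <;>
      simp [h1, h2, abs_nonneg, abs_neg, le_refl]
  rw [mask_sub_eq hw ε ε']
  exact (abs_tsum_le_tail (mask_diff_abs_summable hw ε ε') hd0).trans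
    (tsum_abs_tail_le (mask_diff_abs_summable hw ε ε') hw hdabs n)

/-- If codes first differ at `m`, masked sums are at least `|w m| - tailAux w (m+1)` apart. -/
lemma mask_far (hw : Summable fun n => |w n|) {ε ε' : ℕ → Bool} {m : ℕ}
    (h : ∀ i < m, ε i = ε' i) (hm : ε m ≠ ε' m) :
    |w m| - tailAux w (m + 1) ≤ |mask w ε - mask w ε'| := by
  have hd0 : ∀ i < m, (if ε i then w i else 0) - (if ε' i then w i else 0) = 0 := by
    intro i hi; rw [h i hi, sub_self]
  have hdm : |(if ε m then w m else 0) - (if ε' m then w m else 0)| = |w m| := by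
    rcases h1 : ε m with _|_ <;> rcases h2 : ε' m with _|_ <;>
      simp [h1, h2] at hm ⊢ <;> simp [abs_neg]
  have hdabs : ∀ i, |(if ε i then w i else 0) - (if ε' i then w i else 0)| ≤ |w i| := by
    intro i
    rcases h1 : ε i with _|_ <;> rcases h2 : ε' i with _|_ <;>
      simp [h1, h2, abs_nonneg, abs_neg, le_refl]
  have hsum := tsum_eq_head_add (mask_diff_summable hw ε ε') m hd0
  have hR : |∑' i, ((if ε (i + (m+1)) then w (i + (m+1)) else 0) -
      (if ε' (i + (m+1)) then w (i + (m+1)) else 0))| ≤ tailAux w (m + 1) := by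
    refine le_trans ?_
      (tsum_abs_tail_le (mask_diff_abs_summable hw ε ε') hw hdabs (m+1))
    simpa [Real.norm_eq_abs] using
      norm_tsum_le_tsum_norm
        (f := fun i => (if ε (i + (m+1)) then w (i + (m+1)) else 0) -
          (if ε' (i + (m+1)) then w (i + (m+1)) else 0))
        (by simpa [Real.norm_eq_abs] using
          (summable_nat_add_iff (m+1)).2 (mask_diff_abs_summable hw ε ε'))
  rw [mask_sub_eq hw ε ε', hsum]
  set D := (if ε m then w m else 0) - (if ε' m then w m else 0)
  set R := ∑' i, ((if ε (i + (m+1)) then w (i + (m+1)) else 0) -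
      (if ε' (i + (m+1)) then w (i + (m+1)) else 0))
  have h3 : |D| ≤ |D + R| + |R| := by
    have := abs_add_le (D + R) (-R)
    rw [abs_neg, add_neg_cancel_right] at this
    exact this
  linarith [hdm ▸ h3, hR]

end CantorAch

namespace CantorAch

lemma preconn_no_two_closed {s A B : Set ℝ} (hs : IsPreconnected s) (hsub : s ⊆ A ∪ B)
    (hA : IsClosed A) (hB : IsClosed B) (hAB : A ∩ B = ∅)
    (ha : (s ∩ A).Nonempty) (hb : (s ∩ B).Nonempty) : False := by
  have hdisj : ∀ t : ℝ, ¬(t ∈ A ∧ t ∈ B) := by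
    intro t ht
    exact Set.eq_empty_iff_forall_notMem.1 hAB t ⟨ht.1, ht.2⟩
  have hcover : s ⊆ Bᶜ ∪ Aᶜ := by
    intro t ht
    rcases hsub ht with h | h
    · exact Or.inl fun hB' => hdisj t ⟨h, hB'⟩
    · exact Or.inr fun hA' => hdisj t ⟨hA', h⟩
  obtain ⟨a, has, haA⟩ := ha
  obtain ⟨b, hbs, hbB⟩ := hb
  obtain ⟨p, hp⟩ := hs Bᶜ Aᶜ hB.isOpen_compl hA.isOpen_compl hcover
    ⟨a, has, fun hB' => hdisj a ⟨haA, hB'⟩⟩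
    ⟨b, hbs, fun hA' => hdisj b ⟨hA', hbB⟩⟩
  rcases hsub hp.1 with h | h
  · exact hp.2.2 h
  · exact hp.2.1 h

lemma interior_union_empty {A B : Set ℝ} (hA : IsClosed A) (hiA : interior A = ∅)
    (hB : IsClosed B) (hiB : interior B = ∅) : interior (A ∪ B) = ∅ := by
  have h1 : interior (A ∪ B) \ A ⊆ interior B := by
    apply interior_maximal ?_ (isOpen_interior.sdiff hA)
    rintro t ⟨ht, htA⟩
    rcases interior_subset ht with h | h
    · exact absurd h htA
    · exact h
  rw [hiB, subset_empty_iff, diff_eq_empty] at h1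
  have h2 := interior_maximal h1 isOpen_interior
  rw [hiA, subset_empty_iff] at h2
  exact h2

lemma interior_biUnion_empty {ι : Type*} (s : Finset ι) (P : ι → Set ℝ)
    (hc : ∀ i, IsClosed (P i)) (hi : ∀ i, interior (P i) = ∅) :
    interior (⋃ i ∈ s, P i) = ∅ := by
  classical
  induction s using Finset.induction_on with
  | empty => simp
  | insert _ _ _ ih =>
    rw [Finset.set_biUnion_insert]
    exact interior_union_empty (hc _) (hi _)
      ((Finset.finite_toSet _).isClosed_biUnion fun i _ => hc i) ih

lemma interior_iUnion_empty {ι : Type*} [Fintype ι] (P : ι → Set ℝ)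
    (hc : ∀ i, IsClosed (P i)) (hi : ∀ i, interior (P i) = ∅) :
    interior (⋃ i, P i) = ∅ := by
  have : (⋃ i, P i) = ⋃ i ∈ Finset.univ, P i := by simp
  rw [this]
  exact interior_biUnion_empty Finset.univ P hc hi

/-- A "good" sequence: every term dominates the tail after it. -/
def GoodSeq (y : ℕ → ℝ) : Prop := (Summable fun n => |y n|) ∧ ∀ n, tailAux y (n + 1) < |y n|

lemma GoodSeq.summable {y : ℕ → ℝ} (hy : GoodSeq y) : Summable fun n => |y n| := hy.1

lemma GoodSeq.mask_injective {y : ℕ → ℝ} (hy : GoodSeq y) : Function.Injective (mask y) := by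
  intro ε ε' h
  by_contra hne
  have hex : ∃ n, ε n ≠ ε' n := by
    by_contra hc; push_neg at hc; exact hne (funext hc)
  classical
  have hfar := mask_far hy.1 (fun i hi => by
      by_contra hc; exact Nat.find_min hex hi hc) (Nat.find_spec hex)
  rw [h, sub_self, abs_zero] at hfar
  linarith [hy.2 (Nat.find hex)]

/-- The cylinder set of codes with prescribed first `n` values. -/
def cyl (n : ℕ) (σ : Fin n → Bool) : Set (ℕ → Bool) := {ε | ∀ i : Fin n, ε i = σ i}

lemma cyl_isClosed (n : ℕ) (σ : Fin n → Bool) : IsClosed (cyl n σ) := by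
  have : cyl n σ = ⋂ i : Fin n, (fun ε : ℕ → Bool => ε i) ⁻¹' {σ i} := by
    ext; simp [cyl, Set.mem_iInter]
  rw [this]
  exact isClosed_iInter fun i =>
    IsClosed.preimage (continuous_apply (i : ℕ)) isClosed_singleton

end CantorAch

namespace CantorAch

lemma cyl_compact (n : ℕ) (σ : Fin n → Bool) : IsCompact (cyl n σ) :=
  (cyl_isClosed n σ).isCompact

/-- For a good sequence, the set of subsums has empty interior. -/
lemma GoodSeq.interior_empty {y : ℕ → ℝ} (hy : GoodSeq y) :
    interior (range (mask y)) = ∅ := by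
  by_contra hne
  obtain ⟨z, hz⟩ := Set.eq_empty_iff_forall_notMem.not.1 hne |> not_forall.1
  have hz' : z ∈ interior (range (mask y)) := not_not.1 hz
  obtain ⟨r, hr, hball⟩ := Metric.isOpen_iff.1 isOpen_interior z hz'
  have hball' : Metric.ball z r ⊆ range (mask y) := hball.trans interior_subset
  -- choose a level with small tails
  obtain ⟨n, hn⟩ : ∃ n, tailAux y n < r / 2 := by
    have := (tailAux_tendsto_zero hy.1).eventually (eventually_lt_nhds (by linarith : 0 < r / 2))
    exact this.exists
  -- the pieces
  set P : (Fin n → Bool) → Set ℝ := fun σ => mask y '' cyl n σ with hP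
  have hPclosed : ∀ σ, IsClosed (P σ) :=
    fun σ => ((cyl_compact n σ).image (mask_continuous hy.1)).isClosed
  have hPdisj : ∀ σ σ', σ ≠ σ' → P σ ∩ P σ' = ∅ := by
    intro σ σ' hσ
    rw [Set.eq_empty_iff_forall_notMem]
    rintro t ⟨⟨ε, hε, hεt⟩, ⟨ε', hε', hε't⟩⟩
    have : ε = ε' := hy.mask_injective (hεt.trans hε't.symm)
    subst this
    exact hσ (funext fun i => (hε i).symm.trans (hε' i))
  have hcover : range (mask y) ⊆ ⋃ σ, P σ := by
    rintro t ⟨ε, rfl⟩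
    exact Set.mem_iUnion.2 ⟨fun i => ε i, ⟨ε, fun i => rfl, rfl⟩⟩
  -- z itself
  obtain ⟨ε₀, hε₀⟩ := hball' (Metric.mem_ball_self hr)
  set σ₀ : Fin n → Bool := fun i => ε₀ i with hσ₀
  have hzP : z ∈ P σ₀ := ⟨ε₀, fun i => rfl, hε₀⟩
  -- the union of the other pieces
  set B' : Set ℝ := ⋃ σ' ∈ {σ' : Fin n → Bool | σ' ≠ σ₀}, P σ' with hB'
  have hB'closed : IsClosed B' :=
    (Set.toFinite _).isClosed_biUnion fun σ' _ => hPclosed σ'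
  have hPB' : P σ₀ ∩ B' = ∅ := by
    rw [Set.eq_empty_iff_forall_notMem]
    rintro t ⟨ht0, ht1⟩
    obtain ⟨σ', hσ'ne, htσ'⟩ := Set.mem_iUnion₂.1 ht1
    exact Set.eq_empty_iff_forall_notMem.1 (hPdisj σ₀ σ' (Ne.symm hσ'ne)) t ⟨ht0, htσ'⟩
  have hballsub : Metric.ball z r ⊆ P σ₀ ∪ B' := by
    intro t ht
    rcases Set.mem_iUnion.1 (hcover (hball' ht)) with ⟨σ, hσ⟩
    by_cases h : σ = σ₀
    · exact Or.inl (h ▸ hσ)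
    · exact Or.inr (Set.mem_iUnion₂.2 ⟨σ, h, hσ⟩)
  -- ball is inside P σ₀ by connectedness
  have hsub : Metric.ball z r ⊆ P σ₀ := by
    intro t ht
    by_contra htP
    have htB' : t ∈ B' := (hballsub ht).resolve_left htP
    exact preconn_no_two_closed (convex_ball z r).isPreconnected hballsub
      (hPclosed σ₀) hB'closed hPB'
      ⟨z, Metric.mem_ball_self hr, hzP⟩ ⟨t, ht, htB'⟩
  -- contradiction with the small diameter of P σ₀
  have htmem : z + r / 2 ∈ Metric.ball z r := by
    rw [Metric.mem_ball, Real.dist_eq]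
    rw [abs_of_nonneg (by linarith : (0:ℝ) ≤ z + r/2 - z)]
    linarith
  obtain ⟨ε₁, hε₁c, hε₁⟩ := hsub htmem
  have hclose : |mask y ε₁ - mask y ε₀| ≤ tailAux y n := by
    apply mask_close hy.1
    intro i hi
    exact (hε₁c ⟨i, hi⟩).trans (rfl : σ₀ ⟨i, hi⟩ = ε₀ i).symm ▸ rfl
  rw [hε₁, hε₀] at hclose
  have : |z + r/2 - z| = r/2 := by
    rw [abs_of_nonneg (by linarith : (0:ℝ) ≤ z + r/2 - z)]; ring
  rw [this] at hclose
  linarith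

end CantorAch

namespace CantorAch

lemma achSet_eq_range_mask {x : ℕ → ℝ} (hx : Summable fun n => |x n|) :
    achSet x = range (mask x) := by
  classical
  have hx' : Summable x := Summable.of_abs hx
  ext a
  constructor
  · rintro ⟨A, hA⟩
    have hsub : Summable (fun n : A => x n) := hx'.subtype A
    have ha : a = ∑' n : A, x n := (hA.tsum_eq).symm
    refine ⟨fun n => decide (n ∈ A), ?_⟩
    rw [ha, tsum_subtype A x]
    apply tsum_congr
    intro n
    rw [Set.indicator_apply]
    by_cases h : n ∈ A <;> simp [h]
  · rintro ⟨ε, rfl⟩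
    refine ⟨{n | ε n = true}, ?_⟩
    have hsub : Summable (fun n : {n | ε n = true} => x n) := hx'.subtype _
    have : ∑' n : {n | ε n = true}, x n = mask x ε := by
      rw [tsum_subtype]
      apply tsum_congr
      intro n
      rw [Set.indicator_apply]
      by_cases h : ε n = true <;> simp [h]
    exact this ▸ hsub.hasSum

lemma mask_flip_abs {x : ℕ → ℝ} (hx : Summable fun n => |x n|) (ε : ℕ → Bool) (n : ℕ) :
    |mask x (Function.update ε n (!ε n)) - mask x ε| = |x n| := by
  classical
  rw [mask_sub_eq hx]
  have hzero : ∀ i, i ≠ n →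
      (if Function.update ε n (!ε n) i then x i else 0) - (if ε i then x i else 0) = 0 := by
    intro i hi
    rw [Function.update_of_ne hi, sub_self]
  rw [tsum_eq_single n hzero]
  rw [Function.update_self]
  cases h : ε n <;> simp [h, abs_neg]

/-- The achievement set has no isolated points. -/
lemma range_mask_perf {x : ℕ → ℝ} (hx : Summable fun n => |x n|) {N : ℕ}
    (hN : ∀ n ≥ N, tailSum x n < |x n|) :
    ∀ a ∈ range (mask x), ∀ δ : ℝ, 0 < δ → ∃ b ∈ range (mask x), b ≠ a ∧ |b - a| < δ := by
  classical
  rintro a ⟨ε, rfl⟩ δ hδ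
  have hxs : ∀ n, 0 ≤ tailSum x n := fun n => tsum_nonneg fun i => abs_nonneg _
  have hsmall : ∀ᶠ n in atTop, |x n| < δ := by
    have h0 : Tendsto (fun n => |x n|) atTop (𝓝 0) := hx.tendsto_atTop_zero
    exact h0.eventually (eventually_lt_nhds hδ)
  obtain ⟨n, hn1, hn2⟩ := (hsmall.and (eventually_ge_atTop N)).exists
  have hxn : x n ≠ 0 := by
    intro h
    have := hN n hn2
    rw [h, abs_zero] at this
    linarith [hxs n]
  refine ⟨mask x (Function.update ε n (!ε n)), ⟨_, rfl⟩, ?_, ?_⟩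
  · intro h
    have := mask_flip_abs hx ε n
    rw [h, sub_self, abs_zero] at this
    exact hxn (abs_eq_zero.1 this.symm)
  · rw [mask_flip_abs hx ε n]
    exact hn1

end CantorAch

namespace CantorAch

lemma mask_split {x : ℕ → ℝ} (hx : Summable fun n => |x n|) (N : ℕ) (ε : ℕ → Bool) :
    mask x ε = (∑ i ∈ Finset.range N, if ε i then x i else 0) +
      mask (fun n => x (N + n)) (fun i => ε (N + i)) := by
  have h1 := Summable.sum_add_tsum_nat_add N (mask_summable hx ε)
  rw [show mask x ε = ∑' n, if ε n then x n else 0 from rfl, ← h1]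
  congr 1
  apply tsum_congr
  intro i
  rw [Nat.add_comm i N]

theorem achSet_cantorLike_main (x : ℕ → ℝ) (hx : Summable fun n => |x n|)
    (hbig : ∀ᶠ n in atTop, tailSum x n < |x n|) :
    CantorLike (achSet x) := by
  classical
  obtain ⟨N, hN⟩ := eventually_atTop.1 hbig
  set y : ℕ → ℝ := fun n => x (N + n) with hy
  have hysum : Summable fun n => |y n| := by
    have h1 : Summable fun n => |x (n + N)| := (summable_nat_add_iff N).2 hx
    exact h1.congr fun n => by rw [Nat.add_comm n N]
  have hygood : GoodSeq y := by
    refine ⟨hysum, fun n => ?_⟩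
    have h1 : tailAux y (n + 1) = tailSum x (N + n) := by
      apply tsum_congr
      intro i
      show |x (N + (i + (n + 1)))| = |x (N + n + 1 + i)|
      have : N + (i + (n + 1)) = N + n + 1 + i := by omega
      rw [this]
    have h2 := hN (N + n) (Nat.le_add_right N n)
    rw [h1]
    exact h2
  set C : Set ℝ := range (mask y) with hC
  have hCcomp : IsCompact C := isCompact_range (mask_continuous hysum)
  have hCint : interior C = ∅ := hygood.interior_empty
  set c : (Fin N → Bool) → ℝ := fun σ => ∑ i : Fin N, if σ i then x i else 0 with hc
  -- decomposition
  have hdec : range (mask x) = ⋃ σ : Fin N → Bool, (fun r => c σ + r) '' C := by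
    ext a
    constructor
    · rintro ⟨ε, rfl⟩
      apply Set.mem_iUnion.2
      refine ⟨fun i => ε i, mask y (fun i => ε (N + i)), mem_range_self _, ?_⟩
      simp only [hc]
      show (∑ i : Fin N, if ε (i : ℕ) then x (i : ℕ) else 0) +
        mask y (fun i => ε (N + i)) = mask x ε
      rw [mask_split hx N ε,
        Fin.sum_univ_eq_sum_range (fun i => if ε i then x i else 0) N]
    · intro ha
      obtain ⟨σ, ρ, ⟨εt, rfl⟩, rfl⟩ := Set.mem_iUnion.1 ha
      refine ⟨fun m => if h : m < N then σ ⟨m, h⟩ else εt (m - N), ?_⟩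
      have hfun : (fun i => (fun m => if h : m < N then σ ⟨m, h⟩ else εt (m - N)) (N + i))
          = εt := by
        funext i
        simp only [dif_neg (by omega : ¬ N + i < N), Nat.add_sub_cancel_left]
      rw [mask_split hx N _, hfun]
      simp only [hc]
      show (∑ i ∈ Finset.range N,
          if (if h : i < N then σ ⟨i, h⟩ else εt (i - N)) then x i else 0) + mask y εt
        = (∑ i : Fin N, if σ i then x (i : ℕ) else 0) + mask y εt
      congr 1
      rw [← Fin.sum_univ_eq_sum_range
        (fun i => if (if h : i < N then σ ⟨i, h⟩ else εt (i - N)) then x i else 0) N]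
      apply Finset.sum_congr rfl
      intro i _
      simp only [Fin.is_lt, dif_pos, Fin.eta]
  -- interior of the full range is empty
  have hint : interior (range (mask x)) = ∅ := by
    rw [hdec]
    apply interior_iUnion_empty
    · intro σ
      exact ((hCcomp.image (continuous_const.add continuous_id)).isClosed)
    · intro σ
      have himg : (fun r => c σ + r) '' C = (Homeomorph.addLeft (c σ)) '' C := rfl
      rw [himg, ← Homeomorph.image_interior, hCint, Set.image_empty]
  -- build the good set
  rw [achSet_eq_range_mask hx]
  exact GS.cantorLike
    ⟨range (mask x), isCompact_range (mask_continuous hx),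
      ⟨mask x (fun _ => false), mem_range_self _⟩,
      range_mask_perf hx hN, hint⟩

end CantorAch

theorem achSet_cantorLike_of_fast_decay (x : ℕ → ℝ) (hx : Summable fun n => |x n|)
    (hbig : ∀ᶠ n in atTop, tailSum x n < |x n|)
    (hnz : ∀ N : ℕ, ∃ n ≥ N, x n ≠ 0) :
    CantorLike (achSet x) := by
  exact CantorAch.achSet_cantorLike_main x hx hbig
end

section
/- Let x ∈ ℓ¹ be a nonnegative nonincreasing sequence satisfying x(n) ≤ ∑_{i>n} x(i) for all n. Then E(x) = [0, ∑_{n} x(n)], i.e., E(x) is a closed interval. -/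
open Set Filter Topology

theorem achSet_eq_Icc (x : ℕ → ℝ) (hx : Summable x) (hpos : ∀ n, 0 ≤ x n)
    (hmono : ∀ n, x (n + 1) ≤ x n) (hsmall : ∀ n, x n ≤ tailSum x n) :
    achSet x = Set.Icc 0 (∑' n, x n) := by
  classical
  -- tail sums
  set T : ℕ → ℝ := fun n => ∑' i, x (n + i) with hTdef
  have hTsummable : ∀ n, Summable (fun i => x (n + i)) :=
    fun n => hx.comp_injective (add_right_injective n)
  have hTrec : ∀ n, T n = x n + T (n + 1) := by
    intro n
    have h := Summable.tsum_eq_zero_add (hTsummable n)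
    calc T n = x (n + 0) + ∑' i, x (n + (i + 1)) := h
      _ = x n + T (n + 1) := by
          rw [Nat.add_zero]
          congr 1
          exact tsum_congr fun i => congrArg x (by omega)
  have htail : ∀ n, tailSum x n = T (n + 1) := by
    intro n
    unfold tailSum
    exact tsum_congr fun i => abs_of_nonneg (hpos _)
  have hTzero : Tendsto T atTop (𝓝 0) := by
    have h := tendsto_sum_nat_add (f := x)
    convert h using 2 with n
    exact tsum_congr fun i => by rw [add_comm]
  ext a
  simp only [achSet, mem_setOf_eq, mem_Icc]
  constructor
  · rintro ⟨A, hA⟩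
    have hA' : HasSum (A.indicator x) a := hasSum_subtype_iff_indicator.mp hA
    constructor
    · exact hasSum_le (fun i => Set.indicator_nonneg (fun n _ => hpos n) i) hasSum_zero hA'
    · exact hasSum_le (fun i => Set.indicator_le_self' (fun n _ => hpos n) i) hA' hx.hasSum
  · rintro ⟨ht0, htS⟩
    set t := a
    -- greedy partial sums
    set p : ℕ → ℝ := fun n => Nat.rec 0 (fun k pk => pk + if pk + x k ≤ t then x k else 0) n
      with hpdef
    have hp0 : p 0 = 0 := rfl
    have hpsucc : ∀ n, p (n + 1) = p n + if p n + x n ≤ t then x n else 0 := fun n => rfl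
    set y : ℕ → ℝ := fun n => if p n + x n ≤ t then x n else 0 with hydef
    have hy0 : ∀ n, 0 ≤ y n := by
      intro n; simp only [hydef]; split <;> [exact hpos n; exact le_rfl]
    have hyx : ∀ n, y n ≤ x n := by
      intro n; simp only [hydef]; split <;> [exact le_rfl; exact hpos n]
    have hysum : Summable y := Summable.of_nonneg_of_le hy0 hyx hx
    -- partial sums equal p
    have hpsum : ∀ n, ∑ i ∈ Finset.range n, y i = p n := by
      intro n
      induction n with
      | zero => simp [hp0]
      | succ n ih => rw [Finset.sum_range_succ, ih, hpsucc]
    -- invariant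
    have hinv : ∀ n, p n ≤ t ∧ t - p n ≤ T n := by
      intro n
      induction n with
      | zero =>
        refine ⟨by simpa [hp0] using ht0, ?_⟩
        have : T 0 = ∑' n, x n := tsum_congr fun i => by rw [Nat.zero_add]
        rw [hp0, this]; linarith
      | succ n ih =>
        obtain ⟨h1, h2⟩ := ih
        by_cases h : p n + x n ≤ t
        · rw [hpsucc, if_pos h]
          refine ⟨h, ?_⟩
          have := hTrec n
          linarith
        · rw [hpsucc, if_neg h]
          refine ⟨by linarith, ?_⟩
          push_neg at h
          have h3 : x n ≤ T (n + 1) := by rw [← htail]; exact hsmall n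
          linarith
    -- p tends to t
    have hpt : Tendsto p atTop (𝓝 t) := by
      have hle : ∀ n, p n ≤ t := fun n => (hinv n).1
      have hge : ∀ n, t - T n ≤ p n := fun n => by linarith [(hinv n).2]
      have h1 : Tendsto (fun n => t - T n) atTop (𝓝 t) := by
        simpa using (tendsto_const_nhds (x := t)).sub hTzero
      exact tendsto_of_tendsto_of_tendsto_of_le_of_le h1 tendsto_const_nhds hge hle
    have hyt : HasSum y t := by
      have h1 : Tendsto (fun n => ∑ i ∈ Finset.range n, y i) atTop (𝓝 (∑' n, y n)) :=
        hysum.hasSum.tendsto_sum_nat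
      have h2 : Tendsto (fun n => ∑ i ∈ Finset.range n, y i) atTop (𝓝 t) := by
        simpa only [hpsum] using hpt
      have : (∑' n, y n) = t := tendsto_nhds_unique h1 h2
      exact this ▸ hysum.hasSum
    refine ⟨{n | p n + x n ≤ t}, hasSum_subtype_iff_indicator.mpr ?_⟩
    convert hyt using 1
    ext n
    by_cases h : p n + x n ≤ t <;> simp [Set.indicator_apply, h, hydef]
end

section
/- Let x ∈ ℓ¹ satisfy |x(n)| ≤ ∑_{i>n} |x(i)| for all sufficiently large n. Then E(x) is a finite union of closed intervals. -/
open Set Filter Topology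

namespace AchAux

noncomputable def sP (z : ℕ → ℝ) (n : ℕ) : ℝ := ∑' i, max (z (n + i)) 0
noncomputable def sN (z : ℕ → ℝ) (n : ℕ) : ℝ := ∑' i, min (z (n + i)) 0

variable {z : ℕ → ℝ}

lemma abs_max_le (a : ℝ) : |max a 0| ≤ |a| := by
  rcases le_or_gt a 0 with h | h
  · simp [max_eq_right h]
  · simp [max_eq_left h.le, abs_of_pos h]

lemma abs_min_le (a : ℝ) : |min a 0| ≤ |a| := by
  rcases le_or_gt a 0 with h | h
  · simp [min_eq_left h, le_abs_self, abs_le, neg_abs_le]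
  · simp [min_eq_right h.le]

lemma summable_of_abs_le {f g : ℕ → ℝ} (hg : Summable g) (h : ∀ n, |f n| ≤ g n) :
    Summable f :=
  (hg.of_nonneg_of_le (fun n => abs_nonneg _) h).of_abs

lemma summable_shift (hz : Summable fun n => |z n|) (n : ℕ) :
    Summable fun i => |z (n + i)| :=
  (((summable_nat_add_iff n).2 hz).congr (fun i => by rw [add_comm]))

lemma summable_maxz (hz : Summable fun n => |z n|) (n : ℕ) :
    Summable fun i => max (z (n + i)) 0 :=
  summable_of_abs_le (summable_shift hz n) (fun i => abs_max_le _)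

lemma summable_minz (hz : Summable fun n => |z n|) (n : ℕ) :
    Summable fun i => min (z (n + i)) 0 :=
  summable_of_abs_le (summable_shift hz n) (fun i => abs_min_le _)

lemma sP_succ (hz : Summable fun n => |z n|) (n : ℕ) :
    sP z n = max (z n) 0 + sP z (n + 1) := by
  unfold sP
  rw [Summable.tsum_eq_zero_add (summable_maxz hz n)]
  congr 1
  exact tsum_congr fun i => by rw [show n + (i + 1) = n + 1 + i from by omega]

lemma sN_succ (hz : Summable fun n => |z n|) (n : ℕ) :
    sN z n = min (z n) 0 + sN z (n + 1) := by
  unfold sN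
  rw [Summable.tsum_eq_zero_add (summable_minz hz n)]
  congr 1
  exact tsum_congr fun i => by rw [show n + (i + 1) = n + 1 + i from by omega]

lemma tailSum_eq (hz : Summable fun n => |z n|) (n : ℕ) :
    tailSum z n = sP z (n + 1) - sN z (n + 1) := by
  have h1 : ∀ i : ℕ, |z (n + 1 + i)| = max (z (n + 1 + i)) 0 - min (z (n + 1 + i)) 0 := by
    intro i
    rcases le_or_gt (z (n + 1 + i)) 0 with h | h
    · simp [max_eq_right h, min_eq_left h, abs_of_nonpos h]
    · simp [max_eq_left h.le, min_eq_right h.le, abs_of_pos h]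
  rw [tailSum, tsum_congr h1, Summable.tsum_sub (summable_maxz hz (n+1)) (summable_minz hz (n+1))]
  rfl

lemma sP_nonneg (hz : Summable fun n => |z n|) (n : ℕ) : 0 ≤ sP z n :=
  tsum_nonneg fun i => le_max_right _ _

lemma sN_nonpos (hz : Summable fun n => |z n|) (n : ℕ) : sN z n ≤ 0 :=
  tsum_nonpos fun i => min_le_right _ _

lemma sP_tendsto (hz : Summable fun n => |z n|) :
    Tendsto (sP z) atTop (𝓝 0) := by
  have := tendsto_sum_nat_add (fun k => max (z k) 0)
  refine this.congr fun n => tsum_congr fun k => by rw [add_comm]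

lemma sN_tendsto (hz : Summable fun n => |z n|) :
    Tendsto (sN z) atTop (𝓝 0) := by
  have := tendsto_sum_nat_add (fun k => min (z k) 0)
  refine this.congr fun n => tsum_congr fun k => by rw [add_comm]

open Classical in
/-- Greedy remainder sequence: `r n` is the part of the target `t` not yet achieved. -/
noncomputable def grd (z : ℕ → ℝ) (t : ℝ) : ℕ → ℝ
  | 0 => t
  | n + 1 =>
    if (0 ≤ z n ∧ sP z (n + 1) < grd z t n) ∨ (z n < 0 ∧ grd z t n < sN z (n + 1)) then
      grd z t n - z n
    else grd z t n

/-- The decision predicate for the greedy algorithm. -/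
def gcond (z : ℕ → ℝ) (t : ℝ) (n : ℕ) : Prop :=
  (0 ≤ z n ∧ sP z (n + 1) < grd z t n) ∨ (z n < 0 ∧ grd z t n < sN z (n + 1))

open Classical in
lemma grd_succ (z : ℕ → ℝ) (t : ℝ) (n : ℕ) :
    grd z t (n + 1) = if gcond z t n then grd z t n - z n else grd z t n := by
  rw [grd, gcond]
  congr

lemma grd_mem (hz : Summable fun n => |z n|) (hc : ∀ n, |z n| ≤ tailSum z n) {t : ℝ}
    (ht : t ∈ Icc (sN z 0) (sP z 0)) : ∀ n, grd z t n ∈ Icc (sN z n) (sP z n) := by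
  intro n
  induction n with
  | zero => exact ht
  | succ n ih =>
    classical
    have hcn := hc n
    rw [tailSum_eq hz n] at hcn
    rw [grd_succ]
    by_cases h : gcond z t n
    · rw [if_pos h]
      rcases h with ⟨hzn, hr⟩ | ⟨hzn, hr⟩
      · have hsP : sP z n = z n + sP z (n + 1) := by
          rw [sP_succ hz n, max_eq_left hzn]
        have habs : z n ≤ sP z (n + 1) - sN z (n + 1) := by
          rwa [abs_of_nonneg hzn] at hcn
        constructor
        · linarith [hr]
        · have := ih.2
          linarith [hsP]
      · have hsN : sN z n = z n + sN z (n + 1) := by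
          rw [sN_succ hz n, min_eq_left hzn.le]
        have habs : -z n ≤ sP z (n + 1) - sN z (n + 1) := by
          rwa [abs_of_neg hzn] at hcn
        constructor
        · have := ih.1
          linarith [hsN]
        · linarith [hr]
    · rw [if_neg h]
      rw [gcond] at h
      push_neg at h
      rcases le_or_gt 0 (z n) with hzn | hzn
      · have hsN : sN z n = sN z (n + 1) := by
          rw [sN_succ hz n, min_eq_right hzn, zero_add]
        exact ⟨hsN ▸ ih.1, h.1 hzn⟩
      · have hsP : sP z n = sP z (n + 1) := by
          rw [sP_succ hz n, max_eq_right hzn.le, zero_add]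
        exact ⟨h.2 hzn, hsP ▸ ih.2⟩

lemma grd_tendsto (hz : Summable fun n => |z n|) (hc : ∀ n, |z n| ≤ tailSum z n) {t : ℝ}
    (ht : t ∈ Icc (sN z 0) (sP z 0)) : Tendsto (grd z t) atTop (𝓝 0) := by
  have h := grd_mem hz hc ht
  exact tendsto_of_tendsto_of_tendsto_of_le_of_le (sN_tendsto hz) (sP_tendsto hz)
    (fun n => (h n).1) (fun n => (h n).2)

open Classical in
lemma grd_eq_sub (z : ℕ → ℝ) (t : ℝ) (n : ℕ) :
    grd z t n = t - ∑ i ∈ Finset.range n, (if gcond z t i then z i else 0) := by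
  induction n with
  | zero => simp [grd]
  | succ n ih =>
    by_cases h : gcond z t n
    · rw [grd_succ, if_pos h, Finset.sum_range_succ, if_pos h, ih]; ring
    · rw [grd_succ, if_neg h, Finset.sum_range_succ, if_neg h, ih]; ring

lemma kakeya_surj (hz : Summable fun n => |z n|) (hc : ∀ n, |z n| ≤ tailSum z n) {t : ℝ}
    (ht : t ∈ Icc (sN z 0) (sP z 0)) :
    ∃ A : Set ℕ, HasSum (fun n : A => z n) t := by
  classical
  refine ⟨{n | gcond z t n}, ?_⟩
  rw [show (fun n : {n | gcond z t n} => z n) = (z ∘ (↑)) from rfl,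
    hasSum_subtype_iff_indicator]
  have hy : Set.indicator {n | gcond z t n} z = fun n => if gcond z t n then z n else 0 := by
    ext n
    simp [Set.indicator, Set.mem_setOf_eq]
  rw [hy]
  set y : ℕ → ℝ := fun n => if gcond z t n then z n else 0 with hydef
  have hys : Summable y := by
    refine summable_of_abs_le hz fun n => ?_
    by_cases h : gcond z t n <;> simp [hydef, h, abs_nonneg, le_abs_self]
  have h1 : Tendsto (fun n => ∑ i ∈ Finset.range n, y i) atTop (𝓝 (∑' i, y i)) :=
    hys.hasSum.tendsto_sum_nat
  have h2 : Tendsto (fun n => ∑ i ∈ Finset.range n, y i) atTop (𝓝 t) := by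
    have h3 : (fun n => ∑ i ∈ Finset.range n, y i) = fun n => t - grd z t n := by
      ext n
      rw [grd_eq_sub z t n]
      ring
    rw [h3]
    simpa using tendsto_const_nhds.sub (grd_tendsto hz hc ht)
  have : (∑' i, y i) = t := tendsto_nhds_unique h1 h2
  exact this ▸ hys.hasSum

lemma summable_indicator (hz : Summable fun n => |z n|) (A : Set ℕ) :
    Summable (A.indicator z) := by
  classical
  refine summable_of_abs_le hz fun n => ?_
  by_cases h : n ∈ A <;> simp [Set.indicator, h, abs_nonneg, le_abs_self]

lemma kakeya (hz : Summable fun n => |z n|) (hc : ∀ n, |z n| ≤ tailSum z n) :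
    achSet z = Icc (sN z 0) (sP z 0) := by
  ext a
  constructor
  · rintro ⟨A, hA⟩
    rw [show (fun n : A => z n) = (z ∘ (↑)) from rfl, hasSum_subtype_iff_indicator] at hA
    have ha : a = ∑' n, A.indicator z n := hA.tsum_eq.symm
    have hmin : ∀ n : ℕ, min (z (0 + n)) 0 ≤ A.indicator z n := by
      intro n
      classical
      by_cases h : n ∈ A <;> simp [Set.indicator, h, zero_add, min_le_right, min_le_left]
    have hmax : ∀ n : ℕ, A.indicator z n ≤ max (z (0 + n)) 0 := by
      intro n
      classical
      by_cases h : n ∈ A <;> simp [Set.indicator, h, zero_add, le_max_right, le_max_left]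
    constructor
    · rw [ha]
      exact Summable.tsum_le_tsum hmin (summable_minz hz 0) (summable_indicator hz A)
    · rw [ha]
      exact Summable.tsum_le_tsum hmax (summable_indicator hz A) (summable_maxz hz 0)
  · intro ha
    exact kakeya_surj hz hc ha

/-- Decomposition of a subsum into the head part (below `N`) and the shifted tail part. -/
lemma achSet_decomp (x : ℕ → ℝ) (hx : Summable fun n => |x n|) (N : ℕ) :
    achSet x = ⋃ F ∈ (Finset.range N).powerset,
      (fun r => (∑ i ∈ F, x i) + r) '' achSet (fun k => x (N + k)) := by
  classical
  set z : ℕ → ℝ := fun k => x (N + k) with hzdef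
  ext a
  simp only [Set.mem_iUnion, Set.mem_image, Finset.mem_powerset]
  constructor
  · rintro ⟨A, hA⟩
    rw [show (fun n : A => x n) = (x ∘ (↑)) from rfl, hasSum_subtype_iff_indicator] at hA
    set f := A.indicator x with hfdef
    have hf : Summable f := ⟨a, hA⟩
    have hkey : ∑ i ∈ Finset.range N, f i + ∑' i, f (i + N) = a := by
      rw [Summable.sum_add_tsum_nat_add N hf, hA.tsum_eq]
    set B : Set ℕ := {k | N + k ∈ A} with hBdef
    have hfz : ∀ i, f (i + N) = B.indicator z i := by
      intro i
      by_cases h : N + i ∈ A <;>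
        simp [hfdef, hBdef, hzdef, Set.indicator, h, add_comm i N]
    refine ⟨(Finset.range N).filter (· ∈ A), Finset.filter_subset _ _, ∑' i, B.indicator z i,
      ⟨B, ?_⟩, ?_⟩
    · rw [show (fun n : B => z n) = (z ∘ (↑)) from rfl, hasSum_subtype_iff_indicator]
      exact (summable_indicator (summable_shift hx N) B).hasSum
    · rw [← hkey]
      congr 1
      · rw [Finset.sum_filter]
        refine Finset.sum_congr rfl fun i _ => ?_
        by_cases h : i ∈ A <;> simp [hfdef, Set.indicator, h]
      · exact tsum_congr fun i => (hfz i).symm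
  · rintro ⟨F, hF, b, ⟨B, hB⟩, rfl⟩
    rw [show (fun n : B => z n) = (z ∘ (↑)) from rfl, hasSum_subtype_iff_indicator] at hB
    set A : Set ℕ := (↑F : Set ℕ) ∪ ((fun k => N + k) '' B) with hAdef
    refine ⟨A, ?_⟩
    rw [show (fun n : A => x n) = (x ∘ (↑)) from rfl, hasSum_subtype_iff_indicator]
    set f := A.indicator x with hfdef
    have hf : Summable f := summable_indicator hx A
    have hmemA : ∀ i, i < N → (i ∈ A ↔ i ∈ F) := by
      intro i hi
      constructor
      · rintro (h | ⟨k, hk, rfl⟩)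
        · exact h
        · exact absurd hi (by simp)
      · intro h; exact Or.inl h
    have hmemA' : ∀ k, (N + k ∈ A) ↔ k ∈ B := by
      intro k
      constructor
      · rintro (h | ⟨j, hj, hjk⟩)
        · exact absurd (Finset.mem_range.1 (hF h)) (by omega)
        · have : j = k := by simpa using hjk
          exact this ▸ hj
      · intro h; exact Or.inr ⟨k, h, rfl⟩
    have h1 : ∑ i ∈ Finset.range N, f i = ∑ i ∈ F, x i := by
      rw [show (F : Finset ℕ) = (Finset.range N).filter (· ∈ A) from ?_]
      · rw [Finset.sum_filter]
        refine Finset.sum_congr rfl fun i _ => ?_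
        by_cases h : i ∈ A <;> simp [hfdef, Set.indicator, h]
      · ext i
        simp only [Finset.mem_filter, Finset.mem_range]
        constructor
        · intro h
          exact ⟨Finset.mem_range.1 (hF h), (hmemA i (Finset.mem_range.1 (hF h))).2 h⟩
        · rintro ⟨h1, h2⟩
          exact (hmemA i h1).1 h2
    have h2 : ∑' i, f (i + N) = b := by
      rw [← hB.tsum_eq]
      refine tsum_congr fun i => ?_
      by_cases h : i ∈ B
      · have : N + i ∈ A := (hmemA' i).2 h
        simp [hfdef, hzdef, Set.indicator, h, this, add_comm i N]
      · have : N + i ∉ A := fun hh => h ((hmemA' i).1 hh)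
        simp [hfdef, hzdef, Set.indicator, h, this, add_comm i N]
    have := Summable.sum_add_tsum_nat_add N hf
    rw [h1, h2] at this
    exact this ▸ hf.hasSum

end AchAux

theorem achSet_finUnion_of_slow_decay (x : ℕ → ℝ) (hx : Summable fun n => |x n|)
    (hsmall : ∀ᶠ n in atTop, |x n| ≤ tailSum x n) :
    IsFinUnionClosedIntervals (achSet x) := by
  classical
  obtain ⟨N, hN⟩ := eventually_atTop.1 hsmall
  set z : ℕ → ℝ := fun k => x (N + k) with hzdef
  have hz : Summable fun k => |z k| := AchAux.summable_shift hx N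
  have hc : ∀ k, |z k| ≤ tailSum z k := by
    intro k
    have h1 : |z k| ≤ tailSum x (N + k) := hN (N + k) (Nat.le_add_right _ _)
    have h2 : tailSum z k = tailSum x (N + k) := by
      unfold tailSum
      exact tsum_congr fun i => by show |x (N + (k + 1 + i))| = |x (N + k + 1 + i)|; congr 2; omega
    rw [h2]; exact h1
  have hk := AchAux.kakeya hz hc
  have hd := AchAux.achSet_decomp x hx N
  refine ⟨(Finset.range N).powerset.image
    (fun F => ((∑ i ∈ F, x i) + AchAux.sN z 0, (∑ i ∈ F, x i) + AchAux.sP z 0)), ?_⟩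
  rw [hd]
  ext a
  simp only [Set.mem_iUnion, Finset.mem_image, Finset.mem_powerset, Set.mem_image, exists_prop]
  constructor
  · rintro ⟨F, hF, b, hb, rfl⟩
    rw [hk] at hb
    exact ⟨((∑ i ∈ F, x i) + AchAux.sN z 0, (∑ i ∈ F, x i) + AchAux.sP z 0),
      ⟨F, hF, rfl⟩, ⟨(add_le_add_iff_left _).2 hb.1, (add_le_add_iff_left _).2 hb.2⟩⟩
  · rintro ⟨p, ⟨F, hF, rfl⟩, hp⟩
    simp only [Set.mem_Icc] at hp
    refine ⟨F, hF, a - ∑ i ∈ F, x i, ?_, by ring⟩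
    rw [hk]
    exact ⟨by linarith [hp.1], by linarith [hp.2]⟩
end

section
/- The map E : ℓ¹ → H(ℝ) sending x to its achievement set E(x) is Lipschitz with constant 1 with respect to the ℓ¹ norm and the Hausdorff distance on nonempty compact subsets of ℝ. -/
open Set Filter Topology

lemma achSet_key (x y : ℕ → ℝ) (hx : Summable fun n => |x n|)
    (hy : Summable fun n => |y n|) (hd : Summable fun n => |x n - y n|)
    (a : ℝ) (ha : a ∈ achSet x) :
    ∃ b ∈ achSet y, dist a b ≤ ∑' n, |x n - y n| := by
  obtain ⟨A, hA⟩ := ha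
  have hxA : Summable (fun n : A => x n) := ⟨a, hA⟩
  have hyA : Summable (fun n : A => y n) := (hy.subtype A).of_abs
  refine ⟨∑' n : A, y n, ⟨A, hyA.hasSum⟩, ?_⟩
  have ha' : a = ∑' n : A, x n := hA.tsum_eq.symm
  rw [Real.dist_eq, ha', ← Summable.tsum_sub hxA hyA]
  calc |∑' n : A, (x n - y n)| ≤ ∑' n : A, |x n - y n| := by
        have := norm_tsum_le_tsum_norm (f := fun n : A => x n - y n) (hd.subtype A)
        simpa using this
    _ ≤ ∑' n, |x n - y n| :=
        Summable.tsum_le_tsum_of_inj Subtype.val Subtype.val_injective (fun c _ => abs_nonneg _)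
          (fun i => le_rfl) (hd.subtype A) hd

theorem achSet_lipschitz (x y : lp (fun _ : ℕ => ℝ) 1) :
    Metric.hausdorffDist (achSet fun n => x n) (achSet fun n => y n) ≤ ‖x - y‖ := by
  have hx : Summable fun n => |x n| := by
    have := (lp.memℓp x).summable (by norm_num); simpa using this
  have hy : Summable fun n => |y n| := by
    have := (lp.memℓp y).summable (by norm_num); simpa using this
  have hd : Summable fun n => |x n - y n| := by
    have := (lp.memℓp (x - y)).summable (p := 1) (by norm_num)
    simpa [lp.coeFn_sub, Pi.sub_apply] using this
  have hnorm : ‖x - y‖ = ∑' n, |x n - y n| := by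
    rw [lp.norm_eq_tsum_rpow (by norm_num)]
    simp [lp.coeFn_sub, Pi.sub_apply]
  rw [hnorm]
  refine Metric.hausdorffDist_le_of_mem_dist (tsum_nonneg fun n => abs_nonneg _) ?_ ?_
  · exact fun a ha => achSet_key _ _ hx hy hd a ha
  · intro b hb
    obtain ⟨a, ha, hab⟩ := achSet_key (fun n => y n) (fun n => x n) hy hx
      (by simpa [abs_sub_comm] using hd) b hb
    refine ⟨a, ha, ?_⟩
    exact hab.trans_eq (tsum_congr fun n => abs_sub_comm _ _)
end

section
/- Let r₁ < r₂ < ... < r_m be reals greater than 1, let β₁, ..., β_m be nonzero reals, let 0 < q < 1/2, and define x(n) = β₁ q^{n r₁} + ... + β_m q^{n r_m}. Then there exists n₀ such that |x(n)| > ∑_{i>n} |x(i)| for all n ≥ n₀. -/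
open Set Filter Topology

/-- Key abstract lemma: if `x n` is `L * a^n` up to an error `C * b^n` with
`0 < b < a < 1/2` and `L ≠ 0`, then eventually the tail sum of `|x|` is less than `|x n|`. -/
lemma fast_decay_aux (a b L C : ℝ) (ha0 : 0 < a) (ha : a < 1 / 2) (hb0 : 0 < b)
    (hba : b < a) (hL : L ≠ 0) (hC : 0 ≤ C) (x : ℕ → ℝ)
    (hx : ∀ n, |x n - L * a ^ n| ≤ C * b ^ n) :
    ∃ n₀ : ℕ, ∀ n ≥ n₀, (∑' i : ℕ, |x (n + 1 + i)|) < |x n| := by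
  have ha1 : a < 1 := by linarith
  have hb1 : b < 1 := by linarith
  have h1a : (0 : ℝ) < 1 - a := by linarith
  have h1b : (0 : ℝ) < 1 - b := by linarith
  have h2a : (0 : ℝ) < 1 - 2 * a := by linarith
  have hB : 0 < |L| := abs_pos.mpr hL
  have hC1 : (0 : ℝ) < C + 1 := by linarith
  -- upper bound on |x k|
  have hub : ∀ k, |x k| ≤ |L| * a ^ k + C * b ^ k := by
    intro k
    have h1 : |x k| ≤ |x k - L * a ^ k| + |L * a ^ k| := by
      have := abs_add_le (x k - L * a ^ k) (L * a ^ k); simpa using this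
    have h2 : |L * a ^ k| = |L| * a ^ k := by
      rw [abs_mul, abs_pow, abs_of_pos ha0]
    linarith [hx k]
  -- lower bound on |x n|
  have hlb : ∀ k, |L| * a ^ k - C * b ^ k ≤ |x k| := by
    intro k
    have h2 : |L * a ^ k| = |L| * a ^ k := by
      rw [abs_mul, abs_pow, abs_of_pos ha0]
    have h1 : |L * a ^ k| - |x k| ≤ |L * a ^ k - x k| := abs_sub_abs_le_abs_sub _ _
    rw [abs_sub_comm] at h1
    linarith [hx k]
  -- the epsilon
  set ε : ℝ := |L| * (1 - 2 * a) * (1 - b) / ((1 - a) * (C + 1)) with hε_def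
  have hε : 0 < ε := by positivity
  have htend : Tendsto (fun n : ℕ => (b / a) ^ n) atTop (nhds 0) :=
    tendsto_pow_atTop_nhds_zero_of_lt_one (div_nonneg hb0.le ha0.le) ((div_lt_one ha0).2 hba)
  have hev : ∀ᶠ n : ℕ in atTop, (b / a) ^ n < ε :=
    htend.eventually (gt_mem_nhds hε)
  obtain ⟨n₀, hn₀⟩ := eventually_atTop.1 hev
  refine ⟨n₀, fun n hn => ?_⟩
  have hPn := pow_pos ha0 n
  have hQn := pow_pos hb0 n
  -- key polynomial inequality
  have key : C * b ^ n * (1 - a) < |L| * a ^ n * (1 - 2 * a) * (1 - b) := by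
    have h := hn₀ n hn
    rw [div_pow, hε_def, div_lt_div_iff₀ hPn (by positivity)] at h
    nlinarith [mul_pos hQn h1a]
  -- geometric sum computations
  have geo : ∀ c : ℝ, 0 ≤ c → c < 1 → ∀ D : ℝ,
      Summable (fun i : ℕ => D * c ^ (n + 1 + i)) ∧
      (∑' i : ℕ, D * c ^ (n + 1 + i)) = D * c ^ (n + 1) * (1 - c)⁻¹ := by
    intro c hc0 hc1 D
    have heq : (fun i : ℕ => D * c ^ (n + 1 + i)) = fun i : ℕ => D * c ^ (n + 1) * c ^ i := by
      funext i; rw [pow_add]; ring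
    constructor
    · rw [heq]; exact (summable_geometric_of_lt_one hc0 hc1).mul_left _
    · rw [heq, tsum_mul_left, tsum_geometric_of_lt_one hc0 hc1]
  obtain ⟨hsa, hta⟩ := geo a ha0.le ha1 |L|
  obtain ⟨hsb, htb⟩ := geo b hb0.le hb1 C
  have hsum_g : Summable (fun i : ℕ => |L| * a ^ (n + 1 + i) + C * b ^ (n + 1 + i)) :=
    hsa.add hsb
  have hsumx : Summable (fun i : ℕ => |x (n + 1 + i)|) := by
    refine Summable.of_nonneg_of_le (fun i => abs_nonneg _) (fun i => hub (n + 1 + i)) hsum_g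
  have htail : (∑' i : ℕ, |x (n + 1 + i)|) ≤
      |L| * a ^ (n + 1) * (1 - a)⁻¹ + C * b ^ (n + 1) * (1 - b)⁻¹ := by
    calc (∑' i : ℕ, |x (n + 1 + i)|)
        ≤ ∑' i : ℕ, (|L| * a ^ (n + 1 + i) + C * b ^ (n + 1 + i)) :=
          Summable.tsum_le_tsum (fun i => hub (n + 1 + i)) hsumx hsum_g
      _ = |L| * a ^ (n + 1) * (1 - a)⁻¹ + C * b ^ (n + 1) * (1 - b)⁻¹ := by
          rw [Summable.tsum_add hsa hsb, hta, htb]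
  -- final arithmetic
  have hfin : |L| * a ^ (n + 1) * (1 - a)⁻¹ + C * b ^ (n + 1) * (1 - b)⁻¹ <
      |L| * a ^ n - C * b ^ n := by
    rw [show |L| * a ^ (n + 1) * (1 - a)⁻¹ = |L| * a ^ (n + 1) / (1 - a) from
        (div_eq_mul_inv _ _).symm,
      show C * b ^ (n + 1) * (1 - b)⁻¹ = C * b ^ (n + 1) / (1 - b) from
        (div_eq_mul_inv _ _).symm,
      div_add_div _ _ h1a.ne' h1b.ne', div_lt_iff₀ (mul_pos h1a h1b)]
    simp only [pow_succ]
    nlinarith [key]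
  calc (∑' i : ℕ, |x (n + 1 + i)|)
      ≤ |L| * a ^ (n + 1) * (1 - a)⁻¹ + C * b ^ (n + 1) * (1 - b)⁻¹ := htail
    _ < |L| * a ^ n - C * b ^ n := hfin
    _ ≤ |x n| := hlb n

theorem fast_decay_of_geometric_combination (m : ℕ) (hm : 0 < m) (r β : Fin m → ℝ)
    (hr : StrictMono r) (hr1 : ∀ i, 1 < r i) (hβ : ∀ i, β i ≠ 0)
    (q : ℝ) (hq0 : 0 < q) (hq : q < 1 / 2) :
    ∃ n₀ : ℕ, ∀ n ≥ n₀,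
      tailSum (fun n : ℕ => ∑ i, β i * q ^ ((n : ℝ) * r i)) n <
        |∑ i, β i * q ^ ((n : ℝ) * r i)| := by
  have hq1 : q < 1 := by linarith
  set c : Fin m → ℝ := fun i => q ^ (r i) with hc_def
  have hc_pos : ∀ i, 0 < c i := fun i => Real.rpow_pos_of_pos hq0 _
  have hc_eq : ∀ (i : Fin m) (n : ℕ), q ^ ((n : ℝ) * r i) = c i ^ n := by
    intro i n
    rw [mul_comm, Real.rpow_mul hq0.le, Real.rpow_natCast]
  have hc_anti : ∀ i j : Fin m, i < j → c j < c i := fun i j hij =>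
    Real.rpow_lt_rpow_of_exponent_gt hq0 hq1 (hr hij)
  set i0 : Fin m := ⟨0, hm⟩ with hi0_def
  have ha0 : 0 < c i0 := hc_pos i0
  have ha : c i0 < 1 / 2 := by
    have h1 : c i0 < q ^ (1 : ℝ) :=
      Real.rpow_lt_rpow_of_exponent_gt hq0 hq1 (hr1 i0)
    rw [Real.rpow_one] at h1; linarith
  simp only [tailSum, hc_eq]
  -- choose b, C according to whether m = 1 or m ≥ 2
  by_cases h1m : 1 < m
  · set i1 : Fin m := ⟨1, h1m⟩ with hi1_def
    have hba : c i1 < c i0 := hc_anti i0 i1 (by simp [hi0_def, hi1_def, Fin.lt_def])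
    refine fast_decay_aux (c i0) (c i1) (β i0) (∑ i, |β i|) ha0 ha (hc_pos i1) hba
      (hβ i0) (Finset.sum_nonneg fun i _ => abs_nonneg _) (fun n => ∑ i, β i * c i ^ n) ?_
    intro n
    have hsplit : (∑ i, β i * c i ^ n) - β i0 * c i0 ^ n =
        ∑ i ∈ Finset.univ.erase i0, β i * c i ^ n := by
      rw [← Finset.sum_erase_add Finset.univ _ (Finset.mem_univ i0)]; ring
    rw [hsplit]
    calc |∑ i ∈ Finset.univ.erase i0, β i * c i ^ n|
        ≤ ∑ i ∈ Finset.univ.erase i0, |β i * c i ^ n| :=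
          Finset.abs_sum_le_sum_abs _ _
      _ ≤ ∑ i ∈ Finset.univ.erase i0, |β i| * c i1 ^ n := by
          refine Finset.sum_le_sum fun i hi => ?_
          rw [abs_mul, abs_pow, abs_of_pos (hc_pos i)]
          refine mul_le_mul_of_nonneg_left ?_ (abs_nonneg _)
          refine pow_le_pow_left₀ (hc_pos i).le ?_ n
          have hge : i1 ≤ i := by
            have hi' := Finset.ne_of_mem_erase hi
            have h1 : (1 : ℕ) ≤ i.val := by
              by_contra hcon
              exact hi' (Fin.ext (by simp only [hi0_def]; omega))
            exact Fin.le_def.mpr h1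
          rcases eq_or_lt_of_le hge with h | h
          · exact le_of_eq (congrArg c h.symm)
          · exact (hc_anti i1 i h).le
      _ ≤ (∑ i, |β i|) * c i1 ^ n := by
          rw [← Finset.sum_mul]
          refine mul_le_mul_of_nonneg_right ?_ (pow_nonneg (hc_pos i1).le n)
          exact Finset.sum_le_sum_of_subset_of_nonneg (Finset.erase_subset _ _)
            (fun i _ _ => abs_nonneg _)
  · -- m = 1 case
    have hm1 : m = 1 := by omega
    have huniq : ∀ i : Fin m, i = i0 := by
      intro i; apply Fin.ext; have := i.isLt; omega
    refine fast_decay_aux (c i0) (c i0 / 2) (β i0) 0 ha0 ha (by positivity)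
      (by linarith) (hβ i0) le_rfl (fun n => ∑ i, β i * c i ^ n) ?_
    intro n
    have : (∑ i, β i * c i ^ n) = β i0 * c i0 ^ n := by
      rw [Finset.sum_eq_single i0 (fun b _ hb => absurd (huniq b) hb)
        (fun h => absurd (Finset.mem_univ i0) h)]
    show |(∑ i, β i * c i ^ n) - β i0 * c i0 ^ n| ≤ 0 * (c i0 / 2) ^ n
    rw [this]; simp
end

section
/- Let 1 < p₁ < p₂ < ... < p_m be reals and β₁, ..., β_m nonzero reals, and define x(n) = β₁/n^{p₁} + ... + β_m/n^{p_m}. Then there exists n₀ such that |x(n)| ≤ ∑_{i>n} |x(i)| for all n ≥ n₀. -/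
open Set Filter Topology

theorem slow_decay_of_power_combination (m : ℕ) (hm : 0 < m) (p β : Fin m → ℝ)
    (hp : StrictMono p) (hp1 : ∀ i, 1 < p i) (hβ : ∀ i, β i ≠ 0) :
    ∃ n₀ : ℕ, ∀ n ≥ n₀,
      |∑ i, β i / (n : ℝ) ^ (p i)| ≤
        tailSum (fun n : ℕ => ∑ i, β i / (n : ℝ) ^ (p i)) n := by
  set i0 : Fin m := ⟨0, hm⟩ with hi0
  set q := p i0 with hqdef
  have hq1 : 1 < q := hp1 i0
  have hq0 : 0 < q := by linarith
  set c := |β i0| with hcdef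
  have hc0 : 0 < c := abs_pos.2 (hβ i0)
  set x : ℕ → ℝ := fun n => ∑ i, β i / (n:ℝ) ^ (p i) with hxdef
  -- summability of |x|
  have hxs : Summable x := by
    apply summable_sum
    intro i _
    have : Summable (fun n : ℕ => ((n:ℝ) ^ (p i))⁻¹) :=
      Real.summable_nat_rpow_inv.mpr (hp1 i)
    simpa [div_eq_mul_inv] using this.mul_left (β i)
  have hxa : Summable (fun n => |x n|) := summable_abs_iff.mpr hxs
  -- limit of x n * n^q
  have hlim : Tendsto (fun n : ℕ => x n * (n:ℝ)^q) atTop (𝓝 (β i0)) := by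
    have h1 : ∀ i : Fin m, Tendsto (fun n : ℕ => β i * (n:ℝ)^(q - p i)) atTop
        (𝓝 (if i = i0 then β i0 else 0)) := by
      intro i
      rcases eq_or_ne i i0 with h | h
      · subst h
        simp only [if_pos rfl, sub_self]
        simpa [hqdef] using (tendsto_const_nhds : Tendsto (fun _ : ℕ => β i0) atTop (𝓝 (β i0)))
      · rw [if_neg h]
        have hi0lt : i0 < i := by
          refine Fin.lt_def.mpr ?_
          exact Nat.pos_of_ne_zero (fun h' => h (Fin.ext h'))
        have hneg : 0 < p i - q := sub_pos.mpr (hp hi0lt)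
        have h2 : Tendsto (fun n : ℕ => (n:ℝ) ^ (q - p i)) atTop (𝓝 0) := by
          have := (tendsto_rpow_neg_atTop hneg).comp tendsto_natCast_atTop_atTop
          simpa [neg_sub, Function.comp_def] using this
        simpa using h2.const_mul (β i)
    have hsum := tendsto_finset_sum Finset.univ (fun i _ => h1 i)
    have hval : (∑ i : Fin m, if i = i0 then β i0 else 0) = β i0 := by simp
    rw [hval] at hsum
    refine hsum.congr' ?_
    filter_upwards [eventually_ge_atTop 1] with n hn
    have hn0 : (0:ℝ) < (n:ℝ) := by exact_mod_cast hn
    rw [hxdef]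
    simp only
    rw [Finset.sum_mul]
    refine Finset.sum_congr rfl fun i _ => ?_
    rw [Real.rpow_sub hn0]
    field_simp
  -- eventually bounds
  have hev : ∀ᶠ n in atTop, |x n * (n:ℝ)^q - β i0| < c/2 := by
    have := Metric.tendsto_atTop.mp hlim (c/2) (by positivity)
    obtain ⟨N, hN⟩ := this
    filter_upwards [eventually_ge_atTop N] with n hn
    simpa [Real.dist_eq] using hN n hn
  -- ratio condition
  have hratio : ∀ᶠ n : ℕ in atTop, ((n:ℝ)+8)^q < 2 * (n:ℝ)^q := by
    have hb : Tendsto (fun n : ℕ => ((n:ℝ)+8)/n) atTop (𝓝 1) := by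
      have h8 : Tendsto (fun n : ℕ => 8/(n:ℝ)) atTop (𝓝 0) :=
        tendsto_const_nhds.div_atTop tendsto_natCast_atTop_atTop
      have := h8.const_add 1
      simp only [add_zero] at this
      refine this.congr' ?_
      filter_upwards [eventually_ge_atTop 1] with n hn
      have hn0 : (n:ℝ) ≠ 0 := by positivity
      field_simp
    have hc : ContinuousAt (fun z : ℝ => z ^ q) 1 :=
      Real.continuousAt_rpow_const 1 q (Or.inl one_ne_zero)
    have := (hc.tendsto.comp hb)
    rw [Real.one_rpow] at this
    have h2 : ∀ᶠ n : ℕ in atTop, (((n:ℝ)+8)/n)^q < 2 :=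
      this.eventually_lt_const (by norm_num)
    filter_upwards [h2, eventually_ge_atTop 1] with n hlt hn
    have hn0 : (0:ℝ) < (n:ℝ) := by exact_mod_cast hn
    have hnq : (0:ℝ) < (n:ℝ)^q := Real.rpow_pos_of_pos hn0 q
    rw [Real.div_rpow (by positivity) hn0.le, div_lt_iff₀ hnq] at hlt
    linarith
  obtain ⟨N, hN⟩ := ((hev.and hratio).and (eventually_ge_atTop 1)).exists_forall_of_atTop
  have key : ∀ k, N ≤ k → c/2 ≤ |x k| * (k:ℝ)^q ∧ |x k| * (k:ℝ)^q ≤ 2*c := by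
    intro k hk
    obtain ⟨⟨he, _⟩, hk1⟩ := hN k hk
    have habs : |x k * (k:ℝ)^q| = |x k| * (k:ℝ)^q := by
      rw [abs_mul, abs_of_nonneg (Real.rpow_nonneg (Nat.cast_nonneg k) q)]
    have h1 : |β i0| - c/2 ≤ |x k * (k:ℝ)^q| := by
      have h := abs_sub_abs_le_abs_sub (β i0) (x k * (k:ℝ)^q)
      rw [abs_sub_comm] at h
      linarith [abs_lt.mp he]
    have h2 : |x k * (k:ℝ)^q| ≤ |β i0| + c/2 := by
      have h := abs_sub_abs_le_abs_sub (x k * (k:ℝ)^q) (β i0)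
      linarith [abs_lt.mp he]
    rw [habs] at h1 h2
    rw [← hcdef] at h1 h2
    exact ⟨by linarith, by linarith⟩
  refine ⟨max N 1, fun n hn => ?_⟩
  have hnN : N ≤ n := le_trans (le_max_left _ _) hn
  obtain ⟨⟨hev_n, hrat_n⟩, hn1⟩ := hN n hnN
  have hnpos : (0:ℝ) < (n:ℝ) := by exact_mod_cast hn1
  have hnq : (0:ℝ) < (n:ℝ)^q := Real.rpow_pos_of_pos hnpos q
  have hn8q : (0:ℝ) < ((n:ℝ)+8)^q := Real.rpow_pos_of_pos (by linarith) q
  have hup : |x n| ≤ 2*c/(n:ℝ)^q := by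
    rw [le_div_iff₀ hnq]
    exact (key n hnN).2
  have hstep1 : 2*c/(n:ℝ)^q ≤ 4*c/((n:ℝ)+8)^q := by
    rw [div_le_div_iff₀ hnq hn8q]
    nlinarith [hc0.le]
  have hlow : ∀ j ∈ Finset.range 8, (c/2)/((n:ℝ)+8)^q ≤ |x (n+1+j)| := by
    intro j hj
    have hkN : N ≤ n+1+j := by omega
    have h1 := (key _ hkN).1
    have hle : ((n+1+j:ℕ):ℝ)^q ≤ ((n:ℝ)+8)^q := by
      apply Real.rpow_le_rpow (Nat.cast_nonneg _) _ hq0.le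
      have hj7 : (j:ℝ) ≤ 7 := by
        exact_mod_cast Nat.lt_succ_iff.mp (Finset.mem_range.mp hj)
      push_cast
      linarith
    rw [div_le_iff₀ hn8q]
    calc c/2 ≤ |x (n+1+j)| * ((n+1+j:ℕ):ℝ)^q := h1
      _ ≤ |x (n+1+j)| * ((n:ℝ)+8)^q :=
          mul_le_mul_of_nonneg_left hle (abs_nonneg _)
  have hsum8 : 4*c/((n:ℝ)+8)^q ≤ ∑ j ∈ Finset.range 8, |x (n+1+j)| := by
    have h := Finset.sum_le_sum hlow
    have heq : ∑ _j ∈ Finset.range 8, (c/2)/((n:ℝ)+8)^q = 4*c/((n:ℝ)+8)^q := by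
      rw [Finset.sum_const, Finset.card_range]
      push_cast
      ring
    linarith [heq ▸ h]
  have htail : ∑ j ∈ Finset.range 8, |x (n+1+j)| ≤ tailSum x n := by
    exact Summable.sum_le_tsum _ (fun i _ => abs_nonneg _)
      (hxa.comp_injective (add_right_injective (n+1)))
  calc |x n| ≤ 2*c/(n:ℝ)^q := hup
    _ ≤ 4*c/((n:ℝ)+8)^q := hstep1
    _ ≤ ∑ j ∈ Finset.range 8, |x (n+1+j)| := hsum8
    _ ≤ tailSum x n := htail
end

section
/- Fix 0 < q < 1/2 and a set {r_α : α < 𝔠} of reals greater than 1 that is linearly independent over ℚ. Then the sequences x_α(n) = q^{r_α n} freely generate a subalgebra of ℓ¹ (under pointwise operations) every nonzero element of which has achievement set homeomorphic to the Cantor set. In particular, the set 𝒞 = {x ∈ ℓ¹ \ c₀₀ : E(x) is homeomorphic to the Cantor set} is strongly 𝔠-algebrable. -/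
open Set Filter Topology

/-- Sequences which are not eventually zero. -/
def NotEventuallyZero (x : ℕ → ℝ) : Prop := ∀ N : ℕ, ∃ n ≥ N, x n ≠ 0

/-- The set `𝒞` of absolutely summable, not eventually zero sequences whose
achievement set is homeomorphic to the Cantor set. -/
def mathcalC : Set (ℕ → ℝ) :=
  {x | (Summable fun n => |x n|) ∧ NotEventuallyZero x ∧ CantorLike (achSet x)}

/-- `M` is strongly `𝔠`-algebrable in the algebra `ℕ → ℝ` (pointwise operations):
`M ∪ {0}` contains a free commutative algebra on continuum many generators; freeness
is expressed by the standard criterion that every nonzero polynomial without constant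
term, evaluated at the generators, lands in `M` (note `0 ∉ M` for the sets considered,
so such evaluations are nonzero and the generators are free). -/
def StronglyContinuumAlgebrable (M : Set (ℕ → ℝ)) : Prop :=
  ∃ (ι : Type) (y : ι → ℕ → ℝ), Cardinal.mk ι = Cardinal.continuum ∧
    ∀ P : MvPolynomial ι ℝ, P ≠ 0 → MvPolynomial.constantCoeff P = 0 →
      MvPolynomial.aeval y P ∈ M


open Set Filter Topology

namespace CantorAux

structure Good (T : Set ℝ) : Prop where
  ne : T.Nonempty
  cpt : IsCompact T
  pp : Preperfect T
  int : interior T = ∅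

theorem Good.sInf_mem {T : Set ℝ} (h : Good T) : sInf T ∈ T :=
  h.cpt.sInf_mem h.ne

theorem Good.sSup_mem {T : Set ℝ} (h : Good T) : sSup T ∈ T :=
  h.cpt.sSup_mem h.ne

theorem Good.sInf_lt_sSup {T : Set ℝ} (h : Good T) : sInf T < sSup T := by
  rcases lt_or_eq_of_le (csInf_le_csSup h.ne h.cpt.bddBelow h.cpt.bddAbove) with hlt | heq
  · exact hlt
  · exfalso
    have hsub : T = {sInf T} := by
      apply Set.eq_singleton_iff_unique_mem.mpr
      refine ⟨h.sInf_mem, fun y hy => le_antisymm ?_ ?_⟩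
      · calc y ≤ sSup T := le_csSup h.cpt.bddAbove hy
          _ = sInf T := heq.symm
      · exact csInf_le h.cpt.bddBelow hy
    have hacc : AccPt (sInf T) (𝓟 T) := h.pp _ h.sInf_mem
    rw [accPt_iff_nhds] at hacc
    obtain ⟨y, hy, hne⟩ := hacc univ univ_mem
    rw [hsub] at hy
    exact hne (by simpa using hy.2)

def CutProp (T : Set ℝ) (c : ℝ) : Prop :=
  c ∉ T ∧ (T ∩ Iio c).Nonempty ∧ (T ∩ Ioi c).Nonempty ∧
    c - sInf T ≤ 3/4 * (sSup T - sInf T) ∧ sSup T - c ≤ 3/4 * (sSup T - sInf T)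

theorem exists_cut {T : Set ℝ} (h : Good T) : ∃ c, CutProp T c := by
  set a := sInf T
  set b := sSup T
  have hd : 0 < b - a := sub_pos.mpr h.sInf_lt_sSup
  have hIoo : ¬ (Ioo (a + (b-a)/4) (a + 3*(b-a)/4) ⊆ T) := by
    intro hsub
    have : Ioo (a + (b-a)/4) (a + 3*(b-a)/4) ⊆ interior T :=
      (isOpen_Ioo).subset_interior_iff.mpr hsub
    rw [h.int, subset_empty_iff, Ioo_eq_empty_iff] at this
    nlinarith
  obtain ⟨c, hcI, hcT⟩ := not_subset.mp hIoo
  obtain ⟨hc1, hc2⟩ := hcI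
  refine ⟨c, hcT, ⟨a, h.sInf_mem, ?_⟩, ⟨b, h.sSup_mem, ?_⟩, by nlinarith, by nlinarith⟩
  · simp only [mem_Iio]; nlinarith
  · simp only [mem_Ioi]; nlinarith

open Classical in
noncomputable def cut (T : Set ℝ) : ℝ :=
  if h : ∃ c, CutProp T c then h.choose else 0

theorem cut_spec {T : Set ℝ} (h : Good T) : CutProp T (cut T) := by
  rw [cut]
  rw [dif_pos (exists_cut h)]
  exact (exists_cut h).choose_spec

noncomputable def piece (T : Set ℝ) (b : Bool) : Set ℝ :=
  T ∩ (if b then Ioi (cut T) else Iio (cut T))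

theorem piece_subset {T : Set ℝ} {b : Bool} : piece T b ⊆ T := inter_subset_left

theorem piece_disjoint {T : Set ℝ} {x : ℝ} (hf : x ∈ piece T false) (ht : x ∈ piece T true) :
    False := by
  simp only [piece, if_true, if_false, mem_inter_iff, mem_Iio, mem_Ioi] at hf ht
  exact absurd (hf.2.trans ht.2) (lt_irrefl x)

theorem piece_union {T : Set ℝ} (h : Good T) :
    T ⊆ piece T false ∪ piece T true := by
  intro x hx
  rcases lt_trichotomy x (cut T) with hlt | heq | hgt
  · exact Or.inl ⟨hx, by simpa using hlt⟩
  · exact absurd (heq ▸ hx) (cut_spec h).1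
  · exact Or.inr ⟨hx, by simpa using hgt⟩

theorem good_piece {T : Set ℝ} (h : Good T) (b : Bool) : Good (piece T b) := by
  obtain ⟨hcT, hne0, hne1, _, _⟩ := cut_spec h
  constructor
  · cases b
    · exact hne0
    · exact hne1
  · have : piece T b = T ∩ (if b then Ici (cut T) else Iic (cut T)) := by
      ext x
      cases b
      · show x ∈ T ∩ Iio (cut T) ↔ x ∈ T ∩ Iic (cut T)
        simp only [mem_inter_iff, mem_Iio, mem_Iic]
        constructor <;> rintro ⟨hx, hx2⟩ <;> refine ⟨hx, ?_⟩
        · exact le_of_lt hx2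
        · exact lt_of_le_of_ne hx2 (fun hh => hcT (hh ▸ hx))
      · show x ∈ T ∩ Ioi (cut T) ↔ x ∈ T ∩ Ici (cut T)
        simp only [mem_inter_iff, mem_Ioi, mem_Ici]
        constructor <;> rintro ⟨hx, hx2⟩ <;> refine ⟨hx, ?_⟩
        · exact le_of_lt hx2
        · exact lt_of_le_of_ne' hx2 (fun hh => hcT (hh ▸ hx))
    rw [this]
    apply h.cpt.inter_right
    cases b
    · exact isClosed_Iic
    · exact isClosed_Ici
  · have : piece T b = (if b then Ioi (cut T) else Iio (cut T)) ∩ T := inter_comm _ _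
    rw [this]
    apply h.pp.open_inter
    cases b
    · exact isOpen_Iio
    · exact isOpen_Ioi
  · have := interior_mono (piece_subset (T := T) (b := b))
    rw [h.int, subset_empty_iff] at this
    exact this

theorem piece_width {T : Set ℝ} (h : Good T) (b : Bool) :
    sSup (piece T b) - sInf (piece T b) ≤ 3/4 * (sSup T - sInf T) := by
  obtain ⟨hcT, hne0, hne1, hb1, hb2⟩ := cut_spec h
  have hg := good_piece h b
  have h1 : sSup (piece T b) ∈ piece T b := hg.sSup_mem
  have h2 : sInf (piece T b) ∈ piece T b := hg.sInf_mem
  have hsub : piece T b ⊆ T := piece_subset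
  have hub : sSup (piece T b) ≤ sSup T := le_csSup h.cpt.bddAbove (hsub h1)
  have hlb : sInf T ≤ sInf (piece T b) := csInf_le h.cpt.bddBelow (hsub h2)
  cases b
  · have : sSup (piece T false) < cut T := by
      have := h1.2; simpa using this
    linarith
  · have : cut T < sInf (piece T true) := by
      have := h2.2; simpa using this
    linarith



noncomputable def scheme (T : Set ℝ) : List Bool → Set ℝ
  | [] => T
  | b :: l => scheme (piece T b) l

theorem scheme_nil (T : Set ℝ) : scheme T [] = T := rfl

theorem scheme_cons (T : Set ℝ) (b : Bool) (l : List Bool) :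
    scheme T (b :: l) = scheme (piece T b) l := rfl

theorem good_scheme {T : Set ℝ} (h : Good T) (l : List Bool) : Good (scheme T l) := by
  induction l generalizing T with
  | nil => exact h
  | cons b l ih => exact ih (good_piece h b)

theorem scheme_append (T : Set ℝ) (l : List Bool) (b : Bool) :
    scheme T (l ++ [b]) = piece (scheme T l) b := by
  induction l generalizing T with
  | nil => rfl
  | cons a l ih => simp only [List.cons_append, scheme_cons, ih]

theorem scheme_width {T : Set ℝ} (h : Good T) (l : List Bool) :
    sSup (scheme T l) - sInf (scheme T l) ≤ (3/4 : ℝ) ^ l.length * (sSup T - sInf T) := by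
  induction l generalizing T with
  | nil => simp [scheme_nil]
  | cons b l ih =>
    have h1 := ih (good_piece h b)
    have h2 := piece_width h b
    have h3 : (0:ℝ) ≤ (3/4 : ℝ) ^ l.length := by positivity
    calc sSup (scheme T (b :: l)) - sInf (scheme T (b :: l))
        ≤ (3/4 : ℝ) ^ l.length * (sSup (piece T b) - sInf (piece T b)) := h1
      _ ≤ (3/4 : ℝ) ^ l.length * (3/4 * (sSup T - sInf T)) := by
          exact mul_le_mul_of_nonneg_left h2 h3
      _ = (3/4 : ℝ) ^ (b :: l).length * (sSup T - sInf T) := by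
          rw [List.length_cons, pow_succ]; ring

theorem dist_le_of_mem_scheme {T : Set ℝ} (h : Good T) (l : List Bool) {x y : ℝ}
    (hx : x ∈ scheme T l) (hy : y ∈ scheme T l) :
    |x - y| ≤ (3/4 : ℝ) ^ l.length * (sSup T - sInf T) := by
  have hg := good_scheme h l
  have hx1 : x ≤ sSup (scheme T l) := le_csSup hg.cpt.bddAbove hx
  have hx2 : sInf (scheme T l) ≤ x := csInf_le hg.cpt.bddBelow hx
  have hy1 : y ≤ sSup (scheme T l) := le_csSup hg.cpt.bddAbove hy
  have hy2 : sInf (scheme T l) ≤ y := csInf_le hg.cpt.bddBelow hy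
  have := scheme_width h l
  rw [abs_sub_le_iff]
  constructor <;> linarith

/-- the first `n` values of `χ` as a list -/
def seg (χ : ℕ → Bool) : ℕ → List Bool
  | 0 => []
  | n + 1 => seg χ n ++ [χ n]

theorem seg_length (χ : ℕ → Bool) (n : ℕ) : (seg χ n).length = n := by
  induction n with
  | zero => rfl
  | succ n ih => simp [seg, ih]

theorem seg_congr {χ ψ : ℕ → Bool} {n : ℕ} (h : ∀ i < n, χ i = ψ i) :
    seg χ n = seg ψ n := by
  induction n with
  | zero => rfl
  | succ n ih =>
    simp only [seg]
    rw [ih (fun i hi => h i (Nat.lt_succ_of_lt hi)), h n (Nat.lt_succ_self n)]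

section Fixed

variable {S : Set ℝ} (hS : Good S)

theorem scheme_seg_succ (χ : ℕ → Bool) (n : ℕ) :
    scheme S (seg χ (n + 1)) = piece (scheme S (seg χ n)) (χ n) := by
  rw [seg, scheme_append]

theorem scheme_seg_antitone (χ : ℕ → Bool) {m n : ℕ} (h : m ≤ n) :
    scheme S (seg χ n) ⊆ scheme S (seg χ m) := by
  induction n with
  | zero => simpa [Nat.le_zero.mp h] using subset_rfl
  | succ n ih =>
    rcases Nat.lt_or_ge m (n+1) with hlt | hge
    · have h1 : scheme S (seg χ (n+1)) ⊆ scheme S (seg χ n) := by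
        rw [scheme_seg_succ]; exact piece_subset
      exact h1.trans (ih (Nat.lt_succ_iff.mp hlt))
    · have : m = n + 1 := le_antisymm h hge
      subst this; exact subset_rfl

include hS in
theorem iInter_nonempty (χ : ℕ → Bool) : (⋂ n, scheme S (seg χ n)).Nonempty := by
  apply IsCompact.nonempty_iInter_of_sequence_nonempty_isCompact_isClosed
  · intro n; rw [scheme_seg_succ]; exact piece_subset
  · intro n; exact (good_scheme hS _).ne
  · exact (good_scheme hS _).cpt
  · intro n; exact (good_scheme hS _).cpt.isClosed

include hS in
theorem iInter_subsingleton (χ : ℕ → Bool) {x y : ℝ}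
    (hx : x ∈ ⋂ n, scheme S (seg χ n)) (hy : y ∈ ⋂ n, scheme S (seg χ n)) : x = y := by
  have key : ∀ n : ℕ, |x - y| ≤ (3/4 : ℝ) ^ n * (sSup S - sInf S) := by
    intro n
    have := dist_le_of_mem_scheme hS (seg χ n) (mem_iInter.mp hx n) (mem_iInter.mp hy n)
    rwa [seg_length] at this
  have hlim : Tendsto (fun n : ℕ => (3/4 : ℝ) ^ n * (sSup S - sInf S)) atTop (𝓝 0) := by
    simpa using (tendsto_pow_atTop_nhds_zero_of_lt_one (by norm_num : (0:ℝ) ≤ 3/4)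
      (by norm_num : (3/4 : ℝ) < 1)).mul_const (sSup S - sInf S)
  have : |x - y| ≤ 0 := ge_of_tendsto' hlim key
  have := abs_nonneg (x - y)
  have : |x - y| = 0 := le_antisymm ‹|x - y| ≤ 0› this
  linarith [abs_eq_zero.mp this, sub_eq_zero.mp (abs_eq_zero.mp this)]

/-- the point encoded by `χ` -/
noncomputable def pt (S : Set ℝ) (χ : ℕ → Bool) : ℝ := sSup (⋂ n, scheme S (seg χ n))

include hS in
theorem pt_mem (χ : ℕ → Bool) : pt S χ ∈ ⋂ n, scheme S (seg χ n) := by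
  have hcl : IsClosed (⋂ n, scheme S (seg χ n)) :=
    isClosed_iInter (fun n => (good_scheme hS _).cpt.isClosed)
  have hcpt : IsCompact (⋂ n, scheme S (seg χ n)) :=
    (good_scheme hS (seg χ 0)).cpt.of_isClosed_subset hcl (iInter_subset _ 0)
  exact hcpt.sSup_mem (iInter_nonempty hS χ)

include hS in
theorem pt_mem_S (χ : ℕ → Bool) : pt S χ ∈ S := by
  have := mem_iInter.mp (pt_mem hS χ) 0
  simpa [seg, scheme_nil] using this

include hS in
theorem pt_injective : Function.Injective (pt S) := by
  intro χ ψ hpt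
  by_contra hne
  have hex : ∃ n, χ n ≠ ψ n := by
    by_contra hh
    push_neg at hh
    exact hne (funext hh)
  classical
  let n := Nat.find hex
  have hn : χ n ≠ ψ n := Nat.find_spec hex
  have hmin : ∀ i < n, χ i = ψ i := fun i hi => by
    by_contra hc; exact Nat.find_min hex hi hc
  have hseg : seg χ n = seg ψ n := seg_congr hmin
  have h1 : pt S χ ∈ piece (scheme S (seg χ n)) (χ n) := by
    have := mem_iInter.mp (pt_mem hS χ) (n+1)
    rwa [scheme_seg_succ] at this
  have h2 : pt S ψ ∈ piece (scheme S (seg χ n)) (ψ n) := by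
    have := mem_iInter.mp (pt_mem hS ψ) (n+1)
    rw [scheme_seg_succ, ← hseg] at this
    exact this
  rw [hpt] at h1
  cases hb : χ n <;> cases hb' : ψ n
  · exact hn (hb.trans hb'.symm)
  · rw [hb] at h1; rw [hb'] at h2; exact piece_disjoint h1 h2
  · rw [hb] at h1; rw [hb'] at h2; exact piece_disjoint h2 h1
  · exact hn (hb.trans hb'.symm)

end Fixed
section Fixed2

variable {S : Set ℝ} (hS : Good S)

include hS in
theorem pt_continuous : Continuous (pt S) := by
  rw [continuous_iff_continuousAt]
  intro χ
  rw [ContinuousAt, Metric.tendsto_nhds]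
  intro ε hε
  obtain ⟨n, hn⟩ : ∃ n : ℕ, (3/4 : ℝ) ^ n * (sSup S - sInf S) < ε := by
    have hlim : Tendsto (fun n : ℕ => (3/4 : ℝ) ^ n * (sSup S - sInf S)) atTop (𝓝 0) := by
      simpa using (tendsto_pow_atTop_nhds_zero_of_lt_one (by norm_num : (0:ℝ) ≤ 3/4)
        (by norm_num : (3/4 : ℝ) < 1)).mul_const (sSup S - sInf S)
    have := hlim.eventually (eventually_lt_nhds hε)
    exact this.exists
  have hev : ∀ᶠ ψ in 𝓝 χ, ∀ i ∈ Finset.range n, ψ i = χ i := by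
    rw [Finset.eventually_all]
    intro i _
    have : Continuous (fun ψ : ℕ → Bool => ψ i) := continuous_apply i
    have hopen : IsOpen {ψ : ℕ → Bool | ψ i = χ i} := by
      have : {ψ : ℕ → Bool | ψ i = χ i} = (fun ψ : ℕ → Bool => ψ i) ⁻¹' {χ i} := rfl
      rw [this]
      exact (isOpen_discrete _).preimage (continuous_apply i)
    exact hopen.mem_nhds rfl
  filter_upwards [hev] with ψ hψ
  have hseg : seg ψ n = seg χ n :=
    seg_congr (fun i hi => hψ i (Finset.mem_range.mpr hi))
  have h1 : pt S ψ ∈ scheme S (seg χ n) := by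
    have := mem_iInter.mp (pt_mem hS ψ) n
    rwa [hseg] at this
  have h2 : pt S χ ∈ scheme S (seg χ n) := mem_iInter.mp (pt_mem hS χ) n
  have := dist_le_of_mem_scheme hS (seg χ n) h1 h2
  rw [seg_length] at this
  rw [Real.dist_eq]
  exact lt_of_le_of_lt this hn

section Surj

variable (S)
variable (a : ℝ)

open Classical in
/-- next bit choice for the point `a` -/
noncomputable def nextBit (l : List Bool) : Bool :=
  if a ∈ piece (scheme S l) false then false else true

/-- the finite trail of bits leading to `a` -/
noncomputable def trail : ℕ → List Bool
  | 0 => []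
  | n + 1 => trail n ++ [nextBit S a (trail n)]

/-- infinite bit sequence encoding `a` -/
noncomputable def code : ℕ → Bool := fun n => nextBit S a (trail S a n)

end Surj

theorem seg_code (a : ℝ) (n : ℕ) : seg (code S a) n = trail S a n := by
  induction n with
  | zero => rfl
  | succ n ih => simp only [seg, trail, ih, code]

include hS in
theorem mem_scheme_trail {a : ℝ} (ha : a ∈ S) (n : ℕ) : a ∈ scheme S (trail S a n) := by
  induction n with
  | zero => simpa [trail, scheme_nil] using ha
  | succ n ih =>
    rw [trail, scheme_append]
    rcases piece_union (good_scheme hS (trail S a n)) ih with h0 | h1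
    · rw [nextBit, if_pos h0]; exact h0
    · by_cases hc : a ∈ piece (scheme S (trail S a n)) false
      · rw [nextBit, if_pos hc]; exact hc
      · rw [nextBit, if_neg hc]; exact h1

include hS in
theorem pt_surjective_on {a : ℝ} (ha : a ∈ S) : pt S (code S a) = a := by
  have hmem : a ∈ ⋂ n, scheme S (seg (code S a) n) := by
    rw [mem_iInter]
    intro n
    rw [seg_code]
    exact mem_scheme_trail hS ha n
  exact iInter_subsingleton hS (code S a) (pt_mem hS (code S a)) hmem

include hS in
theorem cantorLike_of_good : Nonempty (S ≃ₜ (ℕ → Bool)) := by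
  have hbij : Function.Bijective (fun χ : ℕ → Bool => (⟨pt S χ, pt_mem_S hS χ⟩ : S)) := by
    constructor
    · intro χ ψ hh
      exact pt_injective hS (congrArg Subtype.val hh)
    · rintro ⟨a, ha⟩
      exact ⟨code S a, Subtype.ext (pt_surjective_on hS ha)⟩
  let e : (ℕ → Bool) ≃ S := Equiv.ofBijective _ hbij
  have hcont : Continuous e := by
    apply Continuous.subtype_mk
    exact pt_continuous hS
  exact ⟨(hcont.homeoOfEquivCompactToT2 (f := e)).symm⟩

end Fixed2

end CantorAux

open MeasureTheory

namespace CantorAux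

variable (x : ℕ → ℝ)

/-- subsum function on Cantor space -/
noncomputable def Phi (χ : ℕ → Bool) : ℝ := ∑' n, if χ n then x n else 0

variable {x} {K t₁ : ℝ} (hK0 : 0 ≤ K) (ht0 : 0 < t₁) (ht : t₁ < 1/2)
  (hb : ∀ n, |x n| ≤ K * t₁ ^ n)

include hK0 ht0 ht hb

theorem habs : Summable fun n => |x n| := by
  apply Summable.of_nonneg_of_le (fun n => abs_nonneg _) hb
  exact (summable_geometric_of_lt_one ht0.le (by linarith)).mul_left K

theorem hx_sum : Summable x := by
  have := habs hK0 ht0 ht hb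
  exact this.of_abs

theorem hg_sum (χ : ℕ → Bool) : Summable (fun n => if χ n then x n else 0) := by
  apply Summable.of_norm_bounded (habs hK0 ht0 ht hb)
  intro n
  rw [Real.norm_eq_abs]
  by_cases h : χ n <;> simp [h, abs_nonneg]

theorem achSet_eq_range : achSet x = Set.range (Phi x) := by
  classical
  ext a
  constructor
  · rintro ⟨A, hA⟩
    refine ⟨fun n => if n ∈ A then true else false, ?_⟩
    have h1 : HasSum (A.indicator x) a := hasSum_subtype_iff_indicator.mp hA
    have h2 : (fun n => if (if n ∈ A then true else false) then x n else 0) = A.indicator x := by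
      funext n
      by_cases h : n ∈ A <;> simp [h, Set.indicator_apply]
    rw [Phi, h2]
    exact h1.tsum_eq
  · rintro ⟨χ, rfl⟩
    refine ⟨{n | χ n = true}, ?_⟩
    have h2 : ({n | χ n = true}).indicator x = (fun n => if χ n then x n else 0) := by
      funext n
      by_cases h : χ n <;> simp [Set.indicator_apply, h]
    have h3 : HasSum (({n | χ n = true}).indicator x) (Phi x χ) := by
      rw [h2]; exact (hg_sum hK0 ht0 ht hb χ).hasSum
    exact hasSum_subtype_iff_indicator.mpr h3

theorem continuous_Phi : Continuous (Phi x) := by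
  apply continuous_tsum (u := fun n => |x n|)
  · intro n
    have h1 : Continuous (fun b : Bool => if b then x n else 0) := continuous_of_discreteTopology
    exact h1.comp (continuous_apply n)
  · exact habs hK0 ht0 ht hb
  · intro n χ
    rw [Real.norm_eq_abs]
    by_cases h : χ n <;> simp [h, abs_nonneg]

theorem achSet_compact : IsCompact (achSet x) := by
  rw [achSet_eq_range hK0 ht0 ht hb]
  exact isCompact_range (continuous_Phi hK0 ht0 ht hb)

omit hK0 ht0 ht hb in
theorem achSet_zero_mem : (0:ℝ) ∈ achSet x :=
  ⟨∅, hasSum_empty⟩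

theorem Phi_update (χ : ℕ → Bool) (m : ℕ) (b : Bool) :
    Phi x (Function.update χ m b) =
      Phi x χ + ((if b then x m else 0) - (if χ m then x m else 0)) := by
  classical
  have h1 : Summable (fun n => if Function.update χ m b n then x n else 0) :=
    hg_sum hK0 ht0 ht hb _
  have h2 : Summable (fun n => if χ n then x n else 0) := hg_sum hK0 ht0 ht hb χ
  have key : Phi x (Function.update χ m b) - Phi x χ
      = ((if b then x m else 0) - (if χ m then x m else 0)) := by
    rw [Phi, Phi, ← Summable.tsum_sub h1 h2]
    rw [tsum_eq_single m]
    · rw [Function.update_self]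
    · intro n hn
      rw [Function.update_of_ne hn]
      ring
  linarith [key]
theorem achSet_preperfect {N : ℕ} (hN : ∀ n ≥ N, x n ≠ 0) : Preperfect (achSet x) := by
  intro a ha
  rw [accPt_iff_nhds]
  intro U hU
  obtain ⟨ε, hε, hball⟩ := Metric.mem_nhds_iff.mp hU
  rw [achSet_eq_range hK0 ht0 ht hb] at ha
  obtain ⟨χ, rfl⟩ := ha
  -- find m ≥ N with K * t₁^m < ε
  obtain ⟨m, hmN, hmε⟩ : ∃ m ≥ N, K * t₁ ^ m < ε := by
    have hlim : Tendsto (fun n : ℕ => K * t₁ ^ n) atTop (𝓝 0) := by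
      simpa using (tendsto_pow_atTop_nhds_zero_of_lt_one ht0.le (by linarith)).const_mul K
    have := (hlim.eventually (eventually_lt_nhds hε)).and (eventually_ge_atTop N)
    obtain ⟨m, h1, h2⟩ := this.exists
    exact ⟨m, h2, h1⟩
  set y := Phi x (Function.update χ m (!χ m)) with hy
  have hdiff : y - Phi x χ = (if (!χ m) then x m else 0) - (if χ m then x m else 0) := by
    rw [hy, Phi_update hK0 ht0 ht hb]; ring
  have habsdiff : |y - Phi x χ| = |x m| := by
    rw [hdiff]
    cases hc : χ m <;> simp [hc, abs_neg]
  have hxm : x m ≠ 0 := hN m hmN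
  refine ⟨y, ⟨?_, ?_⟩, ?_⟩
  · apply hball
    rw [Metric.mem_ball, Real.dist_eq, habsdiff]
    exact lt_of_le_of_lt (hb m) hmε
  · rw [achSet_eq_range hK0 ht0 ht hb]
    exact ⟨_, rfl⟩
  · intro hcontra
    rw [hcontra] at habsdiff
    simp at habsdiff
    exact hxm (abs_eq_zero.mp habsdiff.symm)

theorem tailSum_le (n : ℕ) : tailSum x n ≤ K * t₁ ^ (n+1) / (1 - t₁) := by
  have hsum1 : Summable (fun i => |x (n + 1 + i)|) :=
    (habs hK0 ht0 ht hb).comp_injective (add_right_injective (n+1))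
  have hsum2 : Summable (fun i : ℕ => K * t₁ ^ (n + 1 + i)) := by
    have : Summable (fun i : ℕ => t₁ ^ i) := summable_geometric_of_lt_one ht0.le (by linarith)
    exact ((this.mul_left (t₁ ^ (n+1))).mul_left K).congr (fun i => by rw [pow_add]; ring)
  have h1 : tailSum x n ≤ ∑' i : ℕ, K * t₁ ^ (n + 1 + i) :=
    Summable.tsum_le_tsum (fun i => hb (n + 1 + i)) hsum1 hsum2
  have h2 : ∑' i : ℕ, K * t₁ ^ (n + 1 + i) = K * t₁ ^ (n+1) / (1 - t₁) := by
    have hg : ∑' i : ℕ, t₁ ^ i = (1 - t₁)⁻¹ := tsum_geometric_of_lt_one ht0.le (by linarith)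
    calc ∑' i : ℕ, K * t₁ ^ (n + 1 + i) = ∑' i : ℕ, (K * t₁ ^ (n+1)) * t₁ ^ i := by
            congr 1; funext i; rw [pow_add]; ring
      _ = (K * t₁ ^ (n+1)) * ∑' i : ℕ, t₁ ^ i := tsum_mul_left
      _ = K * t₁ ^ (n+1) / (1 - t₁) := by rw [hg]; field_simp
  linarith [h1, h2.le]

omit hK0 ht0 ht hb in
theorem tailSum_nonneg (n : ℕ) : 0 ≤ tailSum x n :=
  tsum_nonneg (fun i => abs_nonneg _)

theorem achSet_subset_cover (n : ℕ) :
    achSet x ⊆ ⋃ T ∈ (Finset.range (n+1)).powerset,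
      Icc ((∑ i ∈ T, x i) - tailSum x n) ((∑ i ∈ T, x i) + tailSum x n) := by
  classical
  intro a ha
  rw [achSet_eq_range hK0 ht0 ht hb] at ha
  obtain ⟨χ, rfl⟩ := ha
  set g : ℕ → ℝ := fun i => if χ i then x i else 0 with hgdef
  have hg : Summable g := hg_sum hK0 ht0 ht hb χ
  have hsplit : (∑ i ∈ Finset.range (n+1), g i) + ∑' i, g (i + (n+1)) = Phi x χ :=
    hg.sum_add_tsum_nat_add (n+1)
  set T : Finset ℕ := (Finset.range (n+1)).filter (fun i => χ i = true) with hT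
  have hTsum : ∑ i ∈ Finset.range (n+1), g i = ∑ i ∈ T, x i := by
    rw [hT, Finset.sum_filter]
  have htail : |∑' i, g (i + (n+1))| ≤ tailSum x n := by
    have hs1 : Summable (fun i => g (i + (n+1))) := by
      apply hg.comp_injective
      exact fun i j hij => by omega
    calc |∑' i, g (i + (n+1))| ≤ ∑' i, |g (i + (n+1))| := by
          have := norm_tsum_le_tsum_norm (f := fun i => g (i + (n+1))) (by
            simpa [Real.norm_eq_abs] using hs1.abs)
          simpa [Real.norm_eq_abs] using this
      _ ≤ tailSum x n := by
          apply Summable.tsum_le_tsum _ hs1.abs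
            ((habs hK0 ht0 ht hb).comp_injective (add_right_injective (n+1)))
          intro i
          have : |g (i + (n+1))| ≤ |x (i + (n+1))| := by
            by_cases h : χ (i + (n+1)) <;> simp [hgdef, h, abs_nonneg]
          calc |g (i + (n+1))| ≤ |x (i + (n+1))| := this
            _ = |x (n + 1 + i)| := by rw [add_comm i (n+1)]
  simp only [Set.mem_iUnion]
  refine ⟨T, Finset.mem_powerset.mpr (Finset.filter_subset _ _), ?_⟩
  rw [mem_Icc]
  have h1 : Phi x χ - ∑ i ∈ T, x i = ∑' i, g (i + (n+1)) := by
    rw [← hTsum]; linarith [hsplit]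
  rw [abs_le] at htail
  constructor <;> [linarith [htail.1, h1]; linarith [htail.2, h1]]

theorem achSet_volume_zero : volume (achSet x) = 0 := by
  have key : ∀ n : ℕ, volume (achSet x) ≤
      ENNReal.ofReal ((2 * K / (1 - t₁)) * (2 * t₁) ^ (n+1)) := by
    intro n
    calc volume (achSet x)
        ≤ volume (⋃ T ∈ (Finset.range (n+1)).powerset,
          Icc ((∑ i ∈ T, x i) - tailSum x n) ((∑ i ∈ T, x i) + tailSum x n)) :=
          measure_mono (achSet_subset_cover hK0 ht0 ht hb n)
      _ ≤ ∑ T ∈ (Finset.range (n+1)).powerset,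
          volume (Icc ((∑ i ∈ T, x i) - tailSum x n) ((∑ i ∈ T, x i) + tailSum x n)) :=
          measure_biUnion_finset_le _ _
      _ = ∑ _T ∈ (Finset.range (n+1)).powerset, ENNReal.ofReal (2 * tailSum x n) := by
          apply Finset.sum_congr rfl
          intro T _
          rw [Real.volume_Icc]
          congr 1
          ring
      _ = (2:ENNReal) ^ (n+1) * ENNReal.ofReal (2 * tailSum x n) := by
          rw [Finset.sum_const, Finset.card_powerset, Finset.card_range, nsmul_eq_mul]
          norm_num
      _ = ENNReal.ofReal ((2:ℝ) ^ (n+1) * (2 * tailSum x n)) := by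
          rw [ENNReal.ofReal_mul (by positivity : (0:ℝ) ≤ 2 ^ (n+1)),
            ENNReal.ofReal_pow (by norm_num : (0:ℝ) ≤ 2)]
          simp [ENNReal.ofReal_ofNat]
      _ ≤ ENNReal.ofReal ((2 * K / (1 - t₁)) * (2 * t₁) ^ (n+1)) := by
          apply ENNReal.ofReal_le_ofReal
          have hts := tailSum_le hK0 ht0 ht hb n
          have htn := tailSum_nonneg (x := x) n
          have expand : (2 * K / (1 - t₁)) * (2 * t₁) ^ (n+1)
              = (2:ℝ) ^ (n+1) * (2 * (K * t₁ ^ (n+1) / (1 - t₁))) := by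
            rw [mul_pow]; ring
          rw [expand]
          have h2 : (0:ℝ) < (2:ℝ) ^ (n+1) := by positivity
          nlinarith [pow_pos (show (0:ℝ) < 2 by norm_num) (n+1)]
  have hlim : Tendsto (fun n : ℕ => ENNReal.ofReal ((2 * K / (1 - t₁)) * (2 * t₁) ^ (n+1)))
      atTop (𝓝 0) := by
    have hreal : Tendsto (fun n : ℕ => (2 * K / (1 - t₁)) * (2 * t₁) ^ (n+1)) atTop (𝓝 0) := by
      have h1 : Tendsto (fun n : ℕ => (2 * t₁) ^ n) atTop (𝓝 0) :=
        tendsto_pow_atTop_nhds_zero_of_lt_one (by linarith) (by linarith)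
      have h2 := (h1.const_mul ((2 * K / (1 - t₁)) * (2 * t₁))).comp (tendsto_id (α := ℕ))
      simpa [mul_comm, mul_assoc, mul_left_comm, pow_succ] using
        (h1.const_mul (2 * K / (1 - t₁) * (2 * t₁)))
    have := (ENNReal.continuous_ofReal.tendsto 0).comp hreal
    simpa [Function.comp_def] using this
  have h0 : volume (achSet x) ≤ 0 := ge_of_tendsto' hlim key
  exact le_antisymm h0 zero_le

theorem achSet_interior_empty : interior (achSet x) = ∅ := by
  by_contra h
  obtain ⟨z, hz⟩ := nonempty_iff_ne_empty.mpr h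
  have hpos : 0 < volume (interior (achSet x)) :=
    isOpen_interior.measure_pos volume ⟨z, hz⟩
  have hle : volume (interior (achSet x)) ≤ volume (achSet x) := measure_mono interior_subset
  rw [achSet_volume_zero hK0 ht0 ht hb] at hle
  exact absurd (le_antisymm hle zero_le) (ne_of_gt hpos)

theorem cantorLike_achSet {N : ℕ} (hN : ∀ n ≥ N, x n ≠ 0) : CantorLike (achSet x) := by
  apply cantorLike_of_good
  exact ⟨⟨0, achSet_zero_mem⟩, achSet_compact hK0 ht0 ht hb,
    achSet_preperfect hK0 ht0 ht hb hN, achSet_interior_empty hK0 ht0 ht hb⟩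
end CantorAux

namespace CantorAux

variable {M : Type*} [DecidableEq M]

theorem expSum_mem (s : Finset M) (c t : M → ℝ) (hs : s.Nonempty)
    (hc : ∀ m ∈ s, c m ≠ 0) (ht0 : ∀ m ∈ s, 0 < t m) (ht : ∀ m ∈ s, t m < 1/2)
    (hinj : Set.InjOn t s) :
    (fun n : ℕ => ∑ m ∈ s, c m * t m ^ n) ∈ mathcalC := by
  classical
  obtain ⟨m₁, hm₁s, hmax⟩ := s.exists_max_image t hs
  set x : ℕ → ℝ := fun n => ∑ m ∈ s, c m * t m ^ n with hx
  set t₁ : ℝ := t m₁ with ht₁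
  have ht₁0 : 0 < t₁ := ht0 m₁ hm₁s
  have ht₁2 : t₁ < 1/2 := ht m₁ hm₁s
  set K : ℝ := ∑ m ∈ s, |c m| with hK
  have hK0 : 0 ≤ K := Finset.sum_nonneg (fun m _ => abs_nonneg _)
  have hb : ∀ n, |x n| ≤ K * t₁ ^ n := by
    intro n
    calc |x n| ≤ ∑ m ∈ s, |c m * t m ^ n| := Finset.abs_sum_le_sum_abs _ _
      _ ≤ ∑ m ∈ s, |c m| * t₁ ^ n := by
          apply Finset.sum_le_sum
          intro m hm
          rw [abs_mul, abs_pow, abs_of_pos (ht0 m hm)]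
          exact mul_le_mul_of_nonneg_left
            (pow_le_pow_left₀ (ht0 m hm).le (hmax m hm) n) (abs_nonneg _)
      _ = K * t₁ ^ n := by rw [hK, Finset.sum_mul]
  have hratio : Tendsto (fun n => x n / t₁ ^ n) atTop (𝓝 (c m₁)) := by
    have heq : ∀ n : ℕ, x n / t₁ ^ n = ∑ m ∈ s, c m * (t m / t₁) ^ n := by
      intro n
      rw [hx, Finset.sum_div]
      apply Finset.sum_congr rfl
      intro m _
      rw [div_pow, mul_div_assoc]
    have hlim : Tendsto (fun n : ℕ => ∑ m ∈ s, c m * (t m / t₁) ^ n) atTop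
        (𝓝 (∑ m ∈ s, if m = m₁ then c m₁ else 0)) := by
      apply tendsto_finset_sum
      intro m hm
      by_cases hmm : m = m₁
      · subst hmm
        simp only [if_pos rfl, div_self (ne_of_gt ht₁0), one_pow]
        rw [show t m / t₁ = 1 by rw [ht₁]; exact div_self (ne_of_gt (ht0 m hm))]
        simp
      · rw [if_neg hmm]
        have hlt : t m < t₁ := lt_of_le_of_ne (hmax m hm) (fun hh => hmm (hinj hm hm₁s hh))
        have h1 : Tendsto (fun n : ℕ => (t m / t₁) ^ n) atTop (𝓝 0) :=
          tendsto_pow_atTop_nhds_zero_of_lt_one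
            (div_nonneg (ht0 m hm).le ht₁0.le) ((div_lt_one ht₁0).mpr hlt)
        simpa using h1.const_mul (c m)
    rw [Finset.sum_ite_eq' s m₁ (fun _ => c m₁), if_pos hm₁s] at hlim
    exact Tendsto.congr (fun n => (heq n).symm) hlim
  have hc₁ : c m₁ ≠ 0 := hc m₁ hm₁s
  have hN : ∃ N : ℕ, ∀ n ≥ N, x n ≠ 0 := by
    have hev : ∀ᶠ n in atTop, |x n / t₁ ^ n - c m₁| < |c m₁| := by
      have := Metric.tendsto_nhds.mp hratio |c m₁| (abs_pos.mpr hc₁)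
      simpa [Real.dist_eq] using this
    obtain ⟨N, hN⟩ := eventually_atTop.mp hev
    refine ⟨N, fun n hn hzero => ?_⟩
    have := hN n hn
    rw [hzero, zero_div, zero_sub, abs_neg] at this
    exact lt_irrefl _ this
  obtain ⟨N, hNx⟩ := hN
  refine ⟨habs hK0 ht₁0 ht₁2 hb, ?_, ?_⟩
  · intro N'
    exact ⟨max N N', le_max_right _ _, hNx _ (le_max_left _ _)⟩
  · exact cantorLike_achSet hK0 ht₁0 ht₁2 hb hNx
theorem rpow_sum {q : ℝ} (hq0 : 0 < q) {α : Type*} (s : Finset α) (f : α → ℝ) :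
    q ^ (∑ i ∈ s, f i) = ∏ i ∈ s, q ^ f i := by
  classical
  induction s using Finset.induction_on with
  | empty => simp
  | insert a s hni ih =>
    rw [Finset.sum_insert hni, Finset.prod_insert hni, Real.rpow_add hq0, ih]

variable {ι : Type} {r : ι → ℝ}

/-- exponents attached to monomials -/
noncomputable def expnt (r : ι → ℝ) (m : ι →₀ ℕ) : ℝ := ∑ i ∈ m.support, (m i : ℝ) * r i

theorem expnt_inj (hli : LinearIndependent ℚ r) {m m' : ι →₀ ℕ}
    (h : expnt r m = expnt r m') : m = m' := by
  classical
  set s := m.support ∪ m'.support with hs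
  have hsum : ∀ m'' : ι →₀ ℕ, m''.support ⊆ s →
      ∑ i ∈ s, (m'' i : ℝ) * r i = expnt r m'' := by
    intro m'' hsub
    rw [expnt]
    apply (Finset.sum_subset hsub _).symm
    intro i _ hni
    rw [Finsupp.notMem_support_iff.mp hni]
    simp
  have key : ∑ i ∈ s, ((m i : ℚ) - (m' i : ℚ)) • r i = 0 := by
    have : ∀ i : ι, ((m i : ℚ) - (m' i : ℚ)) • r i = (m i : ℝ) * r i - (m' i : ℝ) * r i := by
      intro i
      rw [Rat.smul_def]
      push_cast
      ring
    rw [Finset.sum_congr rfl (fun i _ => this i), Finset.sum_sub_distrib,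
      hsum m Finset.subset_union_left, hsum m' Finset.subset_union_right, h, sub_self]
  have hall := linearIndependent_iff'.mp hli s (fun i => (m i : ℚ) - (m' i : ℚ)) key
  ext i
  by_cases hi : i ∈ s
  · have h0 : (m i : ℚ) - (m' i : ℚ) = 0 := hall i hi
    have h1 : (m i : ℚ) = (m' i : ℚ) := by linarith
    exact_mod_cast h1
  · rw [hs, Finset.mem_union] at hi
    push_neg at hi
    rw [Finsupp.notMem_support_iff.mp hi.1, Finsupp.notMem_support_iff.mp hi.2]

theorem expnt_gt_one (hr1 : ∀ i, 1 < r i) {m : ι →₀ ℕ} (hm : m ≠ 0) : 1 < expnt r m := by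
  obtain ⟨i, hi⟩ := Finsupp.support_nonempty_iff.mpr hm
  have hterm : ∀ j ∈ m.support, 0 ≤ (m j : ℝ) * r j := by
    intro j _
    exact mul_nonneg (Nat.cast_nonneg _) (zero_le_one.trans (hr1 j).le)
  have hle : (m i : ℝ) * r i ≤ expnt r m := Finset.single_le_sum hterm hi
  have hmi : (1:ℝ) ≤ (m i : ℝ) := by
    exact_mod_cast Nat.one_le_iff_ne_zero.mpr (Finsupp.mem_support_iff.mp hi)
  have h1 : r i ≤ (m i : ℝ) * r i :=
    le_mul_of_one_le_left (zero_le_one.trans (hr1 i).le) hmi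
  linarith [hr1 i]
theorem aeval_apply_eq_sum {q : ℝ} (hq0 : 0 < q) (r : ι → ℝ) (P : MvPolynomial ι ℝ) (n : ℕ) :
    (MvPolynomial.aeval (fun i => fun k : ℕ => q ^ (r i * k)) P) n
      = ∑ m ∈ P.support, MvPolynomial.coeff m P * (q ^ expnt r m) ^ n := by
  classical
  have step1 : (MvPolynomial.aeval (fun i => fun k : ℕ => q ^ (r i * k)) P) n
      = MvPolynomial.aeval (fun i => q ^ (r i * n)) P := by
    have hcomp := MvPolynomial.comp_aeval
      (f := fun i => fun k : ℕ => q ^ (r i * (k:ℕ)))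
      (φ := Pi.evalAlgHom ℝ (fun _ : ℕ => ℝ) n)
    exact DFunLike.congr_fun hcomp P
  rw [step1, MvPolynomial.aeval_def, MvPolynomial.eval₂_eq]
  apply Finset.sum_congr rfl
  intro m hm
  have halg : (algebraMap ℝ ℝ) (MvPolynomial.coeff m P) = MvPolynomial.coeff m P := rfl
  rw [halg]
  congr 1
  have hmono : ∀ i ∈ m.support, (q ^ (r i * (n:ℝ))) ^ (m i) = q ^ ((m i : ℝ) * r i * n) := by
    intro i _
    rw [← Real.rpow_natCast (q ^ (r i * (n:ℝ))) (m i), ← Real.rpow_mul hq0.le]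
    ring_nf
  rw [Finset.prod_congr rfl hmono, ← rpow_sum hq0]
  rw [← Real.rpow_natCast (q ^ expnt r m) n, ← Real.rpow_mul hq0.le]
  congr 1
  rw [expnt, Finset.sum_mul]

theorem final_mem {q : ℝ} (hq0 : 0 < q) (hq : q < 1/2) (r : ι → ℝ)
    (hr1 : ∀ i, 1 < r i) (hli : LinearIndependent ℚ r)
    (P : MvPolynomial ι ℝ) (hP : P ≠ 0) (hcc : MvPolynomial.constantCoeff P = 0) :
    MvPolynomial.aeval (fun i => fun n : ℕ => q ^ (r i * n)) P ∈ mathcalC := by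
  classical
  have hfun : MvPolynomial.aeval (fun i => fun n : ℕ => q ^ (r i * n)) P
      = fun n : ℕ => ∑ m ∈ P.support, MvPolynomial.coeff m P * (q ^ expnt r m) ^ n := by
    funext n
    exact aeval_apply_eq_sum hq0 r P n
  rw [hfun]
  have hq1 : q < 1 := by linarith
  have hmne : ∀ m ∈ P.support, m ≠ 0 := by
    intro m hm h0
    rw [h0] at hm
    exact (MvPolynomial.mem_support_iff.mp hm) (by rw [← MvPolynomial.constantCoeff_eq]; exact hcc)
  apply expSum_mem
  · exact MvPolynomial.support_nonempty.mpr hP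
  · exact fun m hm => MvPolynomial.mem_support_iff.mp hm
  · exact fun m _ => Real.rpow_pos_of_pos hq0 _
  · intro m hm
    have h1 : q ^ expnt r m < q ^ (1:ℝ) :=
      Real.rpow_lt_rpow_of_exponent_gt hq0 hq1 (expnt_gt_one hr1 (hmne m hm))
    rw [Real.rpow_one] at h1
    linarith
  · intro m hm m' hm' heq
    simp only at heq
    apply expnt_inj hli
    by_contra hne
    rcases lt_or_gt_of_ne hne with hlt | hgt
    · have := Real.rpow_lt_rpow_of_exponent_gt hq0 hq1 hlt
      rw [heq] at this
      exact lt_irrefl _ this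
    · have := Real.rpow_lt_rpow_of_exponent_gt hq0 hq1 hgt
      rw [heq] at this
      exact lt_irrefl _ this

end CantorAux

theorem mathcalC_strongly_algebrable (q : ℝ) (hq0 : 0 < q) (hq : q < 1 / 2)
    (ι : Type) (hι : Cardinal.mk ι = Cardinal.continuum)
    (r : ι → ℝ) (hr1 : ∀ i, 1 < r i) (hli : LinearIndependent ℚ r) :
    (∀ P : MvPolynomial ι ℝ, P ≠ 0 → MvPolynomial.constantCoeff P = 0 →
        MvPolynomial.aeval (fun i => fun n : ℕ => q ^ (r i * n)) P ∈ mathcalC) ∧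
      StronglyContinuumAlgebrable mathcalC := by
  constructor
  · intro P hP hcc
    exact CantorAux.final_mem hq0 hq r hr1 hli P hP hcc
  · exact ⟨ι, (fun i => fun n : ℕ => q ^ (r i * n)), hι,
      fun P hP hcc => CantorAux.final_mem hq0 hq r hr1 hli P hP hcc⟩
end

section
/- Let K ⊂ (1, ∞) be a set of cardinality 𝔠 linearly independent over ℚ. The sequences x_α(n) = 1/n^α for α ∈ K freely generate a subalgebra of ℓ¹ every nonzero element of which has achievement set equal to a finite union of closed intervals. In particular, the set ℐ = {x ∈ ℓ¹ \ c₀₀ : E(x) is a finite union of closed intervals} is strongly 𝔠-algebrable. -/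
open Set Filter Topology

/-- The set `ℐ` of absolutely summable, not eventually zero sequences whose
achievement set is a finite union of closed intervals. -/
def mathcalI : Set (ℕ → ℝ) :=
  {x | (Summable fun n => |x n|) ∧ NotEventuallyZero x ∧
    IsFinUnionClosedIntervals (achSet x)}

/-- greedy partial sums -/
noncomputable def greedy (y : ℕ → ℝ) (t : ℝ) : ℕ → ℝ
  | 0 => 0
  | n+1 => greedy y t n + if greedy y t n + y n ≤ t then y n else 0

lemma achSet_eq_Icc_s10 (y : ℕ → ℝ) (hpos : ∀ n, 0 ≤ y n) (hsum : Summable y)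
    (hcond : ∀ n, y n ≤ ∑' i, y (n + 1 + i)) :
    achSet y = Set.Icc 0 (∑' n, y n) := by
  classical
  apply Set.Subset.antisymm
  · rintro a ⟨A, hA⟩
    have hA' : HasSum (A.indicator y) a := hasSum_subtype_iff_indicator.mp hA
    refine ⟨hA'.nonneg fun n => Set.indicator_nonneg (fun k _ => hpos k) n, ?_⟩
    exact hasSum_le (fun n => Set.indicator_le_self' (fun k _ => hpos k) n) hA' hsum.hasSum
  · rintro t ⟨ht0, htT⟩
    set A : Set ℕ := {n | greedy y t n + y n ≤ t} with hAdef
    have hgs : ∀ n, greedy y t n = ∑ k ∈ Finset.range n, A.indicator y k := by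
      intro n
      induction n with
      | zero => simp [greedy]
      | succ n ih =>
        rw [Finset.sum_range_succ, ← ih]
        show greedy y t n + _ = greedy y t n + A.indicator y n
        congr 1
    have hle : ∀ n, greedy y t n ≤ t := by
      intro n
      induction n with
      | zero => exact ht0
      | succ n ih =>
        show (greedy y t n + if _ then _ else _) ≤ t
        split_ifs with h
        · exact h
        · simpa using ih
    have hshift : ∀ n : ℕ, Summable fun i => y (n + i) := by
      intro n
      exact ((summable_nat_add_iff n).mpr hsum).congr fun i => by rw [add_comm]
    set R : ℕ → ℝ := fun n => ∑' i, y (n + i) with hRdef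
    have hR : ∀ n, R n = y n + R (n + 1) := by
      intro n
      have h0 := Summable.tsum_eq_zero_add (hshift n)
      simp only [hRdef]
      rw [h0, add_zero]
      congr 1
      exact tsum_congr fun i => by rw [show n + (i + 1) = n + 1 + i from by omega]
    have hinv : ∀ n, t ≤ greedy y t n + R n := by
      intro n
      induction n with
      | zero =>
        have : R 0 = ∑' n, y n := tsum_congr fun i => by rw [zero_add]
        simpa [greedy, this] using htT
      | succ n ih =>
        show t ≤ (greedy y t n + if _ then _ else _) + R (n + 1)
        split_ifs with h
        · have := hR n; linarith
        · push_neg at h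
          have h2 : y n ≤ R (n + 1) := hcond n
          have h3 : t ≤ greedy y t n + R (n + 1) := by linarith
          simpa using h3
    have hRlim : Tendsto R atTop (𝓝 0) := by
      have hRe : ∀ n, R n = (∑' i, y i) - ∑ i ∈ Finset.range n, y i := by
        intro n
        have h1 := Summable.sum_add_tsum_nat_add n hsum
        have h2 : R n = ∑' i, y (i + n) := tsum_congr fun i => by rw [add_comm]
        linarith
      have := (tendsto_const_nhds (x := ∑' i, y i) (f := atTop)).sub
        hsum.hasSum.tendsto_sum_nat
      rw [sub_self] at this
      exact this.congr fun n => (hRe n).symm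
    have hglim : Tendsto (greedy y t) atTop (𝓝 t) := by
      have hlow : Tendsto (fun n => t - R n) atTop (𝓝 t) := by
        have := (tendsto_const_nhds (x := t) (f := atTop)).sub hRlim
        simpa using this
      exact tendsto_of_tendsto_of_tendsto_of_le_of_le hlow tendsto_const_nhds
        (fun n => by have := hinv n; linarith) hle
    have hsumInd : Summable (A.indicator y) := hsum.indicator A
    have hIt : HasSum (A.indicator y) t := by
      have h1 := hsumInd.hasSum
      have h2 := h1.tendsto_sum_nat
      have h3 : Tendsto (greedy y t) atTop (𝓝 (∑' n, A.indicator y n)) :=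
        h2.congr fun n => (hgs n).symm
      have h4 : (∑' n, A.indicator y n) = t := tendsto_nhds_unique h3 hglim
      rwa [h4] at h1
    exact ⟨A, hasSum_subtype_iff_indicator.mpr hIt⟩

lemma achSet_eq_iUnion (x : ℕ → ℝ) (hsum : Summable fun n => |x n|) (N : ℕ) :
    achSet x = ⋃ F ∈ (Finset.range N).powerset,
      (fun t => (∑ i ∈ F, x i) + t) '' achSet (fun n => x (N + n)) := by
  classical
  have hx : Summable x := hsum.of_abs
  ext a
  simp only [Set.mem_iUnion, Set.mem_image, achSet, Set.mem_setOf_eq]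
  constructor
  · rintro ⟨A, hA⟩
    have hA' : HasSum (A.indicator x) a := hasSum_subtype_iff_indicator.mp hA
    set F : Finset ℕ := (Finset.range N).filter (· ∈ A) with hF
    set h₁ : ℕ → ℝ := fun k => if k ∈ F then x k else 0 with hh₁def
    have hh₁ : HasSum h₁ (∑ i ∈ F, x i) := by
      have h0 := hasSum_sum_of_ne_finset_zero (L := SummationFilter.unconditional ℕ) (s := F) (f := h₁)
        (fun b hb => by simp [hh₁def, hb])
      have he : ∑ b ∈ F, h₁ b = ∑ i ∈ F, x i :=
        Finset.sum_congr rfl (fun b hb => by simp [hh₁def, hb])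
      rwa [he] at h0
    set h₂ : ℕ → ℝ := fun k => if N ≤ k then A.indicator x k else 0 with hh₂def
    have hsplit : A.indicator x = fun k => h₁ k + h₂ k := by
      funext k
      by_cases hk : k < N <;> by_cases hkA : k ∈ A <;>
        simp [hh₁def, hh₂def, hF, Set.indicator_apply, hk, hkA, Finset.mem_filter,
          Finset.mem_range, not_le.mpr, le_of_not_gt, not_lt.mp]
    have hh₂ : HasSum h₂ (a - ∑ i ∈ F, x i) := by
      have h5 : HasSum (fun k => h₁ k + h₂ k) a := hsplit ▸ hA'
      have h6 := h5.sub hh₁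
      simpa using h6
    have hz : ∑ i ∈ Finset.range N, h₂ i = 0 := Finset.sum_eq_zero (fun i hi => by
      simp [hh₂def, Nat.not_le.mpr (Finset.mem_range.mp hi)])
    have hshift : HasSum (fun n => h₂ (n + N)) (a - ∑ i ∈ F, x i) := by
      rw [hasSum_nat_add_iff N, hz, add_zero]
      exact hh₂
    have heq : Set.indicator {m | N + m ∈ A} (fun n => x (N + n)) = fun n => h₂ (n + N) := by
      funext m
      simp [hh₂def, Set.indicator_apply, Nat.le_add_left, add_comm]
    have hind : HasSum (Set.indicator {m | N + m ∈ A} (fun n => x (N + n)))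
        (a - ∑ i ∈ F, x i) := by rw [heq]; exact hshift
    exact ⟨F, Finset.mem_powerset.mpr (Finset.filter_subset _ _),
      a - ∑ i ∈ F, x i, ⟨{m | N + m ∈ A}, hasSum_subtype_iff_indicator.mpr hind⟩, by ring⟩
  · rintro ⟨F, hF, b, ⟨B, hB⟩, rfl⟩
    have hB' : HasSum (B.indicator fun n => x (N + n)) b := hasSum_subtype_iff_indicator.mp hB
    set h₂ : ℕ → ℝ := fun k => if N ≤ k ∧ (k - N) ∈ B then x k else 0 with hh₂def
    have hsh : (fun m => h₂ (m + N)) = B.indicator fun n => x (N + n) := by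
      funext m
      simp [hh₂def, Set.indicator_apply, Nat.le_add_left, Nat.add_sub_cancel, add_comm]
    have hz : ∑ i ∈ Finset.range N, h₂ i = 0 := Finset.sum_eq_zero (fun i hi => by
      simp [hh₂def, Nat.not_le.mpr (Finset.mem_range.mp hi)])
    have hh₂ : HasSum h₂ b := by
      have h7 := (hasSum_nat_add_iff (f := h₂) N).mp (by rw [hsh]; exact hB')
      rwa [hz, add_zero] at h7
    set h₁ : ℕ → ℝ := fun k => if k ∈ F then x k else 0 with hh₁def
    have hh₁ : HasSum h₁ (∑ i ∈ F, x i) := by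
      have h0 := hasSum_sum_of_ne_finset_zero (L := SummationFilter.unconditional ℕ) (s := F) (f := h₁)
        (fun b hb => by simp [hh₁def, hb])
      have he : ∑ b ∈ F, h₁ b = ∑ i ∈ F, x i :=
        Finset.sum_congr rfl (fun b hb => by simp [hh₁def, hb])
      rwa [he] at h0
    set A : Set ℕ := ↑F ∪ {k | N ≤ k ∧ k - N ∈ B} with hAdef
    have hsplit : A.indicator x = fun k => h₁ k + h₂ k := by
      funext k
      have hFk : k ∈ F → k < N := fun h => Finset.mem_range.mp (Finset.mem_powerset.mp hF h)
      by_cases h1 : k ∈ F <;> by_cases h2 : N ≤ k ∧ k - N ∈ B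
      · exact absurd (hFk h1) (not_lt.mpr h2.1)
      · simp [hAdef, hh₁def, hh₂def, Set.indicator_apply, h1, h2]
      · simp [hAdef, hh₁def, hh₂def, Set.indicator_apply, h1, h2]
      · simp [hAdef, hh₁def, hh₂def, Set.indicator_apply, h1, h2]
    refine ⟨A, hasSum_subtype_iff_indicator.mpr ?_⟩
    rw [hsplit]
    exact hh₁.add hh₂

lemma kakeya (x : ℕ → ℝ) (hsum : Summable fun n => |x n|) (N : ℕ)
    (hpos : ∀ n, N ≤ n → 0 ≤ x n) (hcond : ∀ n, N ≤ n → x n ≤ tailSum x n) :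
    IsFinUnionClosedIntervals (achSet x) := by
  classical
  set y : ℕ → ℝ := fun n => x (N + n) with hy
  have hy0 : ∀ n, 0 ≤ y n := fun n => hpos _ (Nat.le_add_right _ _)
  have hysum : Summable y :=
    ((summable_nat_add_iff N).mpr hsum.of_abs).congr fun n => by rw [add_comm]
  have hycond : ∀ n, y n ≤ ∑' i, y (n + 1 + i) := by
    intro n
    have h1 := hcond (N + n) (Nat.le_add_right _ _)
    have h2 : tailSum x (N + n) = ∑' i, y (n + 1 + i) := by
      refine tsum_congr fun i => ?_
      rw [hy]
      rw [show N + n + 1 + i = N + (n + 1 + i) from by omega]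
      exact abs_of_nonneg (hpos _ (Nat.le_add_right _ _))
    rw [h2] at h1
    exact h1
  have hIcc := achSet_eq_Icc_s10 y hy0 hysum hycond
  set T := ∑' n, y n with hT
  refine ⟨((Finset.range N).powerset).image (fun F => ((∑ i ∈ F, x i), (∑ i ∈ F, x i) + T)), ?_⟩
  rw [achSet_eq_iUnion x hsum N]
  ext a
  constructor
  · intro h
    obtain ⟨F, hF, ha⟩ := Set.mem_iUnion₂.mp h
    rw [hIcc, Set.image_const_add_Icc, add_zero] at ha
    exact Set.mem_iUnion₂.mpr ⟨((∑ i ∈ F, x i), (∑ i ∈ F, x i) + T),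
      Finset.mem_image_of_mem _ hF, ha⟩
  · intro h
    obtain ⟨p, hp, ha⟩ := Set.mem_iUnion₂.mp h
    obtain ⟨F, hF, rfl⟩ := Finset.mem_image.mp hp
    refine Set.mem_iUnion₂.mpr ⟨F, hF, ?_⟩
    rw [hIcc, Set.image_const_add_Icc, add_zero]
    exact ha

lemma achSet_neg (x : ℕ → ℝ) : achSet (fun n => -x n) = (fun a : ℝ => -a) '' achSet x := by
  ext a
  constructor
  · rintro ⟨A, hA⟩
    exact ⟨-a, ⟨A, by simpa using hA.neg⟩, neg_neg a⟩
  · rintro ⟨b, ⟨A, hA⟩, rfl⟩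
    exact ⟨A, by simpa using hA.neg⟩

lemma IsFinUnionClosedIntervals.neg {S : Set ℝ} (h : IsFinUnionClosedIntervals S) :
    IsFinUnionClosedIntervals ((fun a : ℝ => -a) '' S) := by
  obtain ⟨s, rfl⟩ := h
  refine ⟨s.image (fun p => (-p.2, -p.1)), ?_⟩
  ext a
  simp only [Set.mem_image, Set.mem_iUnion, Finset.mem_image, Set.mem_Icc]
  constructor
  · rintro ⟨b, ⟨p, hp, hb1, hb2⟩, rfl⟩
    exact ⟨(-p.2, -p.1), ⟨p, hp, rfl⟩, by dsimp; constructor <;> linarith⟩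
  · rintro ⟨q, ⟨p, hp, rfl⟩, hq1, hq2⟩
    dsimp at hq1 hq2
    exact ⟨-a, ⟨p, hp, by constructor <;> linarith⟩, neg_neg a⟩

lemma key (f : ℕ → ℝ) (β0 c0 : ℝ) (hβ0 : 1 < β0) (hc : 0 < c0)
    (hsum : Summable fun n => |f n|)
    (hg : Tendsto (fun n : ℕ => ((n : ℝ) + 1) ^ β0 * f n) atTop (𝓝 c0)) :
    IsFinUnionClosedIntervals (achSet f) ∧ NotEventuallyZero f := by
  have hev : ∀ᶠ n : ℕ in atTop, ((n : ℝ) + 1) ^ β0 * f n ∈ Set.Ioo (c0 / 2) (2 * c0) :=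
    hg.eventually (Ioo_mem_nhds (by linarith) (by linarith))
  obtain ⟨N1, hN1⟩ := eventually_atTop.mp hev
  have hb : ∀ n, N1 ≤ n →
      c0 / 2 * ((n : ℝ) + 1) ^ (-β0) < f n ∧ f n < 2 * c0 * ((n : ℝ) + 1) ^ (-β0) := by
    intro n hn
    have hx : (0 : ℝ) < (n : ℝ) + 1 := by positivity
    have hpow : (0 : ℝ) < ((n : ℝ) + 1) ^ β0 := Real.rpow_pos_of_pos hx _
    have h := hN1 n hn
    have hrw : ((n : ℝ) + 1) ^ (-β0) = (((n : ℝ) + 1) ^ β0)⁻¹ := Real.rpow_neg hx.le _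
    have hinv : (0 : ℝ) < (((n : ℝ) + 1) ^ β0)⁻¹ := inv_pos.mpr hpow
    have hfe : f n = (((n : ℝ) + 1) ^ β0)⁻¹ * (((n : ℝ) + 1) ^ β0 * f n) := by
      field_simp
    constructor
    · rw [hrw]
      calc c0 / 2 * (((n : ℝ) + 1) ^ β0)⁻¹ = (((n : ℝ) + 1) ^ β0)⁻¹ * (c0 / 2) := by ring
        _ < (((n : ℝ) + 1) ^ β0)⁻¹ * (((n : ℝ) + 1) ^ β0 * f n) :=
            mul_lt_mul_of_pos_left h.1 hinv
        _ = f n := hfe.symm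
    · rw [hrw]
      calc f n = (((n : ℝ) + 1) ^ β0)⁻¹ * (((n : ℝ) + 1) ^ β0 * f n) := hfe
        _ < (((n : ℝ) + 1) ^ β0)⁻¹ * (2 * c0) := mul_lt_mul_of_pos_left h.2 hinv
        _ = 2 * c0 * (((n : ℝ) + 1) ^ β0)⁻¹ := by ring
  have hfpos : ∀ n, N1 ≤ n → 0 < f n := by
    intro n hn
    have h := (hb n hn).1
    have : (0 : ℝ) < c0 / 2 * ((n : ℝ) + 1) ^ (-β0) := by
      have := Real.rpow_pos_of_pos (show (0:ℝ) < (n:ℝ)+1 by positivity) (-β0)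
      positivity
    linarith
  have hNEZ : NotEventuallyZero f := by
    intro M
    exact ⟨max M N1, le_max_left _ _, ne_of_gt (hfpos _ (le_max_right _ _))⟩
  obtain ⟨N2, hN2⟩ := exists_nat_ge (4 * (2 : ℝ) ^ β0)
  set N := max N1 N2 with hN
  have hcond : ∀ n, N ≤ n → f n ≤ tailSum f n := by
    intro n hn
    have hn1 : N1 ≤ n := le_trans (le_max_left _ _) hn
    have hn2 : (4 * (2:ℝ) ^ β0) ≤ (n : ℝ) + 1 := by
      have : (N2 : ℝ) ≤ (n : ℝ) := Nat.cast_le.mpr (le_trans (le_max_right _ _) hn)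
      linarith [hN2]
    -- tail lower bound
    have hsummShift : Summable fun i => |f (n + 1 + i)| :=
      ((summable_nat_add_iff (n + 1)).mpr hsum).congr fun i => by rw [add_comm]
    have hlow : ∀ i ∈ Finset.range (n + 1),
        c0 / 2 * (2 * ((n : ℝ) + 1)) ^ (-β0) ≤ |f (n + 1 + i)| := by
      intro i hi
      have hi' : i ≤ n := Nat.lt_succ_iff.mp (Finset.mem_range.mp hi)
      have hki : N1 ≤ n + 1 + i := by omega
      have h1 := (hb _ hki).1
      have h2 : |f (n + 1 + i)| = f (n + 1 + i) := abs_of_pos (hfpos _ hki)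
      rw [h2]
      refine le_trans ?_ h1.le
      have hbase : (0 : ℝ) < ((n + 1 + i : ℕ) : ℝ) + 1 := by positivity
      have hmono : (2 * ((n : ℝ) + 1)) ^ (-β0) ≤ (((n + 1 + i : ℕ) : ℝ) + 1) ^ (-β0) := by
        apply Real.rpow_le_rpow_of_nonpos hbase ?_ (by linarith)
        push_cast
        linarith [(Nat.cast_le (α := ℝ)).mpr hi']
      have : (0:ℝ) < c0 / 2 := by linarith
      nlinarith [hmono]
    have htail : (n + 1 : ℝ) * (c0 / 2 * (2 * ((n : ℝ) + 1)) ^ (-β0)) ≤ tailSum f n := by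
      have hcard := Finset.card_nsmul_le_sum (Finset.range (n + 1))
        (fun i => |f (n + 1 + i)|) _ hlow
      rw [Finset.card_range, nsmul_eq_mul] at hcard
      have hsle : ∑ i ∈ Finset.range (n + 1), |f (n + 1 + i)| ≤ tailSum f n :=
        hsummShift.sum_le_tsum _ (fun i _ => abs_nonneg _)
      push_cast at hcard
      linarith
    refine le_trans ?_ htail
    -- f n < 2 c0 (n+1)^{-β0} ≤ (n+1) * (c0/2) * (2(n+1))^{-β0}
    have hfb := (hb n hn1).2
    have hx : (0 : ℝ) < (n : ℝ) + 1 := by positivity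
    have hsplit : (2 * ((n : ℝ) + 1)) ^ (-β0) = (2:ℝ) ^ (-β0) * ((n:ℝ) + 1) ^ (-β0) :=
      Real.mul_rpow (by norm_num) hx.le
    have hv : (0:ℝ) < (2:ℝ) ^ β0 := Real.rpow_pos_of_pos (by norm_num) _
    have hvinv : (2:ℝ) ^ (-β0) = ((2:ℝ) ^ β0)⁻¹ := Real.rpow_neg (by norm_num) _
    have hu : (0:ℝ) < ((n:ℝ) + 1) ^ (-β0) := Real.rpow_pos_of_pos hx _
    have hkey : 2 * c0 ≤ ((n : ℝ) + 1) * (c0 / 2) * ((2:ℝ) ^ β0)⁻¹ := by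
      have hvv : (2:ℝ) ^ β0 * ((2:ℝ) ^ β0)⁻¹ = 1 := mul_inv_cancel₀ (ne_of_gt hv)
      have hvinvpos : (0:ℝ) < ((2:ℝ)^β0)⁻¹ := inv_pos.mpr hv
      have hmul := mul_le_mul_of_nonneg_right hn2
        (le_of_lt (mul_pos (half_pos hc) hvinvpos))
      nlinarith [hmul, hvv, hvinvpos, hc]
    calc f n ≤ 2 * c0 * ((n:ℝ) + 1) ^ (-β0) := hfb.le
      _ ≤ (((n : ℝ) + 1) * (c0 / 2) * ((2:ℝ) ^ β0)⁻¹) * ((n:ℝ) + 1) ^ (-β0) :=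
          mul_le_mul_of_nonneg_right hkey hu.le
      _ = ((n : ℝ) + 1) * (c0 / 2 * (2 * ((n : ℝ) + 1)) ^ (-β0)) := by
          rw [hsplit, hvinv]; ring
  have hfin : IsFinUnionClosedIntervals (achSet f) :=
    kakeya f hsum N (fun n hn => (hfpos n (le_trans (le_max_left _ _) hn)).le) hcond
  exact ⟨hfin, hNEZ⟩

lemma rpow_sum_eq {γ : Type*} (x : ℝ) (hx : 0 < x) (s : Finset γ) (g : γ → ℝ) :
    x ^ (∑ i ∈ s, g i) = ∏ i ∈ s, x ^ g i := by
  classical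
  induction s using Finset.cons_induction with
  | empty => simp
  | cons a s ha ih => rw [Finset.sum_cons, Finset.prod_cons, Real.rpow_add hx, ih]

lemma summable_rpow_neg {b : ℝ} (hb : 1 < b) :
    Summable fun n : ℕ => ((n : ℝ) + 1) ^ (-b) := by
  have h1 : Summable fun n : ℕ => 1 / (n : ℝ) ^ b := Real.summable_one_div_nat_rpow.mpr hb
  have h2 := (summable_nat_add_iff 1).mpr h1
  refine h2.congr fun n => ?_
  push_cast
  rw [Real.rpow_neg (by positivity), one_div]

theorem mathcalI_strongly_algebrable
    (ι : Type) (hι : Cardinal.mk ι = Cardinal.continuum)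
    (α : ι → ℝ) (hα1 : ∀ i, 1 < α i) (hli : LinearIndependent ℚ α) :
    (∀ P : MvPolynomial ι ℝ, P ≠ 0 → MvPolynomial.constantCoeff P = 0 →
        MvPolynomial.aeval (fun i => fun n : ℕ => 1 / ((n : ℝ) + 1) ^ (α i)) P ∈ mathcalI) ∧
      StronglyContinuumAlgebrable mathcalI := by
  classical
  set y : ι → ℕ → ℝ := fun i => fun n : ℕ => 1 / ((n : ℝ) + 1) ^ (α i) with hy
  have main : ∀ P : MvPolynomial ι ℝ, P ≠ 0 → MvPolynomial.constantCoeff P = 0 →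
      MvPolynomial.aeval y P ∈ mathcalI := by
    intro P hP h0
    set f : ℕ → ℝ := MvPolynomial.aeval y P with hf
    set β : (ι →₀ ℕ) → ℝ := fun d => ∑ i ∈ d.support, (d i : ℝ) * α i with hβ
    have hβlc : ∀ d : ι →₀ ℕ, β d =
        Finsupp.linearCombination ℚ α (d.mapRange (Nat.cast : ℕ → ℚ) Nat.cast_zero) := by
      intro d
      rw [Finsupp.linearCombination_apply, Finsupp.sum,
        Finsupp.support_mapRange_of_injective Nat.cast_zero d Nat.cast_injective]
      refine Finset.sum_congr rfl fun i hi => ?_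
      rw [Finsupp.mapRange_apply, Rat.smul_def]
      push_cast
      ring
    have hβinj : ∀ d d' : ι →₀ ℕ, β d = β d' → d = d' := by
      intro d d' h
      rw [hβlc d, hβlc d'] at h
      have h2 := hli h
      exact Finsupp.mapRange_injective _ _ Nat.cast_injective h2
    have hfn : ∀ n : ℕ, f n = ∑ d ∈ P.support,
        MvPolynomial.coeff d P * ((n : ℝ) + 1) ^ (-(β d)) := by
      intro n
      have h1 : f n = MvPolynomial.eval (fun i => y i n) P := by
        have h := DFunLike.congr_fun
          (MvPolynomial.comp_aeval y (Pi.evalAlgHom ℝ (fun _ : ℕ => ℝ) n)) P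
        rw [show MvPolynomial.aeval (fun i => (Pi.evalAlgHom ℝ (fun _ : ℕ => ℝ) n) (y i)) P
            = MvPolynomial.eval (fun i => y i n) P from by
          rw [MvPolynomial.aeval_def, Algebra.algebraMap_self]; rfl] at h
        exact h
      rw [h1, MvPolynomial.eval_eq]
      refine Finset.sum_congr rfl fun d hd => ?_
      congr 1
      have hx : (0 : ℝ) < (n : ℝ) + 1 := by positivity
      have hterm : ∀ i ∈ d.support, (y i n) ^ d i = ((n : ℝ) + 1) ^ (-((d i : ℝ) * α i)) := by
        intro i hi
        show (1 / ((n : ℝ) + 1) ^ (α i)) ^ d i = _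
        rw [one_div, ← Real.rpow_neg hx.le,
          ← Real.rpow_natCast (((n : ℝ) + 1) ^ (-(α i))) (d i), ← Real.rpow_mul hx.le]
        congr 1
        ring
      rw [Finset.prod_congr rfl hterm, ← rpow_sum_eq _ hx]
      congr 1
      rw [hβ]
      dsimp only
      rw [Finset.sum_neg_distrib]
    have hsupp : P.support.Nonempty := Finset.nonempty_iff_ne_empty.mpr
      (fun h => hP (MvPolynomial.support_eq_empty.mp h))
    have hβgt : ∀ d ∈ P.support, 1 < β d := by
      intro d hd
      have hd0 : d ≠ 0 := by
        intro h
        apply MvPolynomial.mem_support_iff.mp hd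
        rw [h]
        exact (congrFun MvPolynomial.constantCoeff_eq P).symm.trans h0
      obtain ⟨i, hi⟩ := Finsupp.support_nonempty_iff.mpr hd0
      have h1 : (1 : ℝ) ≤ (d i : ℝ) := by
        exact_mod_cast Nat.one_le_iff_ne_zero.mpr (Finsupp.mem_support_iff.mp hi)
      have hterm : α i ≤ (d i : ℝ) * α i :=
        le_mul_of_one_le_left (by linarith [hα1 i]) h1
      have hsum' : (d i : ℝ) * α i ≤ ∑ j ∈ d.support, (d j : ℝ) * α j :=
        Finset.single_le_sum (f := fun j => (d j : ℝ) * α j)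
          (fun j _ => mul_nonneg (Nat.cast_nonneg _) (zero_lt_one.trans (hα1 j)).le) hi
      have hβd : β d = ∑ j ∈ d.support, (d j : ℝ) * α j := rfl
      rw [hβd]
      linarith [hα1 i]
    obtain ⟨d0, hd0mem, hd0min⟩ := Finset.exists_min_image P.support β hsupp
    set c0 := MvPolynomial.coeff d0 P with hc0def
    have hc0 : c0 ≠ 0 := MvPolynomial.mem_support_iff.mp hd0mem
    have hstrict : ∀ d ∈ P.support, d ≠ d0 → β d0 < β d := fun d hd hne =>
      lt_of_le_of_ne (hd0min d hd) (fun h => hne (hβinj _ _ h.symm))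
    have hsumf : Summable fun n => |f n| := by
      have hbound : ∀ n : ℕ, |f n| ≤
          ∑ d ∈ P.support, |MvPolynomial.coeff d P| * ((n : ℝ) + 1) ^ (-(β d)) := by
        intro n
        rw [hfn n]
        refine (Finset.abs_sum_le_sum_abs _ _).trans (le_of_eq ?_)
        refine Finset.sum_congr rfl fun d hd => ?_
        rw [abs_mul, abs_of_nonneg (Real.rpow_nonneg (by positivity) _)]
      refine Summable.of_nonneg_of_le (fun n => abs_nonneg _) hbound ?_
      exact summable_sum fun d hd => (summable_rpow_neg (hβgt d hd)).mul_left _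
    have hglim : Tendsto (fun n : ℕ => ((n : ℝ) + 1) ^ (β d0) * f n) atTop (𝓝 c0) := by
      have heq : ∀ n : ℕ, ((n : ℝ) + 1) ^ (β d0) * f n =
          ∑ d ∈ P.support, MvPolynomial.coeff d P * ((n : ℝ) + 1) ^ (β d0 - β d) := by
        intro n
        rw [hfn n, Finset.mul_sum]
        refine Finset.sum_congr rfl fun d hd => ?_
        have hx : (0 : ℝ) < (n : ℝ) + 1 := by positivity
        rw [← mul_assoc, mul_comm (((n : ℝ) + 1) ^ (β d0)) (MvPolynomial.coeff d P),
          mul_assoc, ← Real.rpow_add hx, ← sub_eq_add_neg]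
      have hc0sum : c0 = ∑ d ∈ P.support, (if d = d0 then c0 else 0) := by
        rw [Finset.sum_ite_eq' P.support d0 (fun _ => c0), if_pos hd0mem]
      rw [hc0sum]
      refine Tendsto.congr (fun n => (heq n).symm) ?_
      refine tendsto_finset_sum _ fun d hd => ?_
      by_cases hdd : d = d0
      · subst hdd
        rw [if_pos rfl]
        have : ∀ n : ℕ, MvPolynomial.coeff d P * ((n : ℝ) + 1) ^ (β d - β d) = c0 := by
          intro n
          rw [sub_self, Real.rpow_zero, mul_one, hc0def]
        exact Tendsto.congr (fun n => (this n).symm) tendsto_const_nhds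
      · rw [if_neg hdd]
        have hlt : 0 < β d - β d0 := sub_pos.mpr (hstrict d hd hdd)
        have h2 : Tendsto (fun n : ℕ => ((n : ℝ) + 1) ^ (-(β d - β d0))) atTop (𝓝 0) := by
          have hbb := tendsto_rpow_neg_atTop hlt
          have hn : Tendsto (fun n : ℕ => (n : ℝ) + 1) atTop atTop :=
            tendsto_atTop_add_const_right _ _ tendsto_natCast_atTop_atTop
          exact hbb.comp hn
        have h3 := h2.const_mul (MvPolynomial.coeff d P)
        rw [mul_zero] at h3
        refine h3.congr fun n => ?_
        rw [neg_sub]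
    rcases hc0.lt_or_gt with hneg | hpos
    · have hsumneg : Summable fun n => |(-f n)| := hsumf.congr fun n => (abs_neg _).symm
      have hgneg : Tendsto (fun n : ℕ => ((n : ℝ) + 1) ^ (β d0) * (-f n)) atTop (𝓝 (-c0)) :=
        hglim.neg.congr fun n => by ring
      obtain ⟨hfin', hnez'⟩ := key (fun n => -f n) (β d0) (-c0) (hβgt d0 hd0mem)
        (by linarith) hsumneg hgneg
      refine ⟨hsumf, ?_, ?_⟩
      · intro M
        obtain ⟨n, hn, hne⟩ := hnez' M
        exact ⟨n, hn, fun h => hne (by simp [h])⟩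
      · have h1 : achSet f = (fun a : ℝ => -a) '' achSet (fun n => -f n) := by
          simpa using achSet_neg (fun n => -f n)
        rw [show achSet (MvPolynomial.aeval y P) = achSet f from rfl, h1]
        exact hfin'.neg
    · obtain ⟨hfin, hnez⟩ := key f (β d0) c0 (hβgt d0 hd0mem) hpos hsumf hglim
      exact ⟨hsumf, hnez, hfin⟩
  exact ⟨main, ⟨ι, y, hι, main⟩⟩
end

section
/- Let x ∈ ℓ¹ be such that (i) E(x) contains an interval of positive length, (ii) |x(n)| > ∑_{i>n}|x(i)| for infinitely many n, (iii) |x(n)| ≥ |x(n+1)| for almost all n. Then E(x) is neither a finite union of closed intervals nor homeomorphic to the Cantor set. -/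
set_option maxHeartbeats 1000000


open Set Filter Topology

theorem achSet_cantorval (x : ℕ → ℝ) (hx : Summable fun n => |x n|)
    (hint : ∃ a b : ℝ, a < b ∧ Set.Icc a b ⊆ achSet x)
    (hbig : ∀ N : ℕ, ∃ n ≥ N, tailSum x n < |x n|)
    (hmono : ∀ᶠ n in atTop, |x (n + 1)| ≤ |x n|) :
    ¬ IsFinUnionClosedIntervals (achSet x) ∧ ¬ CantorLike (achSet x) := by
  classical
  constructor
  · -- not a finite union of closed intervals
    rintro ⟨s, hS⟩
    -- the positive part and its sum M
    set P : Set ℕ := {n | 0 < x n} with hP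
    set p : ℕ → ℝ := fun n => max (x n) 0 with hp_def
    have hp : Summable p := by
      refine Summable.of_nonneg_of_le (fun n => le_max_right _ _) (fun n => ?_) hx
      exact max_le (le_abs_self _) (abs_nonneg _)
    set M : ℝ := ∑' n, p n with hM_def
    have hMsum : HasSum p M := hp.hasSum
    have hPind : P.indicator x = p := by
      funext n
      by_cases h : 0 < x n
      · simp [Set.indicator, hP, hp_def, h, max_eq_left h.le]
      · simp [Set.indicator, hP, hp_def, h, max_eq_right (not_lt.1 h)]
    have hMmem : M ∈ achSet x := ⟨P, hasSum_subtype_iff_indicator.2 (hPind ▸ hMsum)⟩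
    -- tail sums
    have htsum : ∀ n : ℕ, Summable fun j => |x (n + 1 + j)| := by
      intro n
      have h1 : Summable fun j => |x (j + (n + 1))| := (summable_nat_add_iff (n + 1)).2 hx
      refine h1.congr fun j => by rw [add_comm]
    have htail : ∀ n : ℕ, HasSum ((Set.Ioi n).indicator fun i => |x i|) (tailSum x n) := by
      intro n
      have hs : HasSum (fun j => |x (n + 1 + j)|) (tailSum x n) := (htsum n).hasSum
      have hinj : Function.Injective (fun j : ℕ => n + 1 + j) := fun a b h => by
        have h' : n + 1 + a = n + 1 + b := h
        omega
      have hzero : ∀ m ∉ Set.range (fun j : ℕ => n + 1 + j),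
          ((Set.Ioi n).indicator fun i => |x i|) m = 0 := by
        intro m hm
        have hmn : m ≤ n := by
          by_contra h
          exact hm ⟨m - (n + 1), show n + 1 + (m - (n + 1)) = m by omega⟩
        simp [Set.indicator, not_lt.2 hmn]
      refine (hinj.hasSum_iff hzero).1 ?_
      refine hs.congr_fun fun j => ?_
      simp [Set.indicator, Set.mem_Ioi]
      omega
    -- complement: for s in achSet, M - s is a subsum of |x|
    have hcompl : ∀ t ∈ achSet x, ∃ B : Set ℕ,
        HasSum (B.indicator fun i => |x i|) (M - t) := by
      rintro t ⟨A, hA⟩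
      rw [show (fun n : A => x n) = x ∘ Subtype.val from rfl,
        hasSum_subtype_iff_indicator] at hA
      refine ⟨(P \ A) ∪ (A \ P), ?_⟩
      have hsub := hMsum.sub hA
      refine HasSum.congr_fun hsub fun i => ?_
      by_cases hiP : 0 < x i <;> by_cases hiA : i ∈ A
      · simp [Set.indicator, hP, hp_def, hiP, hiA, max_eq_left hiP.le]
      · simp [Set.indicator, hP, hp_def, hiP, hiA, max_eq_left hiP.le, abs_of_pos hiP]
      · simp [Set.indicator, hP, hp_def, hiP, hiA, max_eq_right (not_lt.1 hiP),
          abs_of_nonpos (not_lt.1 hiP)]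
      · simp [Set.indicator, hP, hp_def, hiP, hiA, max_eq_right (not_lt.1 hiP)]
    -- M - tailSum x n is in achSet x
    have hMr : ∀ n : ℕ, M - tailSum x n ∈ achSet x := by
      intro n
      refine ⟨(P ∩ Set.Iic n) ∪ (Pᶜ ∩ Set.Ioi n), ?_⟩
      rw [show (fun m : ((P ∩ Set.Iic n) ∪ (Pᶜ ∩ Set.Ioi n) : Set ℕ) => x m)
        = x ∘ Subtype.val from rfl, hasSum_subtype_iff_indicator]
      have hsub := hMsum.sub (htail n)
      refine HasSum.congr_fun hsub fun i => ?_
      by_cases hiP : 0 < x i <;> by_cases hin : i ≤ n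
      · simp [Set.indicator, hP, hp_def, hiP, hin, Set.mem_Ioi, not_lt.2 hin, max_eq_left hiP.le]
      · simp [Set.indicator, hP, hp_def, hiP, hin, Set.mem_Ioi, not_le.1 hin, max_eq_left hiP.le,
          abs_of_pos hiP]
      · simp [Set.indicator, hP, hp_def, hiP, hin, Set.mem_Ioi, not_lt.2 hin,
          max_eq_right (not_lt.1 hiP)]
      · simp [Set.indicator, hP, hp_def, hiP, hin, Set.mem_Ioi, not_le.1 hin,
          max_eq_right (not_lt.1 hiP), abs_of_nonpos (not_lt.1 hiP)]
    -- the gap lemma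
    have hgap : ∀ n : ℕ, (∀ i ≤ n, x i ≠ 0 → |x n| ≤ |x i|) → ∀ B : Set ℕ, ∀ t : ℝ,
        HasSum (B.indicator fun i => |x i|) t → t < |x n| → t ≤ tailSum x n := by
      intro n hn B t ht htlt
      have hzero : ∀ i ∈ B, i ≤ n → x i = 0 := by
        intro i hiB hin
        by_contra hne
        have h1 : |x i| ≤ t := by
          have := le_hasSum ht i (fun j _ => Set.indicator_nonneg (fun k _ => abs_nonneg _) j)
          simpa [Set.indicator, hiB] using this
        exact absurd htlt (not_lt.2 ((hn i hin hne).trans h1))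
      refine hasSum_le (fun i => ?_) ht (htail n)
      by_cases hiB : i ∈ B
      · by_cases hin : i ≤ n
        · simp [Set.indicator, hiB, hzero i hiB hin,
            Set.indicator_nonneg (fun k _ => abs_nonneg (x k))]
        · simp [Set.indicator, hiB, Set.mem_Ioi, not_le.1 hin]
      · exact le_trans (by simp [Set.indicator, hiB]) (le_refl _) |>.trans
          (Set.indicator_nonneg (fun k _ => abs_nonneg (x k)) i) |>.trans (le_refl _)
    -- infinitely many nonzero terms
    have hnz : ∀ n : ℕ, ∃ j, n < j ∧ x j ≠ 0 := by
      by_contra h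
      push_neg at h
      obtain ⟨n, hn⟩ := h
      obtain ⟨a, b, hab, hsub⟩ := hint
      have hfin : (achSet x).Finite := by
        have hsubim : achSet x ⊆
            (fun F : Finset ℕ => ∑ i ∈ F, x i) '' ↑((Finset.range (n + 1)).powerset) := by
          rintro t ⟨A, hA⟩
          rw [show (fun m : A => x m) = x ∘ Subtype.val from rfl,
            hasSum_subtype_iff_indicator] at hA
          have ht : t = ∑ i ∈ Finset.range (n + 1), A.indicator x i := by
            rw [← hA.tsum_eq]
            refine tsum_eq_sum fun i hi => ?_
            have : n < i := by
              simp only [Finset.mem_range] at hi; omega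
            simp [Set.indicator, hn i this]
          refine ⟨(Finset.range (n + 1)).filter (· ∈ A), ?_, ?_⟩
          · exact Finset.mem_coe.2 (Finset.mem_powerset.2 (Finset.filter_subset _ _))
          · show ∑ i ∈ (Finset.range (n + 1)).filter (· ∈ A), x i = t
            rw [ht, Finset.sum_filter]
            exact Finset.sum_congr rfl fun i _ => by simp [Set.indicator_apply]
        exact Set.Finite.subset (Set.Finite.image _ (Finset.finite_toSet _)) hsubim
      exact (Set.Icc_infinite hab) (hfin.subset hsub)
    -- tail sums are positive
    have hrpos : ∀ n : ℕ, 0 < tailSum x n := by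
      intro n
      obtain ⟨j, hj, hjne⟩ := hnz n
      have h1 : |x (n + 1 + (j - (n + 1)))| ≤ tailSum x n :=
        Summable.le_tsum (htsum n) (j - (n + 1)) (fun _ _ => abs_nonneg _)
      rw [show n + 1 + (j - (n + 1)) = j from by omega] at h1
      exact lt_of_lt_of_le (abs_pos.2 hjne) h1
    -- suitable indices
    have hsuit : ∀ δ : ℝ, 0 < δ → ∃ n : ℕ, tailSum x n < |x n| ∧ |x n| < δ ∧
        (∀ i ≤ n, x i ≠ 0 → |x n| ≤ |x i|) := by
      intro δ hδ
      obtain ⟨N₀, hN₀⟩ := eventually_atTop.1 hmono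
      have hy0 : Tendsto (fun n => |x n|) atTop (𝓝 0) := hx.tendsto_atTop_zero
      have hev1 : ∀ᶠ n in atTop, |x n| < δ := hy0.eventually (gt_mem_nhds hδ)
      have hev2 : ∀ᶠ n in atTop,
          ∀ i ∈ (Finset.range N₀).filter (fun i => x i ≠ 0), |x n| < |x i| := by
        rw [Finset.eventually_all]
        intro i hi
        exact hy0.eventually (gt_mem_nhds (abs_pos.2 (Finset.mem_filter.1 hi).2))
      have hev3 : ∀ᶠ n in atTop, N₀ ≤ n := eventually_ge_atTop N₀
      have hfreq : ∃ᶠ n in atTop, tailSum x n < |x n| := frequently_atTop.2 hbig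
      obtain ⟨m, hm1, hm2, hm3, hm4⟩ := (hfreq.and_eventually (hev1.and (hev2.and hev3))).exists
      refine ⟨m, hm1, hm2, fun i hin hine => ?_⟩
      by_cases hi : i < N₀
      · exact (hm3 i (Finset.mem_filter.2 ⟨Finset.mem_range.2 hi, hine⟩)).le
      · have anti : ∀ a b : ℕ, N₀ ≤ a → a ≤ b → |x b| ≤ |x a| := by
          intro a b ha hab
          induction b, hab using Nat.le_induction with
          | base => exact le_refl _
          | succ b hb ih => exact (hN₀ b (ha.trans hb)).trans ih
        exact anti i m (not_lt.1 hi) hin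
    -- M is in a closed interval of the family
    have hMmem' : M ∈ ⋃ q ∈ s, Set.Icc q.1 q.2 := hS ▸ hMmem
    -- helper: points of achSet below M are bounded by some right endpoint < M
    by_cases hcase : ∃ q ∈ s, q.1 < M ∧ M ≤ q.2
    · obtain ⟨q, hqs, hq1, hq2⟩ := hcase
      obtain ⟨n, hn1, hn2, hn3⟩ := hsuit (M - q.1) (by linarith)
      set g : ℝ := M - (|x n| + tailSum x n) / 2 with hg_def
      have hgmem : g ∈ achSet x := by
        rw [hS]
        refine Set.mem_biUnion hqs ⟨?_, ?_⟩
        · have h1 : (|x n| + tailSum x n) / 2 < |x n| := by linarith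
          rw [hg_def]; linarith
        · have h0 := hrpos n
          have h1 : (|x n| + tailSum x n) / 2 > 0 := by linarith
          rw [hg_def]; linarith
      obtain ⟨B, hB⟩ := hcompl g hgmem
      have hlt : M - g < |x n| := by rw [hg_def]; linarith
      have h2 := hgap n hn3 B (M - g) hB hlt
      rw [hg_def] at h2
      linarith
    · push_neg at hcase
      have hno : ∀ t ∈ achSet x, t < M → ∃ q ∈ s, q.2 < M ∧ t ≤ q.2 := by
        intro t ht htM
        rw [hS] at ht
        obtain ⟨q, hqs, hq⟩ := Set.mem_iUnion₂.1 ht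
        by_cases h2 : M ≤ q.2
        · by_cases h1 : q.1 < M
          · exact absurd h2 (not_le.2 (hcase q hqs h1))
          · exact absurd htM (not_lt.2 ((not_lt.1 h1).trans hq.1))
        · exact ⟨q, hqs, not_le.1 h2, hq.2⟩
      obtain ⟨n₀, hn₀1, _, _⟩ := hsuit 1 one_pos
      have ht0 : M - tailSum x n₀ < M := by linarith [hrpos n₀]
      obtain ⟨q₀, hq₀s, hq₀M, _⟩ := hno _ (hMr n₀) ht0
      set T := s.filter (fun q => q.2 < M) with hT_def
      have hTne : T.Nonempty := ⟨q₀, Finset.mem_filter.2 ⟨hq₀s, hq₀M⟩⟩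
      set ε := T.inf' hTne (fun q => M - q.2) with hε_def
      have hεpos : 0 < ε := by
        rw [hε_def, Finset.lt_inf'_iff]
        intro q hq
        have := (Finset.mem_filter.1 hq).2
        linarith
      obtain ⟨n, hn1, hn2, _⟩ := hsuit ε hεpos
      have htn : M - tailSum x n < M := by linarith [hrpos n]
      obtain ⟨q, hqs, hq2M, hle⟩ := hno _ (hMr n) htn
      have hinf : ε ≤ M - q.2 :=
        Finset.inf'_le (fun q => M - q.2) (Finset.mem_filter.2 ⟨hqs, hq2M⟩)
      linarith
  · -- not Cantor-like
    rintro ⟨e⟩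
    obtain ⟨a, b, hab, hsub⟩ := hint
    have htd : IsTotallyDisconnected (achSet x) := by
      rw [← totallyDisconnectedSpace_subtype_iff]
      have h1 : IsTotallyDisconnected (range e.symm) :=
        e.symm.isEmbedding.isTotallyDisconnected_range.2 inferInstance
      rw [e.symm.range_coe] at h1
      exact ⟨h1⟩
    have := htd (Set.Icc a b) hsub isPreconnected_Icc
    exact absurd (this (Set.left_mem_Icc.2 hab.le) (Set.right_mem_Icc.2 hab.le)) hab.ne
end

section
/- Let x ∈ ℓ¹ be nonincreasing in absolute value from some index on, with |x(n)| > ∑_{i>n}|x(i)| for infinitely many n. Then E(x) is not a finite union of closed intervals. -/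
open Set Filter Topology

section helpers
variable (x : ℕ → ℝ) (hx : Summable fun n => |x n|)

lemma tail_eq (n : ℕ) : tailSum x n = ∑' i : {i : ℕ | n < i}, |x i| := by
  have hr : {i : ℕ | n < i} = Set.range (fun i : ℕ => n + 1 + i) := by
    ext i
    simp only [Set.mem_setOf_eq, Set.mem_range]
    constructor
    · intro h; exact ⟨i - (n+1), by omega⟩
    · rintro ⟨k, rfl⟩; omega
  rw [hr, tsum_range (fun j => |x j|) (fun a b h => by omega)]
  rfl

include hx

lemma tail_summable (n : ℕ) : Summable fun i => |x (n + 1 + i)| :=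
  hx.comp_injective (fun a b h => by omega)

lemma tail_rec (n : ℕ) : tailSum x n = |x (n + 1)| + tailSum x (n + 1) := by
  rw [tailSum, Summable.tsum_eq_zero_add (tail_summable x hx n)]
  congr 1
  rw [tailSum]
  apply tsum_congr
  intro i
  congr 2
  omega

omit hx in
lemma tail_nonneg (n : ℕ) : 0 ≤ tailSum x n := tsum_nonneg fun _ => abs_nonneg _

lemma tail_antitone : ∀ m n : ℕ, m ≤ n → tailSum x n ≤ tailSum x m := by
  intro m n h
  induction n, h using Nat.le_induction with
  | base => exact le_rfl
  | succ n hmn ih =>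
    calc tailSum x (n + 1) ≤ tailSum x n := by
          rw [tail_rec x hx n]; linarith [abs_nonneg (x (n+1))]
      _ ≤ tailSum x m := ih

lemma tail_step (m n : ℕ) (h : m < n) : |x n| + tailSum x n ≤ tailSum x m := by
  obtain ⟨k, rfl⟩ : ∃ k, n = k + 1 := ⟨n - 1, by omega⟩
  rw [← tail_rec x hx k]
  exact tail_antitone x hx m k (by omega)

lemma split_total (n : ℕ) :
    (∑' i : {i : ℕ | i ≤ n}, |x i|) + tailSum x n = ∑' i, |x i| := by
  rw [tail_eq]
  have hu : {i : ℕ | i ≤ n} ∪ {i : ℕ | n < i} = Set.univ := by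
    ext i; simp [le_or_gt]
  have hd : Disjoint {i : ℕ | i ≤ n} {i : ℕ | n < i} := by
    rw [Set.disjoint_left]; intro i hi hi'; simp only [Set.mem_setOf_eq] at hi hi'; omega
  rw [← tsum_univ (fun i => |x i|), ← hu,
    Summable.tsum_union_disjoint hd (hx.subtype _) (hx.subtype _)]

lemma compl_split (C : Set ℕ) :
    (∑' i : C, |x i|) + ∑' i : (Cᶜ : Set ℕ), |x i| = ∑' i, |x i| := by
  rw [← tsum_univ (fun i => |x i|), ← Set.union_compl_self C,
    Summable.tsum_union_disjoint disjoint_compl_right (hx.subtype _) (hx.subtype _)]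

lemma subsum_le_tail (n : ℕ) (D : Set ℕ) (hD : ∀ i ∈ D, |x i| ≠ 0 → n < i) :
    (∑' i : D, |x i|) ≤ tailSum x n := by
  rw [tail_eq x n, tsum_subtype D (fun i => |x i|),
    tsum_subtype {i : ℕ | n < i} (fun i => |x i|)]
  apply Summable.tsum_le_tsum _ (hx.indicator _) (hx.indicator _)
  intro i
  by_cases hiD : i ∈ D
  · rw [Set.indicator_of_mem hiD]
    by_cases h0 : |x i| = 0
    · rw [h0]; exact Set.indicator_nonneg (fun j _ => abs_nonneg _) i
    · rw [Set.indicator_of_mem (show i ∈ {j : ℕ | n < j} from hD i hiD h0)]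
  · rw [Set.indicator_of_notMem hiD]
    exact Set.indicator_nonneg (fun j _ => abs_nonneg _) i

lemma single_le_subsum (D : Set ℕ) (i : ℕ) (hi : i ∈ D) :
    |x i| ≤ ∑' j : D, |x j| :=
  Summable.le_tsum (hx.subtype D) ⟨i, hi⟩ (fun _ _ => abs_nonneg _)

lemma key_symmDiff (B : Set ℕ) :
    (∑' i : B, x i) + ∑' i : ((symmDiff {i | 0 < x i} B : Set ℕ)), |x i|
      = ∑' i : {i : ℕ | 0 < x i}, x i := by
  set P : Set ℕ := {i | 0 < x i} with hP
  have hxs : Summable x := summable_abs_iff.mp hx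
  have hdBP : Disjoint (B ∩ P) (B \ P) := by
    rw [Set.disjoint_left]; rintro a ⟨_, h1⟩ ⟨_, h2⟩; exact h2 h1
  have hdPB : Disjoint (P ∩ B) (P \ B) := by
    rw [Set.disjoint_left]; rintro a ⟨_, h1⟩ ⟨_, h2⟩; exact h2 h1
  have hdSD : Disjoint (P \ B) (B \ P) := by
    rw [Set.disjoint_left]; rintro a ⟨h1, _⟩ ⟨_, h2⟩; exact h2 h1
  have hB : (∑' i : B, x i) = (∑' i : (B ∩ P : Set ℕ), x i) + ∑' i : (B \ P : Set ℕ), x i := by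
    rw [← Summable.tsum_union_disjoint hdBP (hxs.subtype _) (hxs.subtype _), Set.inter_union_diff]
  have hPs : (∑' i : P, x i) = (∑' i : (P ∩ B : Set ℕ), x i) + ∑' i : (P \ B : Set ℕ), x i := by
    rw [← Summable.tsum_union_disjoint hdPB (hxs.subtype _) (hxs.subtype _), Set.inter_union_diff]
  have hSD : (∑' i : ((symmDiff P B : Set ℕ)), |x i|)
      = (∑' i : (P \ B : Set ℕ), |x i|) + ∑' i : (B \ P : Set ℕ), |x i| := by
    rw [Set.symmDiff_def, Summable.tsum_union_disjoint hdSD (hx.subtype _) (hx.subtype _)]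
  have h1 : (∑' i : (P \ B : Set ℕ), |x i|) = ∑' i : (P \ B : Set ℕ), x i :=
    tsum_congr fun i => abs_of_pos i.2.1
  have h2 : (∑' i : (B \ P : Set ℕ), |x i|) = ∑' i : (B \ P : Set ℕ), (-(x i)) :=
    tsum_congr fun i => abs_of_nonpos (not_lt.mp i.2.2)
  have h3 : (∑' i : (B \ P : Set ℕ), (-(x i))) = - ∑' i : (B \ P : Set ℕ), x i := tsum_neg
  rw [hB, hSD, h1, h2, h3, hPs]
  rw [show (∑' i : (B ∩ P : Set ℕ), x i) = ∑' i : (P ∩ B : Set ℕ), x i by rw [Set.inter_comm]]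
  ring

end helpers

theorem achSet_not_finUnion (x : ℕ → ℝ) (hx : Summable fun n => |x n|)
    (hmono : ∀ᶠ n in atTop, |x (n + 1)| ≤ |x n|)
    (hbig : ∀ N : ℕ, ∃ n ≥ N, tailSum x n < |x n|) :
    ¬ IsFinUnionClosedIntervals (achSet x) := by
  rintro ⟨s, hs⟩
  have hxs : Summable x := summable_abs_iff.mp hx
  set P : Set ℕ := {i | 0 < x i} with hP
  set M : ℝ := ∑' i : P, x i with hM
  set T : ℝ := ∑' i, |x i| with hT
  -- membership characterization
  have hmem : ∀ a : ℝ, a ∈ achSet x ↔ ∃ A : Set ℕ, a = ∑' i : A, x i := by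
    intro a
    constructor
    · rintro ⟨A, hA⟩; exact ⟨A, hA.tsum_eq.symm⟩
    · rintro ⟨A, rfl⟩; exact ⟨A, (hxs.subtype A).hasSum⟩
  -- every value of the form M - subsum of |x| is achieved
  have hachieve : ∀ B : Set ℕ, (M - ∑' i : B, |x i|) ∈ achSet x := by
    intro B
    rw [hmem]
    refine ⟨symmDiff P B, ?_⟩
    have h := key_symmDiff x hx (symmDiff P B)
    rw [symmDiff_symmDiff_cancel_left] at h
    rw [← hP, ← hM] at h
    linarith
  -- every achieved value has the form M - subsum of |x|
  have hform : ∀ a ∈ achSet x, ∃ C : Set ℕ, a = M - ∑' i : C, |x i| := by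
    intro a ha
    rw [hmem] at ha
    obtain ⟨A, rfl⟩ := ha
    refine ⟨symmDiff P A, ?_⟩
    have h := key_symmDiff x hx A
    rw [← hP, ← hM] at h
    linarith
  -- monotonicity threshold
  obtain ⟨N₀, hN₀⟩ := eventually_atTop.mp hmono
  have hanti : ∀ i n : ℕ, N₀ ≤ i → i ≤ n → |x n| ≤ |x i| := by
    intro i n hi hin
    induction n, hin using Nat.le_induction with
    | base => exact le_rfl
    | succ n hin ih => exact le_trans (hN₀ n (le_trans hi hin)) ih
  -- small-index threshold
  set F : Finset ℕ := (Finset.range N₀).filter fun j => 0 < |x j| with hF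
  set ε : ℝ := (insert (1:ℝ) (F.image fun j => |x j|)).min' ⟨1, Finset.mem_insert_self _ _⟩
    with hε
  have hεpos : 0 < ε := by
    rw [hε]; apply (Finset.lt_min'_iff _ _).mpr
    intro b hb
    rcases Finset.mem_insert.mp hb with h | h
    · rw [h]; norm_num
    · obtain ⟨j, hj, rfl⟩ := Finset.mem_image.mp h
      exact (Finset.mem_filter.mp hj).2
  have hεle : ∀ j : ℕ, j < N₀ → 0 < |x j| → ε ≤ |x j| := by
    intro j hj h0
    apply Finset.min'_le
    exact Finset.mem_insert_of_mem (Finset.mem_image_of_mem _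
      (Finset.mem_filter.mpr ⟨Finset.mem_range.mpr hj, h0⟩))
  obtain ⟨N₁, hN₁⟩ := eventually_atTop.mp (hx.tendsto_atTop_zero.eventually (gt_mem_nhds hεpos))
  set N₂ : ℕ := max N₀ N₁ with hN₂
  -- the right-isolated points
  set q : ℕ → ℝ := fun n => M - (T - tailSum x n) with hq
  have hqmem : ∀ n, q n ∈ achSet x := by
    intro n
    have h := split_total x hx n
    have : q n = M - ∑' i : {i : ℕ | i ≤ n}, |x i| := by rw [hq]; simp only; rw [← hT] at h; linarith
    rw [this]
    exact hachieve _
  have hqiso : ∀ n, N₂ ≤ n → tailSum x n < |x n| →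
      ∀ b ∈ achSet x, b ≤ q n ∨ q n + (|x n| - tailSum x n) ≤ b := by
    intro n hn hg b hb
    obtain ⟨C, rfl⟩ := hform b hb
    have hc := compl_split x hx C
    rw [← hT] at hc
    by_cases hcase : ∃ i, i ∈ (Cᶜ : Set ℕ) ∧ |x i| ≠ 0 ∧ i ≤ n
    · obtain ⟨i, hiC, hi0, hin⟩ := hcase
      have hxi : |x n| ≤ |x i| := by
        rcases lt_or_ge i N₀ with h | h
        · have h1 : ε ≤ |x i| := hεle i h (lt_of_le_of_ne (abs_nonneg _) (Ne.symm hi0))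
          have h2 : |x n| < ε := hN₁ n (le_trans (le_max_right _ _) hn)
          linarith
        · exact hanti i n h hin
      have hsingle : |x i| ≤ ∑' j : (Cᶜ : Set ℕ), |x j| := single_le_subsum x hx _ i hiC
      right
      rw [hq]
      simp only
      linarith
    · push_neg at hcase
      have hle : (∑' i : (Cᶜ : Set ℕ), |x i|) ≤ tailSum x n := by
        apply subsum_le_tail x hx n
        intro i hi h0
        exact hcase i hi h0
      left
      rw [hq]
      simp only
      linarith
  -- right-isolated points of a finite union of intervals
  set R : Set ℝ := {a | a ∈ achSet x ∧ ∃ δ : ℝ, 0 < δ ∧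
      ∀ b ∈ achSet x, b ≤ a ∨ a + δ ≤ b} with hR
  have hRsub : R ⊆ (↑(s.image Prod.snd) : Set ℝ) := by
    rintro a ⟨haS, δ, hδ, hiso⟩
    have ha' := haS
    rw [hs] at ha'
    simp only [Set.mem_iUnion] at ha'
    obtain ⟨p, hp, hp1, hp2⟩ := ha'
    rcases eq_or_lt_of_le hp2 with h | h
    · simp only [Finset.coe_image, Set.mem_image, Finset.mem_coe]
      exact ⟨p, hp, h.symm⟩
    · exfalso
      set b : ℝ := min p.2 (a + δ / 2) with hb
      have hbS : b ∈ achSet x := by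
        rw [hs]
        simp only [Set.mem_iUnion]
        exact ⟨p, hp, le_trans hp1 (le_min (le_of_lt h) (by linarith)), min_le_left _ _⟩
      have hba : a < b := lt_min h (by linarith)
      have hbδ : b < a + δ := lt_of_le_of_lt (min_le_right _ _) (by linarith)
      rcases hiso b hbS with h' | h' <;> linarith
  have hRfin : R.Finite := Set.Finite.subset (s.image Prod.snd).finite_toSet hRsub
  -- construct infinitely many right-isolated points
  set g : ℕ → ℕ := fun k => Nat.rec (hbig N₂).choose (fun _ p => (hbig (p + 1)).choose) k
    with hg
  have hg0 : N₂ ≤ g 0 ∧ tailSum x (g 0) < |x (g 0)| := (hbig N₂).choose_spec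
  have hgs : ∀ k, g k + 1 ≤ g (k + 1) ∧ tailSum x (g (k + 1)) < |x (g (k + 1))| := by
    intro k
    exact (hbig (g k + 1)).choose_spec
  have hgN : ∀ k, N₂ ≤ g k := by
    intro k
    induction k with
    | zero => exact hg0.1
    | succ k ih => exact le_trans ih (by have := (hgs k).1; omega)
  have hggood : ∀ k, tailSum x (g k) < |x (g k)| := by
    intro k
    cases k with
    | zero => exact hg0.2
    | succ k => exact (hgs k).2
  have hqanti : StrictAnti (fun k => q (g k)) := by
    apply strictAnti_nat_of_succ_lt
    intro k
    have hlt : g k < g (k + 1) := by have := (hgs k).1; omega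
    have hstep := tail_step x hx (g k) (g (k + 1)) hlt
    have hgood := hggood (k + 1)
    have hnn := tail_nonneg x (g (k + 1))
    rw [hq]
    simp only
    have : tailSum x (g (k + 1)) < tailSum x (g k) := by linarith
    linarith
  have hRinf : R.Infinite := by
    apply Set.infinite_of_injective_forall_mem (f := fun k => q (g k)) hqanti.injective
    intro k
    refine ⟨hqmem (g k), |x (g k)| - tailSum x (g k), by linarith [hggood k], ?_⟩
    exact hqiso (g k) (hgN k) (hggood k)
  exact hRinf hRfin
end

section
/- Let q₁ > q₂ > ... > q_m be in [1/6, 2/11) and β₁, ..., β_m real numbers, not all zero. Then for all sufficiently large n, 2|β₁q₁ⁿ + ... + β_m q_mⁿ| > 9 ∑_{k>n} |β₁q₁ᵏ + ... + β_m q_mᵏ|. -/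
open Set Filter Topology

theorem jones_estimate_lower (m : ℕ) (q β : Fin m → ℝ) (hq : StrictAnti q)
    (hqI : ∀ i, q i ∈ Set.Ico (1 / 6 : ℝ) (2 / 11)) (hβ : ∃ i, β i ≠ 0) :
    ∀ᶠ n in atTop,
      9 * ∑' k : ℕ, |∑ i, β i * q i ^ (n + 1 + k)| < 2 * |∑ i, β i * q i ^ n| := by
  obtain ⟨j₀, hj₀⟩ := hβ
  set T : Finset (Fin m) := Finset.univ.filter (fun i => β i ≠ 0) with hT
  have hTne : T.Nonempty := ⟨j₀, by simp [hT, hj₀]⟩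
  set i₀ := T.min' hTne with hi0def
  have hβ0 : β i₀ ≠ 0 := by have := T.min'_mem hTne; simpa [hT] using this
  set r := q i₀ with hrdef
  have hrI := hqI i₀
  have hr0 : 0 < r := lt_of_lt_of_le (by norm_num) hrI.1
  have hr2 : r < 2 / 11 := hrI.2
  have hr1 : r < 1 := hr2.trans (by norm_num)
  have h1r : (0:ℝ) < 1 - r := by linarith
  set b := |β i₀| with hbdef
  have hb : 0 < b := abs_pos.2 hβ0
  have h2r : (0:ℝ) < 2 - 11 * r := by linarith
  set δ := b * (2 - 11 * r) / 4 with hδdef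
  have hδ0 : 0 < δ := by positivity
  have hqpos : ∀ i, (0:ℝ) < q i := fun i => lt_of_lt_of_le (by norm_num) (hqI i).1
  -- error term tends to 0 relative to r ^ j
  have htend : Tendsto (fun j : ℕ => ∑ i ∈ Finset.univ.erase i₀, |β i| * (q i / r) ^ j)
      atTop (𝓝 0) := by
    have h0 : (0:ℝ) = ∑ i ∈ Finset.univ.erase i₀, (0:ℝ) := by simp
    rw [h0]
    refine tendsto_finset_sum _ fun i hi => ?_
    rcases eq_or_ne (β i) 0 with h | h
    · simp only [h, abs_zero, zero_mul]
      exact (tendsto_const_nhds :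
        Tendsto (fun _ : ℕ => (0:ℝ)) atTop (𝓝 0))
    · have hiT : i ∈ T := by simp [hT, h]
      have hne : i ≠ i₀ := (Finset.mem_erase.1 hi).1
      have hlt : i₀ < i := lt_of_le_of_ne (Finset.min'_le T i hiT) (Ne.symm hne)
      have hql : q i < r := hq hlt
      have hpow : Tendsto (fun j : ℕ => (q i / r) ^ j) atTop (𝓝 0) :=
        tendsto_pow_atTop_nhds_zero_of_lt_one (div_nonneg (hqpos i).le hr0.le) ((div_lt_one hr0).2 hql)
      simpa using hpow.const_mul |β i|
  have hev : ∀ᶠ j : ℕ in atTop,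
      ∑ i ∈ Finset.univ.erase i₀, |β i| * q i ^ j ≤ δ * r ^ j := by
    filter_upwards [htend.eventually_lt_const hδ0] with j hj
    have hrj : (0:ℝ) < r ^ j := pow_pos hr0 j
    have key : ∀ i : Fin m, |β i| * (q i / r) ^ j * r ^ j = |β i| * q i ^ j := by
      intro i
      rw [mul_assoc, ← mul_pow, div_mul_cancel₀ _ hr0.ne']
    calc ∑ i ∈ Finset.univ.erase i₀, |β i| * q i ^ j
        = (∑ i ∈ Finset.univ.erase i₀, |β i| * (q i / r) ^ j) * r ^ j := by
          rw [Finset.sum_mul]; exact Finset.sum_congr rfl fun i _ => (key i).symm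
      _ ≤ δ * r ^ j := mul_le_mul_of_nonneg_right hj.le hrj.le
  obtain ⟨N, hN⟩ := eventually_atTop.1 hev
  rw [eventually_atTop]
  refine ⟨N, fun n hn => ?_⟩
  have hsplit : ∀ j : ℕ, ∑ i, β i * q i ^ j
      = β i₀ * r ^ j + ∑ i ∈ Finset.univ.erase i₀, β i * q i ^ j := by
    intro j
    exact (Finset.add_sum_erase _ _ (Finset.mem_univ i₀)).symm
  have herr : ∀ j : ℕ, |∑ i ∈ Finset.univ.erase i₀, β i * q i ^ j|
      ≤ ∑ i ∈ Finset.univ.erase i₀, |β i| * q i ^ j := by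
    intro j
    refine (Finset.abs_sum_le_sum_abs _ _).trans (le_of_eq ?_)
    exact Finset.sum_congr rfl fun i _ => by
      rw [abs_mul, abs_pow, abs_of_pos (hqpos i)]
  have habs0 : ∀ j : ℕ, |β i₀ * r ^ j| = b * r ^ j := by
    intro j
    rw [abs_mul, abs_pow, abs_of_pos hr0]
  have hup : ∀ j : ℕ, N ≤ j → |∑ i, β i * q i ^ j| ≤ (b + δ) * r ^ j := by
    intro j hj
    rw [hsplit j]
    calc |β i₀ * r ^ j + ∑ i ∈ Finset.univ.erase i₀, β i * q i ^ j|
        ≤ |β i₀ * r ^ j| + |∑ i ∈ Finset.univ.erase i₀, β i * q i ^ j| := abs_add_le _ _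
      _ ≤ b * r ^ j + δ * r ^ j := by
          have := (herr j).trans (hN j hj)
          rw [habs0 j]; linarith
      _ = (b + δ) * r ^ j := by ring
  have hlo : (b - δ) * r ^ n ≤ |∑ i, β i * q i ^ n| := by
    rw [hsplit n]
    have h2 := (herr n).trans (hN n hn)
    have h3 : |β i₀ * r ^ n| - |∑ i ∈ Finset.univ.erase i₀, β i * q i ^ n|
        ≤ |β i₀ * r ^ n + ∑ i ∈ Finset.univ.erase i₀, β i * q i ^ n| := by
      have h4 := abs_sub_abs_le_abs_sub (β i₀ * r ^ n)
        (-(∑ i ∈ Finset.univ.erase i₀, β i * q i ^ n))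
      rw [abs_neg, sub_neg_eq_add] at h4
      exact h4
    rw [habs0 n] at h3
    nlinarith
  -- tail sum bound
  have hsum_geo : Summable (fun k : ℕ => ((b + δ) * r ^ (n + 1)) * r ^ k) :=
    (summable_geometric_of_lt_one hr0.le hr1).mul_left _
  have hbound : ∀ k : ℕ, |∑ i, β i * q i ^ (n + 1 + k)| ≤ ((b + δ) * r ^ (n + 1)) * r ^ k := by
    intro k
    have h1 : N ≤ n + 1 + k := le_trans (le_trans hn (Nat.le_succ n)) (Nat.le_add_right _ _)
    calc |∑ i, β i * q i ^ (n + 1 + k)| ≤ (b + δ) * r ^ (n + 1 + k) := hup _ h1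
      _ = ((b + δ) * r ^ (n + 1)) * r ^ k := by rw [pow_add]; ring
  have hsum : Summable (fun k : ℕ => |∑ i, β i * q i ^ (n + 1 + k)|) :=
    Summable.of_nonneg_of_le (fun k => abs_nonneg _) hbound hsum_geo
  have htail : ∑' k : ℕ, |∑ i, β i * q i ^ (n + 1 + k)|
      ≤ (b + δ) * r ^ (n + 1) * (1 - r)⁻¹ := by
    calc ∑' k : ℕ, |∑ i, β i * q i ^ (n + 1 + k)|
        ≤ ∑' k : ℕ, ((b + δ) * r ^ (n + 1)) * r ^ k := Summable.tsum_le_tsum hbound hsum hsum_geo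
      _ = (b + δ) * r ^ (n + 1) * (1 - r)⁻¹ := by
          rw [tsum_mul_left, tsum_geometric_of_lt_one hr0.le hr1]
  have hrn : (0:ℝ) < r ^ n := pow_pos hr0 n
  have key : 9 * (b + δ) * r < 2 * (b - δ) * (1 - r) := by
    rw [hδdef]
    nlinarith [mul_pos (sub_pos.2 hr2) (show (0:ℝ) < 2 / 7 - r by linarith), hb, hr0]
  have hdiv : 9 * (b + δ) * r * (1 - r)⁻¹ < 2 * (b - δ) := by
    rw [← div_eq_mul_inv]
    exact (div_lt_iff₀ h1r).2 (by linarith)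
  have hfinal : 9 * ((b + δ) * r ^ (n + 1) * (1 - r)⁻¹) < 2 * ((b - δ) * r ^ n) := by
    have h5 : 9 * ((b + δ) * r ^ (n + 1) * (1 - r)⁻¹)
        = (9 * (b + δ) * r * (1 - r)⁻¹) * r ^ n := by rw [pow_succ]; ring
    have h6 : 2 * ((b - δ) * r ^ n) = (2 * (b - δ)) * r ^ n := by ring
    rw [h5, h6]
    exact mul_lt_mul_of_pos_right hdiv hrn
  calc 9 * ∑' k : ℕ, |∑ i, β i * q i ^ (n + 1 + k)|
      ≤ 9 * ((b + δ) * r ^ (n + 1) * (1 - r)⁻¹) := by linarith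
    _ < 2 * ((b - δ) * r ^ n) := hfinal
    _ ≤ 2 * |∑ i, β i * q i ^ n| := by linarith
end
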